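/- arXiv:2303.04152 — 5 statements merged into one kernel-verified Lean document; each statement's English description precedes it below -/
import Mathlib

section
/- For every integer n ≥ 3, the achievement number of the star K_{1,n} satisfies a(K_{1,n}) ≥ n + 2; that is, Alice has no winning strategy in the game (K_{1,n}, K_{n+1}, +). -/
namespace AchievementGame

/-- A strategy for the achievement game: given the history of all moves played so far
(earliest first), produce the next move (an edge, i.e. an element of `Sym2`). -/
def Strategy (α : Type*) : Type _ := List (Sym2 α) → Sym2 α

/-- A strategy is valid for the host graph `G` if, whenever some edge of `G` is still
uncolored, it chooses an uncolored edge of `G`. -/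
def Strategy.Valid {α : Type*} (G : SimpleGraph α) (s : Strategy α) : Prop :=
  ∀ l : List (Sym2 α), (∃ e ∈ G.edgeSet, e ∉ l) → s l ∈ G.edgeSet ∧ s l ∉ l

/-- The history of the first `n` moves when Alice plays strategy `σ` and Bob plays
strategy `τ`; Alice moves first and the players alternate. -/
def hist {α : Type*} (σ τ : Strategy α) : ℕ → List (Sym2 α)
  | 0 => []
  | n + 1 => hist σ τ n ++ [(if n % 2 = 0 then σ else τ) (hist σ τ n)]

/-- The `n`-th move (0-indexed): even indices are Alice's (blue) moves,
odd indices are Bob's (red) moves. -/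
def move {α : Type*} (σ τ : Strategy α) (n : ℕ) : Sym2 α :=
  (if n % 2 = 0 then σ else τ) (hist σ τ n)

/-- The set `s` of edges contains a copy of the graph `F`. -/
def HasCopy {α β : Type*} (F : SimpleGraph β) (s : Set (Sym2 α)) : Prop :=
  ∃ f : β ↪ α, ∀ a b, F.Adj a b → s(f a, f b) ∈ s

/-- Alice has a winning strategy in the achievement game `(F, G, +)`: Alice has a valid
strategy such that against every valid strategy of Bob, at some legal move of Alice
(her `(k+1)`-st move, which exists since `2k+1 ≤ |E(G)|`) the blue edges contain a copy
of `F`, while the red edges played strictly before do not. -/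
def AliceWins {α β : Type*} (F : SimpleGraph β) (G : SimpleGraph α) : Prop :=
  ∃ σ : Strategy α, Strategy.Valid G σ ∧ ∀ τ : Strategy α, Strategy.Valid G τ →
    ∃ k : ℕ, 2 * k + 1 ≤ G.edgeSet.ncard ∧
      HasCopy F {e | ∃ i ≤ k, e = move σ τ (2 * i)} ∧
      ¬ HasCopy F {e | ∃ i < k, e = move σ τ (2 * i + 1)}

/-- The matching `mK₂` consisting of `m` pairwise disjoint edges. -/
def matching (m : ℕ) : SimpleGraph (Fin m ⊕ Fin m) :=
  SimpleGraph.fromRel (fun a b => ∃ i, a = Sum.inl i ∧ b = Sum.inr i)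

/-- The star `K_{1,m}`: the center `0` joined to `m` leaves. -/
def star (m : ℕ) : SimpleGraph (Fin (m + 1)) :=
  SimpleGraph.fromRel (fun a _ => a = 0)

/-- The double star `S_{m,n}`: disjoint stars `K_{1,m}` and `K_{1,n}` with an edge
joining their centers `Sum.inl 0` and `Sum.inr 0`. -/
def doubleStar (m n : ℕ) : SimpleGraph (Fin (m + 1) ⊕ Fin (n + 1)) :=
  SimpleGraph.fromRel (fun a b =>
    (a = Sum.inl 0 ∧ ∃ i, b = Sum.inl i) ∨
    (a = Sum.inr 0 ∧ ∃ j, b = Sum.inr j) ∨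
    (a = Sum.inl 0 ∧ b = Sum.inr 0))

/-- The disjoint union `K_{1,m} ∪ nK₂` of a star and a matching. -/
def starMatching (m n : ℕ) : SimpleGraph (Fin (m + 1) ⊕ (Fin n ⊕ Fin n)) :=
  SimpleGraph.fromRel (fun a b =>
    (a = Sum.inl 0 ∧ ∃ i, b = Sum.inl i) ∨
    (∃ i, a = Sum.inr (Sum.inl i) ∧ b = Sum.inr (Sum.inr i)))

end AchievementGame

open AchievementGame

namespace StarAux

attribute [local instance] Classical.propDecidable

open Fin.CommRing

variable {α : Type*}

lemma hist_succ (σ τ : Strategy α) (m : ℕ) :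
    hist σ τ (m+1) = hist σ τ m ++ [move σ τ m] := rfl

lemma hist_length (σ τ : Strategy α) (m : ℕ) : (hist σ τ m).length = m := by
  induction m with
  | zero => rfl
  | succ m ih => rw [hist_succ, List.length_append, ih]; rfl

lemma hist_mono (σ τ : Strategy α) {m m' : ℕ} (h : m ≤ m') {e : Sym2 α}
    (he : e ∈ hist σ τ m) : e ∈ hist σ τ m' := by
  induction h with
  | refl => exact he
  | step h ih => rw [hist_succ]; exact List.mem_append_left _ ih

lemma move_mem_hist (σ τ : Strategy α) {i m : ℕ} (h : i < m) :
    move σ τ i ∈ hist σ τ m := by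
  refine hist_mono σ τ h ?_
  rw [hist_succ]
  exact List.mem_append_right _ (List.mem_singleton_self _)

lemma hist_getElem (σ τ : Strategy α) {j m : ℕ} (h : j < m) :
    (hist σ τ m)[j]? = some (move σ τ j) := by
  induction m with
  | zero => omega
  | succ m ih =>
    rw [hist_succ]
    rcases Nat.lt_or_ge j m with h' | h'
    · rw [List.getElem?_append_left (by rw [hist_length]; exact h')]
      exact ih h'
    · have hj : j = m := by omega
      subst hj
      have := List.getElem?_concat_length (l := hist σ τ j) (a := move σ τ j)
      rw [hist_length] at this
      exact this

lemma exists_uncolored {G : SimpleGraph α} {l : List (Sym2 α)}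
    (h : l.length < G.edgeSet.ncard) : ∃ e ∈ G.edgeSet, e ∉ l := by
  classical
  by_contra hc
  push_neg at hc
  have hsub : G.edgeSet ⊆ {x | x ∈ l} := fun e he => hc e he
  have h2 : G.edgeSet.ncard ≤ ({x | x ∈ l} : Set (Sym2 α)).ncard :=
    Set.ncard_le_ncard hsub l.finite_toSet
  have h3 : ({x | x ∈ l} : Set (Sym2 α)).ncard = l.toFinset.card := by
    rw [← List.coe_toFinset, Set.ncard_coe_finset]
  have h4 := l.toFinset_card_le
  omega

/-- fallback move -/
noncomputable def fb (G : SimpleGraph α) (d : Sym2 α) (l : List (Sym2 α)) : Sym2 α :=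
  if h : ∃ e, e ∈ G.edgeSet ∧ e ∉ l then h.choose else d

lemma fb_spec {G : SimpleGraph α} {d : Sym2 α} {l : List (Sym2 α)}
    (h : ∃ e ∈ G.edgeSet, e ∉ l) : fb G d l ∈ G.edgeSet ∧ fb G d l ∉ l := by
  have h' : ∃ e, e ∈ G.edgeSet ∧ e ∉ l := h
  rw [fb, dif_pos h']
  exact h'.choose_spec

/-- Bob's pairing strategy -/
noncomputable def pairτ (G : SimpleGraph α) (P : Sym2 α → Sym2 α → Prop) (d : Sym2 α) :
    Strategy α := fun l =>
  if h : ∃ f, (∃ e, l.getLast? = some e ∧ P e f) ∧ f ∈ G.edgeSet ∧ f ∉ l then h.choose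
  else fb G d l

lemma pairτ_valid (G : SimpleGraph α) (P : Sym2 α → Sym2 α → Prop) (d : Sym2 α) :
    Strategy.Valid G (pairτ G P d) := by
  intro l hl
  by_cases h : ∃ f, (∃ e, l.getLast? = some e ∧ P e f) ∧ f ∈ G.edgeSet ∧ f ∉ l
  · simp only [pairτ]; rw [dif_pos h]
    exact ⟨h.choose_spec.2.1, h.choose_spec.2.2⟩
  · simp only [pairτ]; rw [dif_neg h]
    exact fb_spec hl

lemma pairτ_move {G : SimpleGraph α} {P : Sym2 α → Sym2 α → Prop} {d : Sym2 α}
    {l : List (Sym2 α)} {e f : Sym2 α}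
    (hfunc : ∀ e f f', P e f → P e f' → f = f')
    (hlast : l.getLast? = some e) (hP : P e f) (hfE : f ∈ G.edgeSet) (hfl : f ∉ l) :
    pairτ G P d l = f := by
  have h : ∃ f, (∃ e, l.getLast? = some e ∧ P e f) ∧ f ∈ G.edgeSet ∧ f ∉ l :=
    ⟨f, ⟨e, hlast, hP⟩, hfE, hfl⟩
  simp only [pairτ]; rw [dif_pos h]
  obtain ⟨⟨e', hlast', hP'⟩, _, _⟩ := h.choose_spec
  have he : e' = e := Option.some.inj (hlast'.symm.trans hlast)
  exact hfunc e _ f (he ▸ hP') hP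

/-- blue edges of a history -/
def BlueOf (l : List (Sym2 α)) : Set (Sym2 α) := {e | ∃ j, l[2*j]? = some e}

/-- Bob's threat-blocking strategy -/
noncomputable def threatτ (G : SimpleGraph α) (d : Sym2 α) : Strategy α := fun l =>
  if h : ∃ e, (e ∈ G.edgeSet ∧ e ∉ l) ∧ ∃ v, v ∈ e ∧
      ∀ f ∈ G.edgeSet, v ∈ f → f ≠ e → f ∈ BlueOf l then h.choose
  else fb G d l

lemma threatτ_valid (G : SimpleGraph α) (d : Sym2 α) :
    Strategy.Valid G (threatτ G d) := by
  intro l hl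
  by_cases h : ∃ e, (e ∈ G.edgeSet ∧ e ∉ l) ∧ ∃ v, v ∈ e ∧
      ∀ f ∈ G.edgeSet, v ∈ f → f ≠ e → f ∈ BlueOf l
  · simp only [threatτ]; rw [dif_pos h]
    exact ⟨h.choose_spec.1.1, h.choose_spec.1.2⟩
  · simp only [threatτ]; rw [dif_neg h]
    exact fb_spec hl

lemma threatτ_move {G : SimpleGraph α} {d : Sym2 α} {l : List (Sym2 α)} {e : Sym2 α}
    (hw : (e ∈ G.edgeSet ∧ e ∉ l) ∧ ∃ v, v ∈ e ∧
      ∀ f ∈ G.edgeSet, v ∈ f → f ≠ e → f ∈ BlueOf l)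
    (huniq : ∀ e', ((e' ∈ G.edgeSet ∧ e' ∉ l) ∧ ∃ v, v ∈ e' ∧
      ∀ f ∈ G.edgeSet, v ∈ f → f ≠ e' → f ∈ BlueOf l) → e' = e) :
    threatτ G d l = e := by
  have h : ∃ e, (e ∈ G.edgeSet ∧ e ∉ l) ∧ ∃ v, v ∈ e ∧
      ∀ f ∈ G.edgeSet, v ∈ f → f ≠ e → f ∈ BlueOf l := ⟨e, hw⟩
  simp only [threatτ]; rw [dif_pos h]
  exact huniq _ h.choose_spec

lemma star_center {n : ℕ} {B : Set (Sym2 (Fin (n+1)))} (h : HasCopy (AchievementGame.star n) B) :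
    ∃ c : Fin (n+1), ∀ w, w ≠ c → s(c, w) ∈ B := by
  obtain ⟨f, hf⟩ := h
  refine ⟨f 0, fun w hw => ?_⟩
  obtain ⟨b, rfl⟩ := (Finite.injective_iff_surjective.mp f.injective) w
  have hb : b ≠ 0 := fun h => hw (by rw [h])
  have hadj : (AchievementGame.star n).Adj 0 b := by
    rw [AchievementGame.star, SimpleGraph.fromRel_adj]
    exact ⟨fun h => hb h.symm, Or.inl rfl⟩
  exact hf 0 b hadj

lemma cast_ne_zero_fin {n k : ℕ} (hk : 0 < k) (hn : k < n+1) : ((k : ℕ) : Fin (n+1)) ≠ 0 := by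
  intro h
  have h1 := (Fin.natCast_eq_zero).mp h
  have := Nat.le_of_dvd hk h1
  omega

lemma moves_ne {α : Type*} {G : SimpleGraph α} (σ τ : Strategy α)
    (hσ : Strategy.Valid G σ) (hτ : Strategy.Valid G τ) {i j : ℕ} (hij : i < j)
    (hj : j < G.edgeSet.ncard) : move σ τ i ≠ move σ τ j := by
  have hex : ∃ e ∈ G.edgeSet, e ∉ hist σ τ j :=
    exists_uncolored (by rw [hist_length]; exact hj)
  have hnot : move σ τ j ∉ hist σ τ j := by
    rw [move]
    split
    · exact (hσ _ hex).2
    · exact (hτ _ hex).2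
  intro h
  exact hnot (h ▸ move_mem_hist σ τ hij)

/-! ### The case `n ≥ 4`: pairing strategy -/

def Pr (n : ℕ) (e f : Sym2 (Fin (n+1))) : Prop :=
  ∃ i : Fin (n+1), (e = s(i, i+1) ∧ f = s(i, i+2)) ∨ (e = s(i, i+2) ∧ f = s(i, i+1))

lemma fin_facts {n : ℕ} (hn : 4 ≤ n) :
    (1 : Fin (n+1)) ≠ 0 ∧ (2 : Fin (n+1)) ≠ 0 ∧ (3 : Fin (n+1)) ≠ 0 ∧ (4 : Fin (n+1)) ≠ 0
      ∧ (1 : Fin (n+1)) ≠ 2 := by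
  have c1 := cast_ne_zero_fin (n := n) (k := 1) (by omega) (by omega)
  have c2 := cast_ne_zero_fin (n := n) (k := 2) (by omega) (by omega)
  have c3 := cast_ne_zero_fin (n := n) (k := 3) (by omega) (by omega)
  have c4 := cast_ne_zero_fin (n := n) (k := 4) (by omega) (by omega)
  have c1' : (1 : Fin (n+1)) ≠ 0 := by simpa using c1
  have c2' : (2 : Fin (n+1)) ≠ 0 := by simpa using c2
  have c3' : (3 : Fin (n+1)) ≠ 0 := by simpa using c3
  have c4' : (4 : Fin (n+1)) ≠ 0 := by simpa using c4
  refine ⟨c1', c2', c3', c4', fun h => c1' ?_⟩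
  linear_combination -h

lemma pr_func {n : ℕ} (hn : 4 ≤ n) (e f f' : Sym2 (Fin (n+1)))
    (h : Pr n e f) (h' : Pr n e f') : f = f' := by
  obtain ⟨h1, h2, h3, h4, h12⟩ := fin_facts hn
  obtain ⟨i, hi⟩ := h
  obtain ⟨j, hj⟩ := h'
  rcases hi with ⟨hei, hfi⟩ | ⟨hei, hfi⟩ <;> rcases hj with ⟨hej, hfj⟩ | ⟨hej, hfj⟩ <;>
      subst hfi <;> subst hfj <;> rw [hei] at hej <;>
      rcases Sym2.eq_iff.mp hej with ⟨ha, hb⟩ | ⟨ha, hb⟩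
  · subst ha; rfl
  · exact absurd (show (2 : Fin (n+1)) = 0 by linear_combination hb - ha) h2
  · subst ha; exact absurd (show (1 : Fin (n+1)) = 2 by linear_combination hb) h12
  · exact absurd (show (3 : Fin (n+1)) = 0 by linear_combination hb - ha) h3
  · subst ha; exact absurd (show (1 : Fin (n+1)) = 2 by linear_combination -hb) h12
  · exact absurd (show (3 : Fin (n+1)) = 0 by linear_combination hb - ha) h3
  · subst ha; rfl
  · exact absurd (show (4 : Fin (n+1)) = 0 by linear_combination hb - ha) h4

lemma pr_snd_mem {n : ℕ} (hn : 4 ≤ n) {e f : Sym2 (Fin (n+1))} (h : Pr n e f) :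
    f ∈ (⊤ : SimpleGraph (Fin (n+1))).edgeSet := by
  obtain ⟨h1, h2, -, -, -⟩ := fin_facts hn
  obtain ⟨i, ⟨-, rfl⟩ | ⟨-, rfl⟩⟩ := h
  · rw [SimpleGraph.mem_edgeSet, SimpleGraph.top_adj]
    exact fun hh => h2 (by linear_combination -hh)
  · rw [SimpleGraph.mem_edgeSet, SimpleGraph.top_adj]
    exact fun hh => h1 (by linear_combination -hh)

lemma blocked {n : ℕ} (hn : 4 ≤ n) (σ : Strategy (Fin (n+1)))
    (hσ : Strategy.Valid (⊤ : SimpleGraph (Fin (n+1))) σ)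
    (τ : Strategy (Fin (n+1))) (hτ : τ = pairτ ⊤ (Pr n) s(0,0))
    {p q : Sym2 (Fin (n+1))} (hpq : Pr n p q) {i j : ℕ} (hij : i < j)
    (hp : p = move σ τ (2*i)) (hq : q = move σ τ (2*j))
    (hjcard : 2*j < (⊤ : SimpleGraph (Fin (n+1))).edgeSet.ncard) : False := by
  have hqE := pr_snd_mem hn hpq
  have hmod : (2*j) % 2 = 0 := by omega
  have hmove2j : move σ τ (2*j) = σ (hist σ τ (2*j)) := by rw [move, if_pos hmod]
  have hex : ∃ e ∈ (⊤ : SimpleGraph (Fin (n+1))).edgeSet, e ∉ hist σ τ (2*j) :=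
    exists_uncolored (by rw [hist_length]; exact hjcard)
  have hqnot : q ∉ hist σ τ (2*j) := by
    rw [hq, hmove2j]; exact (hσ _ hex).2
  have hqnot' : q ∉ hist σ τ (2*i+1) := fun hmem => hqnot (hist_mono σ τ (by omega) hmem)
  have hlast : (hist σ τ (2*i+1)).getLast? = some (move σ τ (2*i)) := by
    rw [hist_succ]; exact List.getLast?_concat
  rw [← hp] at hlast
  have hτmove := pairτ_move (G := (⊤ : SimpleGraph (Fin (n+1)))) (d := s(0,0))
    (fun e f f' => pr_func hn e f f') hlast hpq hqE hqnot'
  rw [← hτ] at hτmove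
  have hmod1 : ¬ (2*i+1) % 2 = 0 := by omega
  have hmoveq : move σ τ (2*i+1) = q := by rw [move, if_neg hmod1]; exact hτmove
  have h5 := move_mem_hist σ τ (show 2*i+1 < 2*j by omega)
  rw [hmoveq] at h5
  exact hqnot h5

theorem main4 {n : ℕ} (hn : 4 ≤ n) :
    ¬ AliceWins (AchievementGame.star n) (⊤ : SimpleGraph (Fin (n+1))) := by
  rintro ⟨σ, hσ, hwin⟩
  set τ := pairτ (⊤ : SimpleGraph (Fin (n+1))) (Pr n) s(0,0) with hτ
  obtain ⟨k, hk, hblue, -⟩ := hwin τ (pairτ_valid _ _ _)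
  obtain ⟨c, hc⟩ := star_center hblue
  obtain ⟨h1, h2, h3, h4, h12⟩ := fin_facts hn
  have hc1 : c + 1 ≠ c := fun h => h1 (by linear_combination h)
  have hc2 : c + 2 ≠ c := fun h => h2 (by linear_combination h)
  obtain ⟨i, hik, hA⟩ := hc (c+1) hc1
  obtain ⟨j, hjk, hB⟩ := hc (c+2) hc2
  have hAB : s(c, c+1) ≠ s(c, c+2) := by
    intro h
    rcases Sym2.eq_iff.mp h with ⟨-, hb⟩ | ⟨ha, -⟩
    · exact h12 (by linear_combination hb)
    · exact h2 (by linear_combination -ha)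
  have hij : i ≠ j := by
    rintro rfl
    exact hAB (hA.trans hB.symm)
  have hPAB : Pr n s(c,c+1) s(c,c+2) := ⟨c, Or.inl ⟨rfl, rfl⟩⟩
  have hPBA : Pr n s(c,c+2) s(c,c+1) := ⟨c, Or.inr ⟨rfl, rfl⟩⟩
  rcases Nat.lt_or_ge i j with h | h
  · exact blocked hn σ hσ τ hτ hPAB h hA hB (by omega)
  · exact blocked hn σ hσ τ hτ hPBA (show j < i by omega) hB hA (by omega)

/-! ### The case `n = 3`: threat-blocking strategy on `K₄` -/

lemma fin4_add_ne (v : Fin 4) {a : Fin 4} (ha : a ≠ 0) : v ≠ v + a := by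
  intro h
  exact ha (by linear_combination -h)

lemma fin4_star_ne (c : Fin 4) {a b : Fin 4} (hab : a ≠ b) (hb : b ≠ 0) :
    s(c, c+a) ≠ s(c, c+b) := by
  intro h
  rcases Sym2.eq_iff.mp h with ⟨-, hb'⟩ | ⟨h1', -⟩
  · exact hab (by linear_combination hb')
  · exact hb (by linear_combination -h1')

lemma fin4_cover (c w : Fin 4) (h : w ≠ c) : w = c + 1 ∨ w = c + 2 ∨ w = c + 3 := by
  have hd : w - c ≠ 0 := sub_ne_zero.mpr h
  have key : ∀ d : Fin 4, d ≠ 0 → d = 1 ∨ d = 2 ∨ d = 3 := by decide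
  rcases key _ hd with h' | h' | h'
  · left; linear_combination h'
  · right; left; linear_combination h'
  · right; right; linear_combination h'

lemma fin4_star_mem (c : Fin 4) {a : Fin 4} (ha : a ≠ 0) :
    s(c, c+a) ∈ (⊤ : SimpleGraph (Fin 4)).edgeSet := by
  rw [SimpleGraph.mem_edgeSet, SimpleGraph.top_adj]
  exact fin4_add_ne c ha

lemma edges_at (c : Fin 4) (f : Sym2 (Fin 4)) (hf : f ∈ (⊤ : SimpleGraph (Fin 4)).edgeSet)
    (hcf : c ∈ f) : f = s(c, c+1) ∨ f = s(c, c+2) ∨ f = s(c, c+3) := by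
  obtain ⟨w, rfl⟩ := Sym2.mem_iff_exists.mp hcf
  have hw : w ≠ c := by
    intro h
    subst h
    rw [SimpleGraph.mem_edgeSet, SimpleGraph.top_adj] at hf
    exact hf rfl
  rcases fin4_cover c w hw with h | h | h <;> subst h
  · exact Or.inl rfl
  · exact Or.inr (Or.inl rfl)
  · exact Or.inr (Or.inr rfl)

lemma card6 : ((⊤ : SimpleGraph (Fin 4)).edgeSet).ncard = 6 := by
  rw [Set.ncard_eq_toFinset_card']
  decide

lemma core3 (σ τ : Strategy (Fin 4)) (hσ : Strategy.Valid (⊤ : SimpleGraph (Fin 4)) σ)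
    (hτ : τ = threatτ (⊤ : SimpleGraph (Fin 4)) s(0,0)) (c : Fin 4)
    (hne02 : move σ τ 0 ≠ move σ τ 2) (hne04 : move σ τ 0 ≠ move σ τ 4)
    (hne24 : move σ τ 2 ≠ move σ τ 4)
    (hc0 : c ∈ move σ τ 0) (hc2 : c ∈ move σ τ 2) (hc4 : c ∈ move σ τ 4)
    (hall : ∀ f ∈ (⊤ : SimpleGraph (Fin 4)).edgeSet, c ∈ f →
      f = move σ τ 0 ∨ f = move σ τ 2 ∨ f = move σ τ 4) : False := by
  have hex4 : ∃ e ∈ (⊤ : SimpleGraph (Fin 4)).edgeSet, e ∉ hist σ τ 4 :=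
    exists_uncolored (by rw [hist_length, card6]; omega)
  have hm4 : move σ τ 4 = σ (hist σ τ 4) := by rw [move, if_pos (by omega : 4 % 2 = 0)]
  have hv4 := hσ _ hex4
  have h4E : move σ τ 4 ∈ (⊤ : SimpleGraph (Fin 4)).edgeSet := by rw [hm4]; exact hv4.1
  have h4not : move σ τ 4 ∉ hist σ τ 4 := by rw [hm4]; exact hv4.2
  have h4not3 : move σ τ 4 ∉ hist σ τ 3 := fun h => h4not (hist_mono σ τ (by omega) h)
  have h0in : move σ τ 0 ∈ hist σ τ 3 := move_mem_hist σ τ (by omega)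
  have h2in : move σ τ 2 ∈ hist σ τ 3 := move_mem_hist σ τ (by omega)
  have hblue0 : move σ τ 0 ∈ BlueOf (hist σ τ 3) :=
    ⟨0, by simpa using hist_getElem σ τ (show 0 < 3 by omega)⟩
  have hblue2 : move σ τ 2 ∈ BlueOf (hist σ τ 3) :=
    ⟨1, by simpa using hist_getElem σ τ (show 2 < 3 by omega)⟩
  have hblue_sub : ∀ e ∈ BlueOf (hist σ τ 3), e = move σ τ 0 ∨ e = move σ τ 2 := by
    rintro e ⟨j, hj⟩
    have hlt : 2*j < 3 := by
      by_contra hge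
      rw [List.getElem?_eq_none (by rw [hist_length]; omega)] at hj
      cases hj
    have : (2:ℕ)*j = 0 ∨ (2:ℕ)*j = 2 := by omega
    rcases this with h' | h' <;> rw [h'] at hj
    · left
      have h0 := hist_getElem σ τ (show 0 < 3 by omega)
      rw [h0] at hj
      exact (Option.some.inj hj).symm
    · right
      have h2 := hist_getElem σ τ (show 2 < 3 by omega)
      rw [h2] at hj
      exact (Option.some.inj hj).symm
  -- the threat condition holds, with witness `move σ τ 4` at vertex `c`
  have hw : (move σ τ 4 ∈ (⊤ : SimpleGraph (Fin 4)).edgeSet ∧ move σ τ 4 ∉ hist σ τ 3) ∧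
      ∃ v, v ∈ move σ τ 4 ∧ ∀ f ∈ (⊤ : SimpleGraph (Fin 4)).edgeSet, v ∈ f →
        f ≠ move σ τ 4 → f ∈ BlueOf (hist σ τ 3) := by
    refine ⟨⟨h4E, h4not3⟩, c, hc4, fun f hfE hcf hfne => ?_⟩
    rcases hall f hfE hcf with rfl | rfl | rfl
    · exact hblue0
    · exact hblue2
    · exact absurd rfl hfne
  have huniq : ∀ e', ((e' ∈ (⊤ : SimpleGraph (Fin 4)).edgeSet ∧ e' ∉ hist σ τ 3) ∧
      ∃ v, v ∈ e' ∧ ∀ f ∈ (⊤ : SimpleGraph (Fin 4)).edgeSet, v ∈ f →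
        f ≠ e' → f ∈ BlueOf (hist σ τ 3)) → e' = move σ τ 4 := by
    rintro e' ⟨⟨he'E, he'l⟩, v', hv'e, hv'⟩
    -- find two distinct edges at `v'` different from `e'`
    obtain ⟨g1, g2, hg1ne, hg2ne, hgg, hg1E, hg2E, hg1v, hg2v⟩ :
        ∃ g1 g2 : Sym2 (Fin 4), g1 ≠ e' ∧ g2 ≠ e' ∧ g1 ≠ g2 ∧
          g1 ∈ (⊤ : SimpleGraph (Fin 4)).edgeSet ∧ g2 ∈ (⊤ : SimpleGraph (Fin 4)).edgeSet ∧
          v' ∈ g1 ∧ v' ∈ g2 := by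
      by_cases h1 : e' = s(v', v'+1)
      · exact ⟨s(v', v'+2), s(v', v'+3), by rw [h1]; exact fin4_star_ne v' (by decide) (by decide),
          by rw [h1]; exact fin4_star_ne v' (by decide) (by decide),
          fin4_star_ne v' (by decide) (by decide),
          fin4_star_mem v' (by decide), fin4_star_mem v' (by decide),
          Sym2.mem_mk_left _ _, Sym2.mem_mk_left _ _⟩
      · by_cases h2 : e' = s(v', v'+2)
        · exact ⟨s(v', v'+1), s(v', v'+3), by rw [h2]; exact fin4_star_ne v' (by decide) (by decide),
            by rw [h2]; exact fin4_star_ne v' (by decide) (by decide),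
            fin4_star_ne v' (by decide) (by decide),
            fin4_star_mem v' (by decide), fin4_star_mem v' (by decide),
            Sym2.mem_mk_left _ _, Sym2.mem_mk_left _ _⟩
        · exact ⟨s(v', v'+1), s(v', v'+2), fun h => h1 h.symm, fun h => h2 h.symm,
            fin4_star_ne v' (by decide) (by decide),
            fin4_star_mem v' (by decide), fin4_star_mem v' (by decide),
            Sym2.mem_mk_left _ _, Sym2.mem_mk_left _ _⟩
    have hg1B := hblue_sub _ (hv' g1 hg1E hg1v hg1ne)
    have hg2B := hblue_sub _ (hv' g2 hg2E hg2v hg2ne)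
    have hv'02 : v' ∈ move σ τ 0 ∧ v' ∈ move σ τ 2 := by
      rcases hg1B with h1' | h1' <;> rcases hg2B with h2' | h2'
      · exact absurd (h1'.trans h2'.symm) hgg
      · exact ⟨h1' ▸ hg1v, h2' ▸ hg2v⟩
      · exact ⟨h2' ▸ hg2v, h1' ▸ hg1v⟩
      · exact absurd (h1'.trans h2'.symm) hgg
    have hv'c : v' = c := by
      by_contra hvc
      have hm0 : move σ τ 0 = s(c, v') := (Sym2.mem_and_mem_iff (fun h => hvc h.symm)).mp ⟨hc0, hv'02.1⟩
      have hm2 : move σ τ 2 = s(c, v') := (Sym2.mem_and_mem_iff (fun h => hvc h.symm)).mp ⟨hc2, hv'02.2⟩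
      exact hne02 (hm0.trans hm2.symm)
    subst hv'c
    rcases hall e' he'E hv'e with rfl | rfl | rfl
    · exact absurd h0in he'l
    · exact absurd h2in he'l
    · rfl
  have hτ3 := threatτ_move (G := (⊤ : SimpleGraph (Fin 4))) (d := s(0,0)) hw huniq
  rw [← hτ] at hτ3
  have hm3 : move σ τ 3 = move σ τ 4 := by
    rw [move, if_neg (by omega : ¬ 3 % 2 = 0)]
    exact hτ3
  have h34 : move σ τ 3 ∈ hist σ τ 4 := move_mem_hist σ τ (by omega)
  rw [hm3] at h34
  exact h4not h34

theorem main3 : ¬ AliceWins (AchievementGame.star 3) (⊤ : SimpleGraph (Fin (3+1))) := by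
  rintro ⟨σ, hσ, hwin⟩
  set τ := threatτ (⊤ : SimpleGraph (Fin 4)) s(0,0) with hτ
  have hτv : Strategy.Valid (⊤ : SimpleGraph (Fin 4)) τ := threatτ_valid _ _
  obtain ⟨k, hk, hblue, -⟩ := hwin τ hτv
  rw [card6] at hk
  obtain ⟨c, hc⟩ := star_center hblue
  obtain ⟨iA, hiAk, hA⟩ := hc (c+1) (fin4_add_ne c (by decide)).symm
  obtain ⟨iB, hiBk, hB⟩ := hc (c+2) (fin4_add_ne c (by decide)).symm
  obtain ⟨iC, hiCk, hC⟩ := hc (c+3) (fin4_add_ne c (by decide)).symm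
  have hABne : s(c, c+1) ≠ s(c, (c+2 : Fin 4)) := fin4_star_ne c (by decide) (by decide)
  have hACne : s(c, c+1) ≠ s(c, (c+3 : Fin 4)) := fin4_star_ne c (by decide) (by decide)
  have hBCne : s(c, c+2) ≠ s(c, (c+3 : Fin 4)) := fin4_star_ne c (by decide) (by decide)
  have hiAB : iA ≠ iB := fun h => hABne (hA.trans (by rw [h, ← hB]))
  have hiAC : iA ≠ iC := fun h => hACne (hA.trans (by rw [h, ← hC]))
  have hiBC : iB ≠ iC := fun h => hBCne (hB.trans (by rw [h, ← hC]))
  -- each of A, B, C is one of the moves 0, 2, 4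
  have hmoves : ∀ i ≤ k, move σ τ (2*i) = move σ τ 0 ∨ move σ τ (2*i) = move σ τ 2 ∨
      move σ τ (2*i) = move σ τ 4 := by
    intro i hi
    have : i = 0 ∨ i = 1 ∨ i = 2 := by omega
    rcases this with rfl | rfl | rfl
    · exact Or.inl (by norm_num)
    · exact Or.inr (Or.inl (by norm_num))
    · exact Or.inr (Or.inr (by norm_num))
  -- c belongs to each of moves 0, 2, 4 (pigeonhole)
  have hmem : ∀ m : ℕ, (2*iA = m ∨ 2*iB = m ∨ 2*iC = m) → c ∈ move σ τ m := by
    rintro m (h | h | h)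
    · rw [← h, ← hA]; exact Sym2.mem_mk_left _ _
    · rw [← h, ← hB]; exact Sym2.mem_mk_left _ _
    · rw [← h, ← hC]; exact Sym2.mem_mk_left _ _
  have hc0 : c ∈ move σ τ 0 := hmem 0 (by omega)
  have hc2 : c ∈ move σ τ 2 := hmem 2 (by omega)
  have hc4 : c ∈ move σ τ 4 := hmem 4 (by omega)
  have hne02 := moves_ne σ τ hσ hτv (show 0 < 2 by omega) (by rw [card6]; omega)
  have hne04 := moves_ne σ τ hσ hτv (show 0 < 4 by omega) (by rw [card6]; omega)
  have hne24 := moves_ne σ τ hσ hτv (show 2 < 4 by omega) (by rw [card6]; omega)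
  have hall : ∀ f ∈ (⊤ : SimpleGraph (Fin 4)).edgeSet, c ∈ f →
      f = move σ τ 0 ∨ f = move σ τ 2 ∨ f = move σ τ 4 := by
    intro f hfE hcf
    rcases edges_at c f hfE hcf with rfl | rfl | rfl
    · rw [hA]
      rcases hmoves iA hiAk with h | h | h
      · exact Or.inl h
      · exact Or.inr (Or.inl h)
      · exact Or.inr (Or.inr h)
    · rw [hB]
      rcases hmoves iB hiBk with h | h | h
      · exact Or.inl h
      · exact Or.inr (Or.inl h)
      · exact Or.inr (Or.inr h)
    · rw [hC]
      rcases hmoves iC hiCk with h | h | h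
      · exact Or.inl h
      · exact Or.inr (Or.inl h)
      · exact Or.inr (Or.inr h)
  exact core3 σ τ hσ hτ c hne02 hne04 hne24 hc0 hc2 hc4 hall

end StarAux


/-- For every integer `n ≥ 3`, `a(K_{1,n}) ≥ n + 2`; that is, Alice has no winning
strategy in the achievement game `(K_{1,n}, K_{n+1}, +)`. -/
theorem stmt1 (n : ℕ) (hn : 3 ≤ n) :
    ¬ AliceWins (star n) (⊤ : SimpleGraph (Fin (n + 1))) := by
  rcases Nat.lt_or_ge n 4 with h | h
  · have hn3 : n = 3 := by omega
    subst hn3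
    exact StarAux.main3
  · exact StarAux.main4 h
end

section
/- For every integer n ≥ 1, the bipartite achievement number of the balanced double star satisfies ba(S_{n,n}) = 2n + 1. -/
open AchievementGame

set_option linter.unusedSectionVars false
set_option maxHeartbeats 1000000

namespace BA

variable {α : Type*} (σ τ : Strategy α)

lemma hist_succ (t : ℕ) : hist σ τ (t+1) = hist σ τ t ++ [move σ τ t] := rfl

lemma hist_length (t : ℕ) : (hist σ τ t).length = t := by
  induction t with
  | zero => rfl
  | succ t ih => rw [hist_succ, List.length_append, ih]; rfl

lemma mem_hist_iff {e : Sym2 α} {t : ℕ} : e ∈ hist σ τ t ↔ ∃ i < t, move σ τ i = e := by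
  induction t with
  | zero => simp [hist]
  | succ t ih =>
    rw [hist_succ, List.mem_append, ih]
    constructor
    · rintro (⟨i, hi, h⟩ | h)
      · exact ⟨i, by omega, h⟩
      · exact ⟨t, by omega, (List.mem_singleton.mp h).symm⟩
    · rintro ⟨i, hi, h⟩
      rcases Nat.lt_or_ge i t with h' | h'
      · exact Or.inl ⟨i, h', h⟩
      · have : i = t := by omega
        subst this; exact Or.inr (by simp [h.symm])

lemma hist_take {t t' : ℕ} (h : t ≤ t') : (hist σ τ t').take t = hist σ τ t := by
  induction t' with
  | zero =>
    have : t = 0 := by omega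
    subst this; rfl
  | succ t' ih =>
    rcases Nat.lt_or_ge t (t'+1) with h' | h'
    · rw [hist_succ, List.take_append_of_le_length (by rw [hist_length]; omega)]
      exact ih (by omega)
    · have : t = t' + 1 := by omega
      subst this
      rw [List.take_of_length_le (by rw [hist_length])]

/-- pigeonhole: a short list cannot exhaust a big finite set -/
lemma exists_not_mem_of_length_lt {S : Set (Sym2 α)} {l : List (Sym2 α)}
    (h : l.length < S.ncard) : ∃ e ∈ S, e ∉ l := by
  classical
  by_contra hc
  push_neg at hc
  have hS : S.Finite := by
    by_contra hinf
    rw [Set.Infinite.ncard hinf] at h; omega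
  have hsub : S ⊆ ↑l.toFinset := fun e he => by
    simpa using hc e he
  have := Set.ncard_le_ncard hsub (l.toFinset.finite_toSet)
  rw [Set.ncard_coe_finset] at this
  have := List.toFinset_card_le l
  omega

variable {G : SimpleGraph α}

lemma move_fresh (hσ : σ.Valid G) (hτ : τ.Valid G) {t : ℕ} (ht : t < G.edgeSet.ncard) :
    move σ τ t ∈ G.edgeSet ∧ move σ τ t ∉ hist σ τ t := by
  have h : ∃ e ∈ G.edgeSet, e ∉ hist σ τ t :=
    exists_not_mem_of_length_lt (by rw [hist_length]; exact ht)
  unfold move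
  split
  · exact hσ _ h
  · exact hτ _ h

end BA
namespace BA

abbrev KB (N : ℕ) : SimpleGraph (Fin N ⊕ Fin N) := completeBipartiteGraph (Fin N) (Fin N)

lemma mem_edgeSet_iff {N : ℕ} {e : Sym2 (Fin N ⊕ Fin N)} :
    e ∈ (KB N).edgeSet ↔ ∃ a b : Fin N, e = s(Sum.inl a, Sum.inr b) := by
  refine e.inductionOn (fun x y => ?_)
  rw [SimpleGraph.mem_edgeSet]
  constructor
  · rintro h
    rcases x with a | a <;> rcases y with b | b
    · simp [completeBipartiteGraph] at h
    · exact ⟨a, b, rfl⟩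
    · exact ⟨b, a, Sym2.eq_swap⟩
    · simp [completeBipartiteGraph] at h
  · rintro ⟨a, b, h⟩
    rw [Sym2.eq_iff] at h
    rcases h with ⟨rfl, rfl⟩ | ⟨rfl, rfl⟩ <;> simp [completeBipartiteGraph]

lemma edge_left {N : ℕ} {e : Sym2 (Fin N ⊕ Fin N)} (he : e ∈ (KB N).edgeSet)
    {u : Fin N} (hu : Sum.inl u ∈ e) : ∃ b, e = s(Sum.inl u, Sum.inr b) := by
  obtain ⟨a, b, rfl⟩ := mem_edgeSet_iff.mp he
  rw [Sym2.mem_iff] at hu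
  rcases hu with h | h
  · obtain rfl : a = u := by exact_mod_cast (Sum.inl.injEq _ _).mp h.symm
    exact ⟨b, rfl⟩
  · cases h

lemma edge_right {N : ℕ} {e : Sym2 (Fin N ⊕ Fin N)} (he : e ∈ (KB N).edgeSet)
    {u : Fin N} (hu : Sum.inr u ∈ e) : ∃ a, e = s(Sum.inl a, Sum.inr u) := by
  obtain ⟨a, b, rfl⟩ := mem_edgeSet_iff.mp he
  rw [Sym2.mem_iff] at hu
  rcases hu with h | h
  · cases h
  · obtain rfl : b = u := by exact_mod_cast (Sum.inr.injEq _ _).mp h.symm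
    exact ⟨a, rfl⟩

lemma ncard_edgeSet {N : ℕ} : N * N ≤ (KB N).edgeSet.ncard := by
  classical
  set F : Finset (Sym2 (Fin N ⊕ Fin N)) :=
    Finset.univ.image (fun p : Fin N × Fin N => s(Sum.inl p.1, Sum.inr p.2)) with hF
  have hinj : Function.Injective (fun p : Fin N × Fin N => s(Sum.inl p.1, Sum.inr p.2)) := by
    rintro ⟨a, b⟩ ⟨c, d⟩ h
    simp only [Sym2.eq_iff] at h
    rcases h with ⟨h1, h2⟩ | ⟨h1, h2⟩
    · simp_all
    · cases h1
  have hcard : F.card = N * N := by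
    rw [hF, Finset.card_image_of_injective _ hinj]
    simp
  have hsub : (↑F : Set (Sym2 (Fin N ⊕ Fin N))) ⊆ (KB N).edgeSet := by
    intro e he
    simp only [hF, Finset.coe_image, Set.mem_image] at he
    obtain ⟨p, _, rfl⟩ := he
    exact mem_edgeSet_iff.mpr ⟨p.1, p.2, rfl⟩
  calc N * N = (↑F : Set _).ncard := by rw [Set.ncard_coe_finset, hcard]
  _ ≤ _ := Set.ncard_le_ncard hsub (Set.toFinite _)

end BA
namespace BA

variable {β : Type*}

def evens : List β → List β
  | [] => []
  | [x] => [x]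
  | x :: _ :: xs => x :: evens xs

def odds : List β → List β
  | [] => []
  | [_] => []
  | _ :: y :: xs => y :: odds xs

lemma evens_append_singleton (l : List β) (x : β) :
    evens (l ++ [x]) = if l.length % 2 = 0 then evens l ++ [x] else evens l := by
  induction l using evens.induct with
  | case1 => simp [evens]
  | case2 a => simp [evens]
  | case3 a b xs ih =>
    have h0 : (a :: b :: xs) ++ [x] = a :: b :: (xs ++ [x]) := rfl
    have h1 : evens (a :: b :: (xs ++ [x])) = a :: evens (xs ++ [x]) := rfl
    have h2 : evens (a :: b :: xs) = a :: evens xs := rfl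
    have h3 : (a :: b :: xs).length = xs.length + 2 := by simp
    rw [h0, h1, ih, h2, h3]
    by_cases h4 : xs.length % 2 = 0
    · rw [if_pos h4, if_pos (by omega)]; rfl
    · rw [if_neg h4, if_neg (by omega)]

lemma odds_append_singleton (l : List β) (x : β) :
    odds (l ++ [x]) = if l.length % 2 = 1 then odds l ++ [x] else odds l := by
  induction l using odds.induct with
  | case1 => simp [odds]
  | case2 a => simp [odds]
  | case3 a b xs ih =>
    have h0 : (a :: b :: xs) ++ [x] = a :: b :: (xs ++ [x]) := rfl
    have h1 : odds (a :: b :: (xs ++ [x])) = b :: odds (xs ++ [x]) := rfl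
    have h2 : odds (a :: b :: xs) = b :: odds xs := rfl
    have h3 : (a :: b :: xs).length = xs.length + 2 := by simp
    rw [h0, h1, ih, h2, h3]
    by_cases h4 : xs.length % 2 = 1
    · rw [if_pos h4, if_pos (by omega)]; rfl
    · rw [if_neg h4, if_neg (by omega)]

variable {α : Type*} (σ τ : Strategy α)

lemma evens_hist (m : ℕ) :
    evens (hist σ τ (2 * m)) = (List.range m).map (fun i => move σ τ (2 * i)) := by
  induction m with
  | zero => simp [hist, evens]
  | succ m ih =>
    have h1 : 2 * (m + 1) = (2 * m + 1) + 1 := by omega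
    rw [h1, hist_succ, evens_append_singleton, hist_length, if_neg (by omega),
      hist_succ, evens_append_singleton, hist_length, if_pos (by omega), ih,
      List.range_succ, List.map_append]
    rfl

lemma odds_hist (m : ℕ) :
    odds (hist σ τ (2 * m)) = (List.range m).map (fun i => move σ τ (2 * i + 1)) := by
  induction m with
  | zero => simp [hist, odds]
  | succ m ih =>
    have h1 : 2 * (m + 1) = (2 * m + 1) + 1 := by omega
    rw [h1, hist_succ, odds_append_singleton, hist_length, if_pos (by omega),
      hist_succ, odds_append_singleton, hist_length, if_neg (by omega), ih,
      List.range_succ, List.map_append]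
    rfl

end BA
namespace BA

open scoped Classical

lemma card_filter_range_succ (p : ℕ → Prop) [DecidablePred p] (t : ℕ) :
    ((Finset.range (t+1)).filter p).card
      = ((Finset.range t).filter p).card + if p t then 1 else 0 := by
  rw [Finset.range_add_one, Finset.filter_insert]
  split
  · rw [Finset.card_insert_of_notMem (by simp)]
  · simp

noncomputable def bob (N : ℕ) (d : Sym2 (Fin N ⊕ Fin N)) : Strategy (Fin N ⊕ Fin N) := fun l =>
  if h : ∃ e, e ∈ (KB N).edgeSet ∧ e ∉ l ∧
      ∃ u : Fin N, Sum.inl u ∈ e ∧ Sum.inl u ∈ l.getLast?.getD d then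
    h.choose
  else if h2 : ∃ e, e ∈ (KB N).edgeSet ∧ e ∉ l then h2.choose
  else d

lemma bob_spec_pos (N : ℕ) (d : Sym2 (Fin N ⊕ Fin N)) (l : List (Sym2 (Fin N ⊕ Fin N)))
    (h : ∃ e, e ∈ (KB N).edgeSet ∧ e ∉ l ∧
      ∃ u : Fin N, Sum.inl u ∈ e ∧ Sum.inl u ∈ l.getLast?.getD d) :
    bob N d l ∈ (KB N).edgeSet ∧ bob N d l ∉ l ∧
      ∃ u : Fin N, Sum.inl u ∈ bob N d l ∧ Sum.inl u ∈ l.getLast?.getD d := by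
  unfold bob
  rw [dif_pos h]
  exact h.choose_spec

lemma bob_valid (N : ℕ) (d : Sym2 (Fin N ⊕ Fin N)) : (bob N d).Valid (KB N) := by
  intro l hl
  unfold bob
  split
  · next h => exact ⟨h.choose_spec.1, h.choose_spec.2.1⟩
  · exact ⟨hl.choose_spec.1, hl.choose_spec.2⟩

section LB

variable {N : ℕ} (σ : Strategy (Fin N ⊕ Fin N)) (d : Sym2 (Fin N ⊕ Fin N))

noncomputable def Bdeg (τ : Strategy (Fin N ⊕ Fin N)) (t : ℕ) (u : Fin N) : ℕ :=
  ((Finset.range t).filter (fun i => i % 2 = 0 ∧ Sum.inl u ∈ move σ τ i)).card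

noncomputable def Rdeg (τ : Strategy (Fin N ⊕ Fin N)) (t : ℕ) (u : Fin N) : ℕ :=
  ((Finset.range t).filter (fun i => i % 2 = 1 ∧ Sum.inl u ∈ move σ τ i)).card

variable (τ : Strategy (Fin N ⊕ Fin N))

lemma Rdeg_mono {t t' : ℕ} (h : t ≤ t') (u : Fin N) : Rdeg σ τ t u ≤ Rdeg σ τ t' u :=
  Finset.card_le_card (Finset.filter_subset_filter _ (Finset.range_subset_range.mpr h))

/-- all edges at `inl u` are colored -/
def AllC (t : ℕ) (u : Fin N) : Prop := ∀ b : Fin N, s(Sum.inl u, Sum.inr b) ∈ hist σ τ t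

lemma AllC_mono {t t' : ℕ} (h : t ≤ t') {u : Fin N} (ha : AllC σ τ t u) : AllC σ τ t' u := by
  intro b
  have h2 := ha b
  rw [mem_hist_iff] at h2 ⊢
  obtain ⟨i, hi, he⟩ := h2
  exact ⟨i, by omega, he⟩

variable (hσ : σ.Valid (KB N)) (hτ : τ.Valid (KB N))
include hσ hτ

lemma BR_le {t : ℕ} (ht : t ≤ (KB N).edgeSet.ncard) (u : Fin N) :
    Bdeg σ τ t u + Rdeg σ τ t u ≤ N := by
  classical
  have hdisj : Disjoint
      ((Finset.range t).filter (fun i => i % 2 = 0 ∧ Sum.inl u ∈ move σ τ i))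
      ((Finset.range t).filter (fun i => i % 2 = 1 ∧ Sum.inl u ∈ move σ τ i)) := by
    rw [Finset.disjoint_filter]
    rintro i _ ⟨h1, _⟩ ⟨h2, _⟩
    omega
  have hunion :
      ((Finset.range t).filter (fun i => i % 2 = 0 ∧ Sum.inl u ∈ move σ τ i)) ∪
      ((Finset.range t).filter (fun i => i % 2 = 1 ∧ Sum.inl u ∈ move σ τ i))
      = (Finset.range t).filter (fun i => Sum.inl u ∈ move σ τ i) := by
    rw [← Finset.filter_or]
    apply Finset.filter_congr
    intro i _
    constructor
    · rintro (⟨_, h⟩ | ⟨_, h⟩) <;> exact h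
    · intro h
      rcases Nat.even_or_odd i with he | ho
      · exact Or.inl ⟨Nat.even_iff.mp he, h⟩
      · exact Or.inr ⟨Nat.odd_iff.mp ho, h⟩
  rw [Bdeg, Rdeg, ← Finset.card_union_of_disjoint hdisj, hunion]
  have hinj : Function.Injective (fun b : Fin N => s(Sum.inl u, Sum.inr b)) := by
    intro a b h
    have := Sym2.congr_right.mp h
    simpa using this
  have hN : (Finset.univ.image (fun b : Fin N => s(Sum.inl u, Sum.inr b))).card = N := by
    rw [Finset.card_image_of_injective _ hinj, Finset.card_univ, Fintype.card_fin]
  refine le_trans (Finset.card_le_card_of_injOn (fun i => move σ τ i) ?_ ?_) hN.le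
  · intro i hi
    simp only [Finset.mem_coe, Finset.mem_filter, Finset.mem_range] at hi
    have hfresh := move_fresh σ τ hσ hτ (lt_of_lt_of_le hi.1 ht)
    obtain ⟨b, hb⟩ := edge_left hfresh.1 hi.2
    simp only [Finset.mem_coe, Finset.mem_image]
    exact ⟨b, Finset.mem_univ b, hb.symm⟩
  · intro i hi j hj hij
    simp only [Finset.coe_filter, Set.mem_setOf_eq, Finset.mem_range] at hi hj
    by_contra hne
    rcases Nat.lt_or_ge i j with h | h
    · have := (move_fresh σ τ hσ hτ (lt_of_lt_of_le hj.1 ht)).2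
      exact this ((mem_hist_iff σ τ).mpr ⟨i, h, hij⟩)
    · have hj' : j < i := by omega
      have := (move_fresh σ τ hσ hτ (lt_of_lt_of_le hi.1 ht)).2
      exact this ((mem_hist_iff σ τ).mpr ⟨j, hj', hij.symm⟩)

end LB

end BA
namespace BA

open scoped Classical

section LB2

variable {N : ℕ} (σ : Strategy (Fin N ⊕ Fin N)) (d : Sym2 (Fin N ⊕ Fin N))
variable (hσ : σ.Valid (KB N))

local notation "τb" => bob N d

lemma Bdeg_succ (t : ℕ) (u : Fin N) :
    Bdeg σ τb (t+1) u = Bdeg σ τb t u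
      + if t % 2 = 0 ∧ Sum.inl u ∈ move σ τb t then 1 else 0 := by
  unfold Bdeg
  exact card_filter_range_succ _ t

lemma Rdeg_succ (t : ℕ) (u : Fin N) :
    Rdeg σ τb (t+1) u = Rdeg σ τb t u
      + if t % 2 = 1 ∧ Sum.inl u ∈ move σ τb t then 1 else 0 := by
  unfold Rdeg
  exact card_filter_range_succ _ t

include hσ

/-- the key invariant after each of Bob's moves -/
lemma invariant {k : ℕ} (hk : 2 * k + 1 ≤ (KB N).edgeSet.ncard) :
    ∀ t, 2 * t ≤ 2 * k → ∀ u : Fin N,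
      Bdeg σ τb (2*t) u ≤ Rdeg σ τb (2*t) u ∨
        (2 * Bdeg σ τb (2*t) u ≤ N + 1 ∧ AllC σ τb (2*t) u) := by
  intro t
  induction t with
  | zero =>
    intro _ u
    left
    simp [Bdeg, Rdeg]
  | succ t ih =>
    intro ht u
    have ih' := ih (by omega) u
    have hfA : move σ τb (2*t) ∈ (KB N).edgeSet ∧ move σ τb (2*t) ∉ hist σ τb (2*t) :=
      move_fresh σ τb hσ (bob_valid N d) (by omega)
    have hfB : move σ τb (2*t+1) ∈ (KB N).edgeSet ∧ move σ τb (2*t+1) ∉ hist σ τb (2*t+1) :=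
      move_fresh σ τb hσ (bob_valid N d) (by omega)
    have h22 : 2 * (t+1) = (2*t+1)+1 := by omega
    by_cases hA : Sum.inl u ∈ move σ τb (2*t)
    · -- Alice just played at u
      -- branch 2 at time 2t is impossible
      have hbr1 : Bdeg σ τb (2*t) u ≤ Rdeg σ τb (2*t) u := by
        rcases ih' with h | ⟨_, hall⟩
        · exact h
        · exfalso
          obtain ⟨b, hb⟩ := edge_left hfA.1 hA
          exact hfA.2 (hb ▸ hall b)
      have hBsucc : Bdeg σ τb (2*(t+1)) u = Bdeg σ τb (2*t) u + 1 := by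
        rw [h22, Bdeg_succ, Bdeg_succ]
        rw [if_pos ⟨by omega, hA⟩, if_neg (by rintro ⟨h1, _⟩; omega)]
      -- analyze Bob's move
      have hlast : (hist σ τb (2*t+1)).getLast?.getD d = move σ τb (2*t) := by
        rw [hist_succ, List.getLast?_concat]
        rfl
      by_cases hB : ∃ e, e ∈ (KB N).edgeSet ∧ e ∉ hist σ τb (2*t+1) ∧
          ∃ w : Fin N, Sum.inl w ∈ e ∧ Sum.inl w ∈ (hist σ τb (2*t+1)).getLast?.getD d
      · -- Bob answers at u
        left
        have hmove : move σ τb (2*t+1) = τb (hist σ τb (2*t+1)) := by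
          unfold move
          rw [if_neg (by omega)]
        have hval : Sum.inl u ∈ move σ τb (2*t+1) := by
          obtain ⟨he, hne, w, hw1, hw2⟩ := bob_spec_pos N d _ hB
          rw [hlast] at hw2
          obtain ⟨b, hb⟩ := edge_left hfA.1 hA
          rw [hb, Sym2.mem_iff] at hw2
          have hw : w = u := by
            rcases hw2 with h | h
            · exact_mod_cast (Sum.inl.injEq _ _).mp h
            · cases h
          rw [hmove]
          exact hw ▸ hw1
        have hRsucc : Rdeg σ τb (2*(t+1)) u = Rdeg σ τb (2*t) u + 1 := by
          rw [h22, Rdeg_succ, Rdeg_succ]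
          rw [if_neg (by rintro ⟨h1, _⟩; omega), if_pos ⟨by omega, hval⟩]
        omega
      · -- u is saturated
        right
        constructor
        · have hBR := BR_le σ τb hσ (bob_valid N d) (t := 2*t+1) (by omega) u
          have hB1 : Bdeg σ τb (2*t+1) u = Bdeg σ τb (2*t) u + 1 := by
            rw [Bdeg_succ, if_pos ⟨by omega, hA⟩]
          have hR1 : Rdeg σ τb (2*t+1) u = Rdeg σ τb (2*t) u := by
            rw [Rdeg_succ, if_neg (by rintro ⟨h1, _⟩; omega)]
            omega
          omega
        · intro b
          rw [mem_hist_iff]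
          by_contra hmem
          apply hB
          refine ⟨s(Sum.inl u, Sum.inr b), mem_edgeSet_iff.mpr ⟨u, b, rfl⟩, ?_, u, by simp, ?_⟩
          · rw [mem_hist_iff]
            intro ⟨i, hi, he⟩
            exact hmem ⟨i, by omega, he⟩
          · rw [hlast]
            exact hA
    · -- Alice played elsewhere; u's blue degree unchanged
      have hBsucc : Bdeg σ τb (2*(t+1)) u = Bdeg σ τb (2*t) u := by
        rw [h22, Bdeg_succ, Bdeg_succ]
        rw [if_neg (by rintro ⟨_, h2⟩; exact hA h2), if_neg (by rintro ⟨h1, _⟩; omega)]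
        omega
      rcases ih' with h | ⟨h1, h2⟩
      · left
        have := Rdeg_mono σ τb (show 2*t ≤ 2*(t+1) by omega) u
        omega
      · right
        exact ⟨by omega, AllC_mono σ τb (by omega) h2⟩

lemma final_bound {k : ℕ} (hk : 2 * k + 1 ≤ (KB N).edgeSet.ncard) (u : Fin N) :
    2 * Bdeg σ τb (2*k+1) u ≤ N + 1 := by
  have hinv := invariant σ d hσ hk k le_rfl u
  have hBR := BR_le σ τb hσ (bob_valid N d) (t := 2*k+1) hk u
  have hR1 : Rdeg σ τb (2*k+1) u = Rdeg σ τb (2*k) u := by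
    rw [Rdeg_succ, if_neg (by rintro ⟨h1, _⟩; omega)]
    omega
  rcases hinv with h | ⟨h1, hall⟩
  · have : Bdeg σ τb (2*k+1) u ≤ Bdeg σ τb (2*k) u + 1 := by
      rw [Bdeg_succ]
      split <;> omega
    omega
  · have hfA := move_fresh σ τb hσ (bob_valid N d) (t := 2*k) (by omega)
    have hnotA : ¬ ((2*k) % 2 = 0 ∧ Sum.inl u ∈ move σ τb (2*k)) := by
      rintro ⟨_, hA⟩
      obtain ⟨b, hb⟩ := edge_left hfA.1 hA
      exact hfA.2 (hb ▸ hall b)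
    have : Bdeg σ τb (2*k+1) u = Bdeg σ τb (2*k) u := by
      rw [Bdeg_succ, if_neg hnotA]
      omega
    omega

end LB2

end BA
namespace BA

open scoped Classical

lemma ds_adj_centers (m n : ℕ) : (doubleStar m n).Adj (Sum.inl 0) (Sum.inr 0) := by
  rw [doubleStar, SimpleGraph.fromRel_adj]
  exact ⟨by simp, Or.inl (Or.inr (Or.inr ⟨rfl, rfl⟩))⟩

lemma ds_adj_left (m n : ℕ) (j : Fin (m+1)) (hj : j ≠ 0) :
    (doubleStar m n).Adj (Sum.inl 0) (Sum.inl j) := by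
  rw [doubleStar, SimpleGraph.fromRel_adj]
  exact ⟨by simp [hj.symm], Or.inl (Or.inl ⟨rfl, j, rfl⟩)⟩

lemma ds_adj_right (m n : ℕ) (j : Fin (n+1)) (hj : j ≠ 0) :
    (doubleStar m n).Adj (Sum.inr 0) (Sum.inr j) := by
  rw [doubleStar, SimpleGraph.fromRel_adj]
  exact ⟨by simp [hj.symm], Or.inl (Or.inr (Or.inl ⟨rfl, j, rfl⟩))⟩

lemma center_count {N k n' : ℕ} (σ τ : Strategy (Fin N ⊕ Fin N))
    (a : Fin N) (y : Fin (n'+1) → Fin N ⊕ Fin N) (hy : Function.Injective y)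
    (hblue : ∀ j, ∃ i, i ≤ k ∧ s(Sum.inl a, y j) = move σ τ (2*i)) :
    n' + 1 ≤ Bdeg σ τ (2*k+1) a := by
  choose idx hidx1 hidx2 using hblue
  have hcard : (Finset.univ : Finset (Fin (n'+1))).card = n' + 1 := by simp
  rw [Bdeg, ← hcard]
  apply Finset.card_le_card_of_injOn (fun j => 2 * idx j)
  · intro j _
    simp only [Finset.mem_coe, Finset.mem_filter, Finset.mem_range]
    refine ⟨by have := hidx1 j; omega, by omega, ?_⟩
    rw [← hidx2 j]
    exact Sym2.mem_mk_left _ _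
  · intro j _ j' _ hjj
    have : idx j = idx j' := by
      simp only at hjj; omega
    have heq : s(Sum.inl a, y j) = s(Sum.inl a, y j') := by
      rw [hidx2 j, hidx2 j', this]
    exact hy (Sym2.congr_right.mp heq)

lemma copy_deg {N n k : ℕ} (σ τ : Strategy (Fin N ⊕ Fin N))
    (hσ : σ.Valid (KB N)) (hτ : τ.Valid (KB N))
    (hk : 2 * k + 1 ≤ (KB N).edgeSet.ncard)
    (h : HasCopy (doubleStar n n) {e | ∃ i ≤ k, e = move σ τ (2*i)}) :
    ∃ u : Fin N, n + 1 ≤ Bdeg σ τ (2*k+1) u := by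
  obtain ⟨f, hf⟩ := h
  have hcen := hf _ _ (ds_adj_centers n n)
  obtain ⟨i₀, hi₀, he₀⟩ := hcen
  have hfr := move_fresh σ τ hσ hτ (t := 2*i₀) (by omega)
  obtain ⟨a, b, hab⟩ := mem_edgeSet_iff.mp hfr.1
  rw [hab] at he₀
  rw [Sym2.eq_iff] at he₀
  rcases he₀ with ⟨h1, h2⟩ | ⟨h1, h2⟩
  · -- f (inl 0) = inl a
    refine ⟨a, ?_⟩
    set g : Fin (n+1) → (Fin (n+1) ⊕ Fin (n+1)) :=
      fun j => if j = 0 then Sum.inr 0 else Sum.inl j with hg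
    have hginj : Function.Injective g := by
      intro x x' hxx
      simp only [hg] at hxx
      by_cases hx : x = 0 <;> by_cases hx' : x' = 0
      · rw [hx, hx']
      · rw [if_pos hx, if_neg hx'] at hxx; exact absurd hxx (by simp)
      · rw [if_neg hx, if_pos hx'] at hxx; exact absurd hxx (by simp)
      · rw [if_neg hx, if_neg hx'] at hxx
        exact Sum.inl_injective hxx
    apply center_count σ τ a (f ∘ g) (f.injective.comp hginj)
    intro j
    have hadj : (doubleStar n n).Adj (Sum.inl 0) (g j) := by
      by_cases hj : j = 0
      · rw [hg]; simp only [hj, if_pos rfl]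
        exact ds_adj_centers n n
      · rw [hg]; simp only [if_neg hj]
        exact ds_adj_left n n j hj
    have := hf _ _ hadj
    rw [h1] at this
    obtain ⟨i, hi, hei⟩ := this
    exact ⟨i, hi, by simpa using hei⟩
  · -- f (inl 0) = inr b, f (inr 0) = inl a
    refine ⟨a, ?_⟩
    set g : Fin (n+1) → (Fin (n+1) ⊕ Fin (n+1)) :=
      fun j => if j = 0 then Sum.inl 0 else Sum.inr j with hg
    have hginj : Function.Injective g := by
      intro x x' hxx
      simp only [hg] at hxx
      by_cases hx : x = 0 <;> by_cases hx' : x' = 0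
      · rw [hx, hx']
      · rw [if_pos hx, if_neg hx'] at hxx; exact absurd hxx (by simp)
      · rw [if_neg hx, if_pos hx'] at hxx; exact absurd hxx (by simp)
      · rw [if_neg hx, if_neg hx'] at hxx
        exact Sum.inr_injective hxx
    apply center_count σ τ a (f ∘ g) (f.injective.comp hginj)
    intro j
    have hadj : (doubleStar n n).Adj (Sum.inr 0) (g j) := by
      by_cases hj : j = 0
      · rw [hg]; simp only [hj, if_pos rfl]
        exact (ds_adj_centers n n).symm
      · rw [hg]; simp only [if_neg hj]
        exact ds_adj_right n n j hj
    have := hf _ _ hadj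
    rw [h2] at this
    obtain ⟨i, hi, hei⟩ := this
    exact ⟨i, hi, by simpa using hei⟩

theorem lower {n N : ℕ} (h : AliceWins (doubleStar n n) (KB N)) : 2 * n + 1 ≤ N := by
  obtain ⟨σ, hσ, hwin⟩ := h
  obtain ⟨k, hk, hblue, -⟩ := hwin (bob N (σ [])) (bob_valid N (σ []))
  obtain ⟨u, hu⟩ := copy_deg σ (bob N (σ [])) hσ (bob_valid N (σ [])) hk hblue
  have := final_bound σ (σ []) hσ hk u
  omega

end BA
namespace BA

open scoped Classical

/-- count red edges at right-vertex `w` -/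
noncomputable def rdegA (n : ℕ) (l' : List (Sym2 (Fin (2*n+1) ⊕ Fin (2*n+1)))) (w : Fin (2*n+1)) : ℕ :=
  (odds l').countP (fun e => decide (Sum.inr w ∈ e))

noncomputable def candA (n : ℕ) (l' : List (Sym2 (Fin (2*n+1) ⊕ Fin (2*n+1)))) :
    Finset (Fin (2*n+1)) :=
  Finset.univ.filter (fun w => s(Sum.inl 0, Sum.inr w) ∈ evens l')

noncomputable def hubA (n : ℕ) (l' : List (Sym2 (Fin (2*n+1) ⊕ Fin (2*n+1)))) : Fin (2*n+1) :=
  if hC : (candA n l').Nonempty then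
    (Finset.exists_min_image (candA n l') (rdegA n l') hC).choose
  else 0

/-- Alice's chosen second centre: a candidate with minimal red degree, computed from
the first `2n+2` moves -/
noncomputable def hub (n : ℕ) (l : List (Sym2 (Fin (2*n+1) ⊕ Fin (2*n+1)))) : Fin (2*n+1) :=
  hubA n (l.take (2*n+2))

lemma hub_congr (n : ℕ) {l l' : List (Sym2 (Fin (2*n+1) ⊕ Fin (2*n+1)))}
    (h : l.take (2*n+2) = l'.take (2*n+2)) : hub n l = hub n l' := by
  unfold hub
  rw [h]

lemma hubA_spec (n : ℕ) {l' : List (Sym2 (Fin (2*n+1) ⊕ Fin (2*n+1)))}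
    (hC : (candA n l').Nonempty) :
    hubA n l' ∈ candA n l' ∧ ∀ w ∈ candA n l', rdegA n l' (hubA n l') ≤ rdegA n l' w := by
  unfold hubA
  rw [dif_pos hC]
  obtain ⟨h1, h2⟩ := (Finset.exists_min_image (candA n l') (rdegA n l') hC).choose_spec
  exact ⟨h1, h2⟩

/-- Alice's strategy -/
noncomputable def alice (n : ℕ) : Strategy (Fin (2*n+1) ⊕ Fin (2*n+1)) := fun l =>
  if h1 : l.length < 2*n+2 ∧
      ∃ e, e ∈ (KB (2*n+1)).edgeSet ∧ e ∉ l ∧ Sum.inl 0 ∈ e then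
    h1.2.choose
  else if h2 : ∃ e, e ∈ (KB (2*n+1)).edgeSet ∧ e ∉ l ∧
      ∃ w : Fin (2*n+1), w ≠ 0 ∧ e = s(Sum.inr (hub n l), Sum.inl w) then
    h2.choose
  else if h3 : ∃ e, e ∈ (KB (2*n+1)).edgeSet ∧ e ∉ l then h3.choose
  else s(Sum.inl 0, Sum.inl 0)

lemma alice_valid (n : ℕ) : (alice n).Valid (KB (2*n+1)) := by
  intro l hl
  unfold alice
  split
  · next h1 => exact ⟨h1.2.choose_spec.1, h1.2.choose_spec.2.1⟩
  · split
    · next h2 => exact ⟨h2.choose_spec.1, h2.choose_spec.2.1⟩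
    · exact ⟨hl.choose_spec.1, hl.choose_spec.2⟩

lemma alice_spec1 (n : ℕ) (l : List (Sym2 (Fin (2*n+1) ⊕ Fin (2*n+1))))
    (hlen : l.length < 2*n+2)
    (hex : ∃ e, e ∈ (KB (2*n+1)).edgeSet ∧ e ∉ l ∧ Sum.inl 0 ∈ e) :
    alice n l ∈ (KB (2*n+1)).edgeSet ∧ alice n l ∉ l ∧ Sum.inl 0 ∈ alice n l := by
  unfold alice
  rw [dif_pos ⟨hlen, hex⟩]
  exact hex.choose_spec

lemma alice_spec2 (n : ℕ) (l : List (Sym2 (Fin (2*n+1) ⊕ Fin (2*n+1))))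
    (hlen : ¬ l.length < 2*n+2)
    (hex : ∃ e, e ∈ (KB (2*n+1)).edgeSet ∧ e ∉ l ∧
      ∃ w : Fin (2*n+1), w ≠ 0 ∧ e = s(Sum.inr (hub n l), Sum.inl w)) :
    alice n l ∈ (KB (2*n+1)).edgeSet ∧ alice n l ∉ l ∧
      ∃ w : Fin (2*n+1), w ≠ 0 ∧ alice n l = s(Sum.inr (hub n l), Sum.inl w) := by
  unfold alice
  rw [dif_neg (fun h => hlen h.1), dif_pos hex]
  exact hex.choose_spec

end BA
namespace BA

open scoped Classical

lemma countP_range (p : ℕ → Prop) [DecidablePred p] (m : ℕ) :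
    (List.range m).countP (fun i => decide (p i)) = ((Finset.range m).filter p).card := by
  induction m with
  | zero => simp
  | succ m ih =>
    rw [List.range_succ, List.countP_append, card_filter_range_succ, ih]
    by_cases h : p m <;> simp [h]

section Upper

variable {n : ℕ} (τ : Strategy (Fin (2*n+1) ⊕ Fin (2*n+1)))

lemma ncard_lb (n : ℕ) : 4*n+1 ≤ (KB (2*n+1)).edgeSet.ncard := by
  have h := ncard_edgeSet (N := 2*n+1)
  nlinarith

variable (hτ : τ.Valid (KB (2*n+1)))
include hτ

lemma freshU {i : ℕ} (hi : i ≤ 4*n) :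
    move (alice n) τ i ∈ (KB (2*n+1)).edgeSet ∧
      move (alice n) τ i ∉ hist (alice n) τ i :=
  move_fresh _ _ (alice_valid n) hτ (lt_of_lt_of_le (by omega) (ncard_lb n))

lemma moveU_inj {i j : ℕ} (hi : i ≤ 4*n) (hj : j ≤ 4*n)
    (h : move (alice n) τ i = move (alice n) τ j) : i = j := by
  by_contra hne
  rcases Nat.lt_or_ge i j with hlt | hge
  · exact (freshU τ hτ hj).2 ((mem_hist_iff _ _).mpr ⟨i, hlt, h⟩)
  · have : j < i := by omega
    exact (freshU τ hτ hi).2 ((mem_hist_iff _ _).mpr ⟨j, this, h.symm⟩)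

lemma phase1 {m : ℕ} (hm : m ≤ n) :
    ∃ w : Fin (2*n+1), move (alice n) τ (2*m) = s(Sum.inl 0, Sum.inr w) := by
  have hlen : (hist (alice n) τ (2*m)).length < 2*n+2 := by rw [hist_length]; omega
  have hex : ∃ e, e ∈ (KB (2*n+1)).edgeSet ∧ e ∉ hist (alice n) τ (2*m) ∧
      Sum.inl 0 ∈ e := by
    by_contra hc
    push_neg at hc
    have hall : ∀ w : Fin (2*n+1),
        s(Sum.inl 0, Sum.inr w) ∈ (hist (alice n) τ (2*m)).toFinset := by
      intro w
      rw [List.mem_toFinset]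
      by_contra hw
      exact hc _ (mem_edgeSet_iff.mpr ⟨0, w, rfl⟩) hw (Sym2.mem_mk_left _ _)
    have hinj : Function.Injective
        (fun w : Fin (2*n+1) => s((Sum.inl 0 : Fin (2*n+1) ⊕ Fin (2*n+1)), Sum.inr w)) := by
      intro a b h
      have := Sym2.congr_right.mp h
      simpa using this
    have hsub : Finset.univ.image
        (fun w : Fin (2*n+1) => s((Sum.inl 0 : Fin (2*n+1) ⊕ Fin (2*n+1)), Sum.inr w))
        ⊆ (hist (alice n) τ (2*m)).toFinset := by
      intro e he
      simp only [Finset.mem_image] at he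
      obtain ⟨w, _, rfl⟩ := he
      exact hall w
    have h1 := Finset.card_le_card hsub
    rw [Finset.card_image_of_injective _ hinj, Finset.card_univ, Fintype.card_fin] at h1
    have h2 := List.toFinset_card_le (hist (alice n) τ (2*m))
    rw [hist_length] at h2
    omega
  have hmove : move (alice n) τ (2*m) = alice n (hist (alice n) τ (2*m)) := by
    unfold move
    rw [if_pos (by omega)]
  obtain ⟨he, hnl, hmem⟩ := alice_spec1 n _ hlen hex
  rw [← hmove] at he hmem
  obtain ⟨b, hb⟩ := edge_left he hmem
  exact ⟨b, hb⟩

end Upper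

end BA
namespace BA

open scoped Classical

section Upper2

variable {n : ℕ} (τ : Strategy (Fin (2*n+1) ⊕ Fin (2*n+1)))
variable (hτ : τ.Valid (KB (2*n+1)))

lemma rdegA_eq (v : Fin (2*n+1)) :
    rdegA n (hist (alice n) τ (2*n+2)) v
      = ((Finset.range (n+1)).filter
          (fun m => Sum.inr v ∈ move (alice n) τ (2*m+1))).card := by
  have h1 : (2*n+2) = 2*(n+1) := by omega
  rw [rdegA, h1, odds_hist, List.countP_map]
  simp only [Function.comp_def]
  exact countP_range (fun m => Sum.inr v ∈ move (alice n) τ (2*m+1)) (n+1)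

include hτ

lemma phase2
    (wit : Fin (n+1) → Fin (2*n+1))
    (hwit : ∀ m : Fin (n+1), move (alice n) τ (2*(m:ℕ)) = s(Sum.inl 0, Sum.inr (wit m)))
    {v : Fin (2*n+1)}
    (hv2 : rdegA n (hist (alice n) τ (2*n+2)) v ≤ 1)
    (hhub : ∀ t, 2*n+2 ≤ t → hub n (hist (alice n) τ t) = v)
    {i : ℕ} (hi1 : 1 ≤ i) (hi2 : i ≤ n) :
    ∃ w : Fin (2*n+1), w ≠ 0 ∧
      move (alice n) τ (2*(n+i)) = s(Sum.inr v, Sum.inl w) := by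
  set l := hist (alice n) τ (2*(n+i)) with hl
  have hlen : ¬ l.length < 2*n+2 := by rw [hl, hist_length]; omega
  set Pfin : Finset (Sym2 (Fin (2*n+1) ⊕ Fin (2*n+1))) :=
    (Finset.univ.erase (0 : Fin (2*n+1))).image
      (fun w => s(Sum.inr v, Sum.inl w)) with hPfin
  have hPinj : Function.Injective
      (fun w : Fin (2*n+1) => s((Sum.inr v : Fin (2*n+1) ⊕ Fin (2*n+1)), Sum.inl w)) := by
    intro a b h
    have := Sym2.congr_right.mp h
    simpa using this
  have hPcard : Pfin.card = 2*n := by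
    rw [hPfin, Finset.card_image_of_injective _ hPinj,
      Finset.card_erase_of_mem (Finset.mem_univ _), Finset.card_univ, Fintype.card_fin]
    omega
  have hmemP : ∀ e ∈ Pfin, ∃ w : Fin (2*n+1), w ≠ 0 ∧ e = s(Sum.inr v, Sum.inl w) := by
    intro e he
    rw [hPfin, Finset.mem_image] at he
    obtain ⟨w, hw, rfl⟩ := he
    exact ⟨w, (Finset.mem_erase.mp hw).1, rfl⟩
  have huncol : ∃ e ∈ Pfin, e ∉ l := by
    by_contra hc
    push_neg at hc
    set J : Finset ℕ := (Finset.range (2*(n+i))).filter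
      (fun j => move (alice n) τ j ∈ Pfin) with hJdef
    have hJ : Pfin.card ≤ J.card := by
      apply Finset.card_le_card_of_injOn
        (fun e => if h : ∃ j, j < 2*(n+i) ∧ move (alice n) τ j = e then h.choose else 0)
      · intro e he
        have hel : e ∈ l := hc e he
        rw [hl, mem_hist_iff] at hel
        obtain ⟨j, hj1, hj2⟩ := hel
        have hex : ∃ j, j < 2*(n+i) ∧ move (alice n) τ j = e := ⟨j, hj1, hj2⟩
        simp only [dif_pos hex]
        simp only [hJdef, Finset.mem_coe, Finset.mem_filter, Finset.mem_range]
        exact ⟨hex.choose_spec.1, by rw [hex.choose_spec.2]; exact he⟩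
      · intro e he e' he' heq
        simp only at heq
        have hel : e ∈ l := hc e (by simpa using he)
        have hel' : e' ∈ l := hc e' (by simpa using he')
        rw [hl, mem_hist_iff] at hel hel'
        have hex : ∃ j, j < 2*(n+i) ∧ move (alice n) τ j = e := hel
        have hex' : ∃ j, j < 2*(n+i) ∧ move (alice n) τ j = e' := hel'
        rw [dif_pos hex, dif_pos hex'] at heq
        rw [← hex.choose_spec.2, ← hex'.choose_spec.2, heq]
    set A : Finset ℕ := (Finset.range (2*n+2)).filter
      (fun j => j % 2 = 1 ∧ Sum.inr v ∈ move (alice n) τ j) with hAdef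
    set B : Finset ℕ := Finset.Ico (2*n+2) (2*(n+i)) with hBdef
    have hJsub : J ⊆ A ∪ B := by
      intro j hj
      simp only [hJdef, Finset.mem_filter, Finset.mem_range] at hj
      obtain ⟨hj1, hj2⟩ := hj
      obtain ⟨w, hw0, hwe⟩ := hmemP _ hj2
      rcases Nat.lt_or_ge j (2*n+2) with hsmall | hbig
      · have hodd : j % 2 = 1 := by
          by_contra hev
          have hev' : j % 2 = 0 := by omega
          have hm : j / 2 < n + 1 := by omega
          have := hwit ⟨j/2, hm⟩
          simp only [Fin.val_mk] at this
          rw [show 2 * (j/2) = j by omega] at this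
          rw [this, Sym2.eq_iff] at hwe
          rcases hwe with ⟨h1, _⟩ | ⟨h1, h2⟩
          · exact absurd h1 (by simp)
          · injection h1 with h1'
            exact hw0 h1'.symm
        refine Finset.mem_union_left _ ?_
        simp only [hAdef, Finset.mem_filter, Finset.mem_range]
        exact ⟨hsmall, hodd, by rw [hwe]; exact Sym2.mem_mk_left _ _⟩
      · exact Finset.mem_union_right _ (by simp [hBdef]; omega)
    have hA : A.card ≤ 1 := by
      have h1 : A.card ≤ ((Finset.range (n+1)).filter
          (fun m => Sum.inr v ∈ move (alice n) τ (2*m+1))).card := by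
        apply Finset.card_le_card_of_injOn (fun j => j / 2)
        · intro j hj
          simp only [hAdef, Finset.mem_coe, Finset.mem_filter, Finset.mem_range] at hj
          obtain ⟨hj1, hj2, hj3⟩ := hj
          simp only [Finset.mem_coe, Finset.mem_filter, Finset.mem_range]
          refine ⟨by omega, ?_⟩
          rw [show 2 * (j/2) + 1 = j by omega]
          exact hj3
        · intro j hj j' hj' heq
          simp only [hAdef, Finset.coe_filter, Set.mem_setOf_eq, Finset.mem_range] at hj hj'
          simp only at heq
          omega
      rw [← rdegA_eq] at h1
      omega
    have hB : B.card = 2*i - 2 := by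
      rw [hBdef, Nat.card_Ico]
      omega
    have := Finset.card_le_card hJsub
    have := Finset.card_union_le A B
    omega
  obtain ⟨e, heP, hel⟩ := huncol
  obtain ⟨w, hw0, hwe⟩ := hmemP _ heP
  have hhubl : hub n l = v := hhub _ (by omega)
  have hex : ∃ e, e ∈ (KB (2*n+1)).edgeSet ∧ e ∉ l ∧
      ∃ w : Fin (2*n+1), w ≠ 0 ∧ e = s(Sum.inr (hub n l), Sum.inl w) := by
    refine ⟨e, ?_, hel, w, hw0, by rw [hhubl, hwe]⟩
    rw [hwe]
    exact mem_edgeSet_iff.mpr ⟨w, v, Sym2.eq_swap⟩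
  obtain ⟨he1, he2, w', hw'0, hw'e⟩ := alice_spec2 n l hlen hex
  have hmove : move (alice n) τ (2*(n+i)) = alice n l := by
    rw [hl]
    unfold move
    rw [if_pos (by omega)]
  exact ⟨w', hw'0, by rw [hmove, hw'e, hhubl]⟩

end Upper2

end BA
namespace BA

open scoped Classical

theorem upper {n : ℕ} (hn : 1 ≤ n) : AliceWins (doubleStar n n) (KB (2*n+1)) := by
  refine ⟨alice n, alice_valid n, ?_⟩
  intro τ hτ
  refine ⟨2*n, by have := ncard_lb n; omega, ?hblue, ?hred⟩
  case hblue =>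
    -- ===== the blue copy =====
    choose wit hwit using fun m : Fin (n+1) => phase1 τ hτ (m := (m:ℕ)) (by omega)
    have hwinj : Function.Injective wit := by
      intro a b hab
      have h1 : move (alice n) τ (2*(a:ℕ)) = move (alice n) τ (2*(b:ℕ)) := by
        rw [hwit a, hwit b, hab]
      have h2 := moveU_inj τ hτ (by have := a.isLt; omega) (by have := b.isLt; omega) h1
      exact Fin.ext (by omega)
    have hcand : candA n (hist (alice n) τ (2*n+2)) = Finset.univ.image wit := by
      ext w
      simp only [candA, Finset.mem_filter, Finset.mem_univ, true_and, Finset.mem_image]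
      rw [show (hist (alice n) τ (2*n+2)) = hist (alice n) τ (2*(n+1)) from by
        rw [show 2*n+2 = 2*(n+1) by omega], evens_hist, List.mem_map]
      constructor
      · rintro ⟨i, hi, hei⟩
        rw [List.mem_range] at hi
        refine ⟨⟨i, hi⟩, ?_⟩
        have hw := hwit ⟨i, hi⟩
        simp only [Fin.val_mk] at hw
        rw [hw] at hei
        have := Sym2.congr_right.mp hei
        simpa using this
      · rintro ⟨m, rfl⟩
        exact ⟨(m:ℕ), List.mem_range.mpr m.isLt, hwit m⟩
    have hCne : (candA n (hist (alice n) τ (2*n+2))).Nonempty := by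
      rw [hcand]
      exact ⟨wit 0, Finset.mem_image_of_mem _ (Finset.mem_univ _)⟩
    set v := hubA n (hist (alice n) τ (2*n+2)) with hv
    obtain ⟨hvmem0, hvmin0⟩ := hubA_spec n hCne
    have hvmem : v ∈ candA n (hist (alice n) τ (2*n+2)) := by rw [hv]; exact hvmem0
    have hvmin : ∀ w ∈ candA n (hist (alice n) τ (2*n+2)),
        rdegA n (hist (alice n) τ (2*n+2)) v ≤ rdegA n (hist (alice n) τ (2*n+2)) w := by
      rw [hv]; exact hvmin0
    have hvmem' : v ∈ Finset.univ.image wit := by rw [← hcand]; exact hvmem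
    obtain ⟨m₀, -, hm₀⟩ := Finset.mem_image.mp hvmem'
    have hhubt : ∀ t, 2*n+2 ≤ t → hub n (hist (alice n) τ t) = v := by
      intro t ht
      unfold hub
      rw [hist_take _ _ ht, hv]
    have hsum : ∑ w ∈ candA n (hist (alice n) τ (2*n+2)),
        rdegA n (hist (alice n) τ (2*n+2)) w ≤ n+1 := by
      have hstep : ∀ w, rdegA n (hist (alice n) τ (2*n+2)) w
          = ∑ m ∈ Finset.range (n+1),
              if Sum.inr w ∈ move (alice n) τ (2*m+1) then 1 else 0 := by
        intro w
        rw [rdegA_eq τ w, Finset.card_filter]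
      calc ∑ w ∈ candA n (hist (alice n) τ (2*n+2)),
            rdegA n (hist (alice n) τ (2*n+2)) w
          = ∑ w ∈ candA n (hist (alice n) τ (2*n+2)), ∑ m ∈ Finset.range (n+1),
              if Sum.inr w ∈ move (alice n) τ (2*m+1) then 1 else 0 :=
            Finset.sum_congr rfl (fun w _ => hstep w)
        _ = ∑ m ∈ Finset.range (n+1), ∑ w ∈ candA n (hist (alice n) τ (2*n+2)),
              if Sum.inr w ∈ move (alice n) τ (2*m+1) then 1 else 0 := Finset.sum_comm
        _ ≤ ∑ m ∈ Finset.range (n+1), 1 := by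
            apply Finset.sum_le_sum
            intro m hm
            rw [Finset.mem_range] at hm
            have hfr := freshU τ hτ (i := 2*m+1) (by omega)
            obtain ⟨a, b, hab⟩ := mem_edgeSet_iff.mp hfr.1
            rw [← Finset.card_filter]
            have hsub : (candA n (hist (alice n) τ (2*n+2))).filter
                (fun w => Sum.inr w ∈ move (alice n) τ (2*m+1)) ⊆ {b} := by
              intro w hw
              rw [Finset.mem_filter] at hw
              have hw2 := hw.2
              rw [hab, Sym2.mem_iff] at hw2
              rcases hw2 with h | h
              · exact absurd h (by simp)
              · simp only [Finset.mem_singleton]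
                exact_mod_cast (Sum.inr.injEq _ _).mp h
            have := Finset.card_le_card hsub
            simpa using this
        _ = n+1 := by simp
    have hv2 : rdegA n (hist (alice n) τ (2*n+2)) v ≤ 1 := by
      by_contra hc
      push_neg at hc
      have hall : ∀ w ∈ candA n (hist (alice n) τ (2*n+2)),
          2 ≤ rdegA n (hist (alice n) τ (2*n+2)) w := by
        intro w hw
        have := hvmin w hw
        omega
      have hge := Finset.card_nsmul_le_sum _ _ 2 hall
      rw [hcand, Finset.card_image_of_injective _ hwinj, Finset.card_univ,
        Fintype.card_fin] at hge
      simp only [smul_eq_mul] at hge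
      have hge' : (n+1) * 2 ≤ ∑ w ∈ Finset.univ.image wit,
          rdegA n (hist (alice n) τ (2*n+2)) w := hge
      rw [hcand] at hsum
      omega
    -- phase 2 witnesses
    have hph2 : ∀ j : Fin (n+1), ∃ w : Fin (2*n+1), (j:ℕ) ≠ 0 →
        (w ≠ 0 ∧ move (alice n) τ (2*(n+(j:ℕ))) = s(Sum.inr v, Sum.inl w)) := by
      intro j
      by_cases hj : (j:ℕ) = 0
      · exact ⟨0, fun h => absurd hj h⟩
      · obtain ⟨w, hw1, hw2⟩ := phase2 τ hτ wit hwit hv2 hhubt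
          (i := (j:ℕ)) (by omega) (by have := j.isLt; omega)
        exact ⟨w, fun _ => ⟨hw1, hw2⟩⟩
    choose u hu using hph2
    have huinj : ∀ j j' : Fin (n+1), (j:ℕ) ≠ 0 → (j':ℕ) ≠ 0 → u j = u j' → j = j' := by
      intro j j' hj hj' huu
      have h1 : move (alice n) τ (2*(n+(j:ℕ))) = move (alice n) τ (2*(n+(j':ℕ))) := by
        rw [(hu j hj).2, (hu j' hj').2, huu]
      have h2 := moveU_inj τ hτ (by have := j.isLt; omega) (by have := j'.isLt; omega) h1
      exact Fin.ext (by omega)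
    have hswapne : ∀ j : Fin (n+1), j ≠ 0 → Equiv.swap 0 m₀ j ≠ m₀ := by
      intro j hj h
      have h0 : Equiv.swap 0 m₀ 0 = m₀ := Equiv.swap_apply_left 0 m₀
      exact hj ((Equiv.swap 0 m₀).injective (h.trans h0.symm))
    have hfin : ∀ j : Fin (n+1), j ≠ 0 ↔ (j:ℕ) ≠ 0 := by
      intro j
      rw [not_iff_not, Fin.ext_iff]
      simp
    set emb : Fin (n+1) ⊕ Fin (n+1) → Fin (2*n+1) ⊕ Fin (2*n+1) :=
      Sum.elim
        (fun j => if j = 0 then Sum.inl 0 else Sum.inr (wit (Equiv.swap 0 m₀ j)))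
        (fun j => if j = 0 then Sum.inr v else Sum.inl (u j)) with hemb
    have hinj : Function.Injective emb := by
      intro x y hxy
      rcases x with j | j <;> rcases y with j' | j' <;>
        simp only [hemb, Sum.elim_inl, Sum.elim_inr] at hxy
      · by_cases hj : j = 0 <;> by_cases hj' : j' = 0
        · rw [hj, hj']
        · rw [if_pos hj, if_neg hj'] at hxy; exact absurd hxy (by simp)
        · rw [if_neg hj, if_pos hj'] at hxy; exact absurd hxy (by simp)
        · rw [if_neg hj, if_neg hj'] at hxy
          injection hxy with h
          have := (Equiv.swap 0 m₀).injective (hwinj h)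
          rw [this]
      · exfalso
        by_cases hj : j = 0 <;> by_cases hj' : j' = 0
        · rw [if_pos hj, if_pos hj'] at hxy; exact (by simpa using hxy)
        · rw [if_pos hj, if_neg hj'] at hxy
          injection hxy with h
          exact (hu j' ((hfin j').mp hj')).1 h.symm
        · rw [if_neg hj, if_pos hj'] at hxy
          injection hxy with h
          exact hswapne j hj (hwinj (h.trans hm₀.symm))
        · rw [if_neg hj, if_neg hj'] at hxy; exact (by simpa using hxy)
      · exfalso
        by_cases hj : j = 0 <;> by_cases hj' : j' = 0
        · rw [if_pos hj, if_pos hj'] at hxy; exact (by simpa using hxy)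
        · rw [if_pos hj, if_neg hj'] at hxy
          injection hxy with h
          exact hswapne j' hj' (hwinj (h.symm.trans hm₀.symm))
        · rw [if_neg hj, if_pos hj'] at hxy
          injection hxy with h
          exact (hu j ((hfin j).mp hj)).1 h
        · rw [if_neg hj, if_neg hj'] at hxy; exact (by simpa using hxy)
      · by_cases hj : j = 0 <;> by_cases hj' : j' = 0
        · rw [hj, hj']
        · rw [if_pos hj, if_neg hj'] at hxy; exact absurd hxy (by simp)
        · rw [if_neg hj, if_pos hj'] at hxy; exact absurd hxy (by simp)
        · rw [if_neg hj, if_neg hj'] at hxy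
          injection hxy with h
          exact congrArg Sum.inr (huinj j j' ((hfin j).mp hj) ((hfin j').mp hj') h)
    refine ⟨⟨emb, hinj⟩, ?_⟩
    have hrel : ∀ a b : Fin (n+1) ⊕ Fin (n+1), a ≠ b →
        ((a = Sum.inl 0 ∧ ∃ i, b = Sum.inl i) ∨
         (a = Sum.inr 0 ∧ ∃ j, b = Sum.inr j) ∨
         (a = Sum.inl 0 ∧ b = Sum.inr 0)) →
        s(emb a, emb b) ∈ {e | ∃ i ≤ 2*n, e = move (alice n) τ (2*i)} := by
      rintro a b hne (⟨rfl, i, rfl⟩ | ⟨rfl, j, rfl⟩ | ⟨rfl, rfl⟩)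
      · have hi : i ≠ 0 := by rintro rfl; exact hne rfl
        have h1 : emb (Sum.inl 0) = Sum.inl 0 := by simp [hemb]
        have h2 : emb (Sum.inl i) = Sum.inr (wit (Equiv.swap 0 m₀ i)) := by
          simp [hemb, hi]
        rw [h1, h2]
        exact ⟨((Equiv.swap 0 m₀ i) : ℕ),
          by have := (Equiv.swap 0 m₀ i).isLt; omega, (hwit _).symm⟩
      · have hj : j ≠ 0 := by rintro rfl; exact hne rfl
        have h1 : emb (Sum.inr 0) = Sum.inr v := by simp [hemb]
        have h2 : emb (Sum.inr j) = Sum.inl (u j) := by simp [hemb, hj]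
        rw [h1, h2]
        exact ⟨n + (j:ℕ), by have := j.isLt; omega,
          ((hu j ((hfin j).mp hj)).2).symm⟩
      · have h1 : emb (Sum.inl 0) = Sum.inl 0 := by simp [hemb]
        have h2 : emb (Sum.inr 0) = Sum.inr v := by simp [hemb]
        rw [h1, h2, ← hm₀]
        exact ⟨(m₀:ℕ), by have := m₀.isLt; omega, (hwit m₀).symm⟩
    intro a b hadj
    simp only [Function.Embedding.coeFn_mk]
    rw [doubleStar, SimpleGraph.fromRel_adj] at hadj
    obtain ⟨hne, hor⟩ := hadj
    rcases hor with h | h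
    · exact hrel a b hne h
    · rw [Sym2.eq_swap]
      exact hrel b a (Ne.symm hne) h
  case hred =>
    -- ===== no red copy: too few red edges =====
    rintro ⟨f, hf⟩
    set R : Finset (Sym2 (Fin (2*n+1) ⊕ Fin (2*n+1))) :=
      (Finset.range (2*n)).image (fun i => move (alice n) τ (2*i+1)) with hR
    have hRcard : R.card ≤ 2*n := le_trans Finset.card_image_le (by simp)
    have hmemR : ∀ a b, (doubleStar n n).Adj a b → s(f a, f b) ∈ R := by
      intro a b hadj
      obtain ⟨i, hi, he⟩ := hf a b hadj
      rw [hR, Finset.mem_image]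
      exact ⟨i, Finset.mem_range.mpr hi, he.symm⟩
    set E0 : Finset (Fin (n+1)) := Finset.univ.erase 0 with hE0
    have hE0card : E0.card = n := by
      rw [hE0, Finset.card_erase_of_mem (Finset.mem_univ _), Finset.card_univ,
        Fintype.card_fin]
      omega
    set g1 : Fin (n+1) → Sym2 (Fin (2*n+1) ⊕ Fin (2*n+1)) :=
      fun j => s(f (Sum.inl 0), f (Sum.inl j)) with hg1
    set g2 : Fin (n+1) → Sym2 (Fin (2*n+1) ⊕ Fin (2*n+1)) :=
      fun j => s(f (Sum.inr 0), f (Sum.inr j)) with hg2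
    have hg1inj : Set.InjOn g1 ↑E0 := fun a _ b _ h =>
      Sum.inl_injective (f.injective (Sym2.congr_right.mp h))
    have hg2inj : Set.InjOn g2 ↑E0 := fun a _ b _ h =>
      Sum.inr_injective (f.injective (Sym2.congr_right.mp h))
    set F1 := E0.image g1 with hF1
    set F2 := E0.image g2 with hF2
    have hF1card : F1.card = n := by rw [hF1, Finset.card_image_of_injOn hg1inj, hE0card]
    have hF2card : F2.card = n := by rw [hF2, Finset.card_image_of_injOn hg2inj, hE0card]
    set c : Sym2 (Fin (2*n+1) ⊕ Fin (2*n+1)) := s(f (Sum.inl 0), f (Sum.inr 0)) with hcdef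
    have hdisj : Disjoint F1 F2 := by
      rw [Finset.disjoint_left]
      intro e he1 he2
      rw [hF1, Finset.mem_image] at he1
      rw [hF2, Finset.mem_image] at he2
      obtain ⟨j, -, rfl⟩ := he1
      obtain ⟨j', -, hee⟩ := he2
      rw [hg1, hg2, Sym2.eq_iff] at hee
      rcases hee with ⟨h1, -⟩ | ⟨h1, -⟩
      · exact absurd (f.injective h1) (by simp)
      · exact absurd (f.injective h1) (by simp)
    have hcF1 : c ∉ F1 := by
      intro hcmem
      rw [hF1, Finset.mem_image] at hcmem
      obtain ⟨j, -, hee⟩ := hcmem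
      rw [hg1, hcdef] at hee
      exact absurd (f.injective (Sym2.congr_right.mp hee)) (by simp)
    have hcF2 : c ∉ F2 := by
      intro hcmem
      rw [hF2, Finset.mem_image] at hcmem
      obtain ⟨j, -, hee⟩ := hcmem
      rw [hg2, hcdef, Sym2.eq_iff] at hee
      rcases hee with ⟨h1, -⟩ | ⟨-, h2⟩
      · exact absurd (f.injective h1) (by simp)
      · exact absurd (f.injective h2) (by simp)
    have hEcard : (insert c (F1 ∪ F2)).card = 2*n+1 := by
      rw [Finset.card_insert_of_notMem (by
        rw [Finset.mem_union]
        rintro (h | h)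
        · exact hcF1 h
        · exact hcF2 h), Finset.card_union_of_disjoint hdisj, hF1card, hF2card]
      omega
    have hEsub : insert c (F1 ∪ F2) ⊆ R := by
      intro e he
      rw [Finset.mem_insert, Finset.mem_union] at he
      rcases he with rfl | he1 | he2
      · exact hmemR _ _ (ds_adj_centers n n)
      · rw [hF1, Finset.mem_image] at he1
        obtain ⟨j, hj, rfl⟩ := he1
        exact hmemR _ _ (ds_adj_left n n j (Finset.mem_erase.mp hj).1)
      · rw [hF2, Finset.mem_image] at he2
        obtain ⟨j, hj, rfl⟩ := he2
        exact hmemR _ _ (ds_adj_right n n j (Finset.mem_erase.mp hj).1)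
    have := Finset.card_le_card hEsub
    omega

end BA

/-- For every integer `n ≥ 1`, the bipartite achievement number of the balanced double
star satisfies `ba(S_{n,n}) = 2n + 1`: the least `N` for which Alice has a winning
strategy in `(S_{n,n}, K_{N,N}, +)` is `2n + 1`. -/
theorem stmt3 (n : ℕ) (hn : 1 ≤ n) :
    IsLeast {N : ℕ | AliceWins (doubleStar n n)
      (completeBipartiteGraph (Fin N) (Fin N))} (2 * n + 1) := by
  constructor
  · exact BA.upper hn
  · intro N hN
    exact BA.lower hN
end

section
/- For all integers m, n with 1 ≤ m < n, the bipartite achievement number of the double star satisfies n + 1 ≤ ba(S_{m,n}) ≤ 2n. -/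
open AchievementGame

namespace DS

open Finset

/-! ### Generic game lemmas -/

section Generic
variable {α : Type*} (σ τ : Strategy α)

lemma hist_succ (k : ℕ) : hist σ τ (k+1) = hist σ τ k ++ [move σ τ k] := rfl

lemma hist_length (k : ℕ) : (hist σ τ k).length = k := by
  induction k with
  | zero => rfl
  | succ k ih => rw [hist_succ]; simp [ih]

lemma move_mem_hist {j k : ℕ} (h : j < k) : move σ τ j ∈ hist σ τ k := by
  induction k with
  | zero => omega
  | succ k ih =>
    rw [hist_succ]
    rcases Nat.lt_succ_iff_lt_or_eq.1 h with h | h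
    · exact List.mem_append_left _ (ih h)
    · subst h; simp

lemma exists_uncolored {G : SimpleGraph α} (l : List (Sym2 α))
    (hfin : G.edgeSet.Finite) (h : l.length < G.edgeSet.ncard) :
    ∃ e ∈ G.edgeSet, e ∉ l := by
  classical
  by_contra hc
  push_neg at hc
  have hsub : G.edgeSet ⊆ ↑l.toFinset := by
    intro e he; simpa using hc e he
  have := Set.ncard_le_ncard hsub (Set.toFinite _)
  rw [Set.ncard_coe_finset] at this
  have := l.toFinset_card_le
  omega

/-- All moves in a sufficiently short history are valid edges. -/
lemma hist_valid {G : SimpleGraph α} (hσ : Strategy.Valid G σ) (hτ : Strategy.Valid G τ)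
    (hfin : G.edgeSet.Finite) {k : ℕ} (hk : k ≤ G.edgeSet.ncard) :
    ∀ e ∈ hist σ τ k, e ∈ G.edgeSet := by
  induction k with
  | zero => simp [hist]
  | succ k ih =>
    intro e he
    rw [hist_succ] at he
    rcases List.mem_append.1 he with he | he
    · exact ih (by omega) e he
    · have hex : ∃ e ∈ G.edgeSet, e ∉ hist σ τ k :=
        exists_uncolored _ hfin (by rw [hist_length]; omega)
      simp only [List.mem_singleton] at he
      subst he
      unfold move
      by_cases hpar : k % 2 = 0
      · simpa [hpar] using (hσ _ hex).1
      · simpa [hpar] using (hτ _ hex).1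

end Generic

/-! ### Copy lemmas for the double star -/

section Copy
variable {m n : ℕ}

/-- `n+1` pairwise distinct vertices, all adjacent to `Sum.inr 0` in the double star. -/
def bigNbr (m n : ℕ) (j : Fin (n+1)) : Fin (m + 1) ⊕ Fin (n + 1) :=
  if j = 0 then Sum.inl 0 else Sum.inr j

lemma bigNbr_injective : Function.Injective (bigNbr m n) := by
  intro i j hij
  unfold bigNbr at hij
  split_ifs at hij with h1 h2 h2 <;> simp_all

lemma bigNbr_ne (j : Fin (n+1)) : bigNbr m n j ≠ Sum.inr 0 := by
  unfold bigNbr; split_ifs with h <;> simp_all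

lemma bigNbr_adj (j : Fin (n+1)) : (doubleStar m n).Adj (Sum.inr 0) (bigNbr m n j) := by
  rw [doubleStar, SimpleGraph.fromRel_adj]
  constructor
  · exact fun h => bigNbr_ne j h.symm
  · unfold bigNbr
    split_ifs with h
    · exact Or.inr (Or.inr (Or.inr ⟨rfl, rfl⟩))
    · exact Or.inl (Or.inr (Or.inl ⟨rfl, j, rfl⟩))

lemma smallNbr_adj (i : Fin m) : (doubleStar m n).Adj (Sum.inl 0) (Sum.inl i.succ) := by
  rw [doubleStar, SimpleGraph.fromRel_adj]
  refine ⟨by simp [(Fin.succ_ne_zero i).symm], Or.inl (Or.inl ⟨rfl, _, rfl⟩)⟩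

/-- A set containing a copy of the double star has at least `m+n+1` elements. -/
lemma copy_ncard (hm : 1 ≤ m) {s : Set (Sym2 α)} (hfin : s.Finite)
    (h : HasCopy (doubleStar m n) s) : m + n + 1 ≤ s.ncard := by
  classical
  obtain ⟨f, hf⟩ := h
  set F : Fin (n+1) ⊕ Fin m → Sym2 α :=
    Sum.elim (fun j => s(f (Sum.inr 0), f (bigNbr m n j)))
      (fun i => s(f (Sum.inl 0), f (Sum.inl i.succ))) with hF
  have hinj : Function.Injective F := by
    have hfi := f.injective
    rintro (j | i) (j' | i') hij <;> simp only [hF, Sum.elim_inl, Sum.elim_inr, Sym2.eq_iff] at hij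
    · rcases hij with ⟨-, h2⟩ | ⟨h1, -⟩
      · exact congrArg Sum.inl (bigNbr_injective (hfi h2))
      · exact absurd (hfi h1) (fun h => bigNbr_ne j' h.symm)
    · rcases hij with ⟨h1, -⟩ | ⟨h1, -⟩ <;> exact absurd (hfi h1) (by simp)
    · rcases hij with ⟨h1, -⟩ | ⟨-, h2⟩
      · exact absurd (hfi h1) (by simp)
      · exact absurd (hfi h2) (by simp)
    · rcases hij with ⟨-, h2⟩ | ⟨h1, -⟩
      · have := hfi h2
        simp only [Sum.inl.injEq] at this
        exact congrArg Sum.inr (Fin.succ_injective _ this)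
      · exact absurd (hfi h1) (by simp [(Fin.succ_ne_zero i').symm])
  have hmem : ∀ x, F x ∈ s := by
    rintro (j | i)
    · exact hf _ _ (bigNbr_adj j)
    · exact hf _ _ (smallNbr_adj i)
  have hsub : ↑(Finset.univ.image F) ⊆ s := by
    intro e he
    simp only [coe_image, Set.mem_image, mem_coe, mem_univ] at he
    obtain ⟨x, -, rfl⟩ := he
    exact hmem x
  have := Set.ncard_le_ncard hsub hfin
  rwa [Set.ncard_coe_finset, Finset.card_image_of_injective _ hinj, Finset.card_univ,
    Fintype.card_sum, Fintype.card_fin, Fintype.card_fin, Nat.add_comm (n+1) m] at this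

/-- The red edge set is finite with at most `k` elements. -/
lemma red_ncard (σ τ : Strategy α) (k : ℕ) :
    {e : Sym2 α | ∃ i < k, e = move σ τ (2 * i + 1)}.Finite ∧
    {e : Sym2 α | ∃ i < k, e = move σ τ (2 * i + 1)}.ncard ≤ k := by
  classical
  have hset : {e : Sym2 α | ∃ i < k, e = move σ τ (2 * i + 1)} =
      ↑((Finset.range k).image (fun i => move σ τ (2 * i + 1))) := by
    ext e
    simp only [Set.mem_setOf_eq, coe_image, Set.mem_image, mem_coe, mem_range]
    constructor
    · rintro ⟨i, hi, rfl⟩; exact ⟨i, hi, rfl⟩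
    · rintro ⟨i, hi, rfl⟩; exact ⟨i, hi, rfl⟩
  rw [hset]
  refine ⟨Set.toFinite _, ?_⟩
  rw [Set.ncard_coe_finset]
  exact (Finset.card_image_le).trans (by simp)

end Copy

/-! ### Edge count of the complete bipartite graph -/

lemma cbg_ncard (p q : ℕ) :
    p * q ≤ (completeBipartiteGraph (Fin p) (Fin q)).edgeSet.ncard := by
  classical
  set F : Fin p × Fin q → Sym2 (Fin p ⊕ Fin q) := fun x => s(Sum.inl x.1, Sum.inr x.2) with hF
  have hinj : Function.Injective F := by
    rintro ⟨i, j⟩ ⟨i', j'⟩ h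
    simp only [hF, Sym2.eq_iff] at h
    rcases h with ⟨h1, h2⟩ | ⟨h1, -⟩
    · simp only [Sum.inl.injEq, Sum.inr.injEq] at h1 h2; simp [h1, h2]
    · exact absurd h1 (by simp)
  have hsub : ↑(Finset.univ.image F) ⊆ (completeBipartiteGraph (Fin p) (Fin q)).edgeSet := by
    intro e he
    simp only [Finset.coe_image, Set.mem_image, Finset.mem_coe, Finset.mem_univ] at he
    obtain ⟨x, -, rfl⟩ := he
    simp [hF, SimpleGraph.mem_edgeSet]
  have := Set.ncard_le_ncard hsub (Set.toFinite _)
  rwa [Set.ncard_coe_finset, Finset.card_image_of_injective _ hinj, Finset.card_univ,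
    Fintype.card_prod, Fintype.card_fin, Fintype.card_fin] at this

/-! ### The lower bound -/

lemma lower_bound {m n N : ℕ} (hm : 1 ≤ m)
    (hw : AliceWins (doubleStar m n) (completeBipartiteGraph (Fin N) (Fin N))) :
    n + 1 ≤ N := by
  classical
  set G := completeBipartiteGraph (Fin N) (Fin N) with hG
  obtain ⟨σ, hσ, hwin⟩ := hw
  set τ : Strategy (Fin N ⊕ Fin N) :=
    fun l => if h : ∃ e ∈ G.edgeSet, e ∉ l then h.choose else σ l with hτ
  have hτv : Strategy.Valid G τ := by
    intro l hex
    simp only [hτ, dif_pos hex]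
    exact ⟨hex.choose_spec.1, hex.choose_spec.2⟩
  obtain ⟨k, hk, hblue, -⟩ := hwin τ hτv
  -- all blue edges are edges of G
  have hbsub : {e | ∃ i ≤ k, e = move σ τ (2 * i)} ⊆ G.edgeSet := by
    rintro e ⟨i, hi, rfl⟩
    exact hist_valid σ τ hσ hτv (Set.toFinite _) hk _
      (move_mem_hist σ τ (by omega) (k := 2 * k + 1))
  obtain ⟨f, hf⟩ := hblue
  have hadj : ∀ j : Fin (n+1), G.Adj (f (Sum.inr 0)) (f (bigNbr m n j)) := by
    intro j
    exact SimpleGraph.mem_edgeSet G |>.1 (hbsub (hf _ _ (bigNbr_adj j)))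
  -- the n+1 distinct neighbours all lie on the side opposite to f (Sum.inr 0)
  have hinj2 : Function.Injective (fun j => f (bigNbr m n j)) :=
    fun i j h => bigNbr_injective (f.injective h)
  have hcard : (Finset.univ.image (fun j => f (bigNbr m n j))).card = n + 1 := by
    rw [Finset.card_image_of_injective _ hinj2, Finset.card_univ, Fintype.card_fin]
  rcases hc : f (Sum.inr 0) with x | x
  · -- center on the left: neighbours on the right
    have hsub2 : (Finset.univ.image (fun j => f (bigNbr m n j))) ⊆
        Finset.univ.image Sum.inr := by
      intro w hw
      simp only [Finset.mem_image, Finset.mem_univ, true_and] at hw ⊢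
      obtain ⟨j, rfl⟩ := hw
      have := hadj j
      rw [hc] at this
      rcases this with ⟨-, hr⟩ | ⟨hr, -⟩
      · obtain ⟨y, hy⟩ := Sum.isRight_iff.1 hr
        exact ⟨y, hy.symm⟩
      · simp at hr
    have := Finset.card_le_card hsub2
    rw [hcard] at this
    calc n + 1 ≤ (Finset.univ.image (Sum.inr : Fin N → Fin N ⊕ Fin N)).card := this
      _ ≤ Finset.univ.card * 1 := by
          rw [Nat.mul_one]; exact Finset.card_image_le
      _ = N := by simp
  · have hsub2 : (Finset.univ.image (fun j => f (bigNbr m n j))) ⊆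
        Finset.univ.image Sum.inl := by
      intro w hw
      simp only [Finset.mem_image, Finset.mem_univ, true_and] at hw ⊢
      obtain ⟨j, rfl⟩ := hw
      have := hadj j
      rw [hc] at this
      rcases this with ⟨hr, -⟩ | ⟨-, hr⟩
      · simp at hr
      · obtain ⟨y, hy⟩ := Sum.isLeft_iff.1 hr
        exact ⟨y, hy.symm⟩
    have := Finset.card_le_card hsub2
    rw [hcard] at this
    calc n + 1 ≤ (Finset.univ.image (Sum.inl : Fin N → Fin N ⊕ Fin N)).card := this
      _ ≤ Finset.univ.card * 1 := by
          rw [Nat.mul_one]; exact Finset.card_image_le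
      _ = N := by simp

/-! ### Alice's strategy for the upper bound -/

section Strategy

open scoped Classical

variable {M : ℕ} [NeZero M]

/-- The two fixed centers. -/
def ab : Sym2 (Fin M ⊕ Fin M) := s(Sum.inl 0, Sum.inr 0)

/-- Edge from the left center `a = inl 0` to right vertex `j`. -/
def ea (j : Fin M) : Sym2 (Fin M ⊕ Fin M) := s(Sum.inl 0, Sum.inr j)

/-- Edge from the right center `b = inr 0` to left vertex `i`. -/
def eb (i : Fin M) : Sym2 (Fin M ⊕ Fin M) := s(Sum.inl i, Sum.inr 0)

lemma ea_inj {j j' : Fin M} (h : ea j = ea j') : j = j' := by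
  unfold ea at h
  rw [Sym2.eq_iff] at h
  rcases h with ⟨-, h2⟩ | ⟨h1, -⟩
  · exact Sum.inr.inj h2
  · exact absurd h1 (by simp)

lemma eb_inj {i i' : Fin M} (h : eb i = eb i') : i = i' := by
  unfold eb at h
  rw [Sym2.eq_iff] at h
  rcases h with ⟨h1, -⟩ | ⟨-, h2⟩
  · exact Sum.inl.inj h1
  · exact absurd h2 (by simp)

lemma ea_ne_eb {j i : Fin M} (hj : j ≠ 0) : ea j ≠ eb i := by
  unfold ea eb
  rw [Ne, Sym2.eq_iff]
  rintro (⟨-, h2⟩ | ⟨h1, -⟩)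
  · exact hj (Sum.inr.inj h2)
  · exact absurd h1 (by simp)

/-- Game state: Alice's leaves at each center and Bob's blocked vertices at each center. -/
structure St (M : ℕ) where
  A : Finset (Fin M)
  B : Finset (Fin M)
  DA : Finset (Fin M)
  DB : Finset (Fin M)

def aIdx (e : Sym2 (Fin M ⊕ Fin M)) : Finset (Fin M) :=
  Finset.univ.filter (fun j => j ≠ 0 ∧ e = ea j)

def bIdx (e : Sym2 (Fin M ⊕ Fin M)) : Finset (Fin M) :=
  Finset.univ.filter (fun i => i ≠ 0 ∧ e = eb i)

def addA (e : Sym2 (Fin M ⊕ Fin M)) (s : St M) : St M :=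
  ⟨s.A ∪ aIdx e, s.B ∪ bIdx e, s.DA, s.DB⟩

def addD (e : Sym2 (Fin M ⊕ Fin M)) (s : St M) : St M :=
  ⟨s.A, s.B, s.DA ∪ aIdx e, s.DB ∪ bIdx e⟩

def swapSt (s : St M) : St M := ⟨s.DA, s.DB, s.A, s.B⟩

/-- Parse a history (earliest move first, Alice first, alternating) into a state. -/
def st : List (Sym2 (Fin M ⊕ Fin M)) → St M
  | [] => ⟨∅, ∅, ∅, ∅⟩
  | e :: r => addA e (swapSt (st r))

lemma addA_addA (x e : Sym2 (Fin M ⊕ Fin M)) (s : St M) :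
    addA x (addA e s) = addA e (addA x s) := by
  simp only [addA]
  rw [Finset.union_right_comm s.A, Finset.union_right_comm s.B]

lemma st_append (l : List (Sym2 (Fin M ⊕ Fin M))) (e : Sym2 (Fin M ⊕ Fin M)) :
    st (l ++ [e]) = if l.length % 2 = 0 then addA e (st l) else addD e (st l) := by
  induction l with
  | nil => simp [st]; rfl
  | cons x l ih =>
    show addA x (swapSt (st (l ++ [e]))) = _
    rw [ih]
    rcases Nat.even_or_odd l.length with h | h
    · have h0 : l.length % 2 = 0 := Nat.even_iff.1 h
      have h1 : (x :: l).length % 2 = 1 := by simp [List.length_cons, Nat.succ_mod_two_eq_one_iff, h0]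
      rw [if_pos h0, if_neg (by omega)]
      rfl
    · have h0 : l.length % 2 = 1 := Nat.odd_iff.1 h
      have h1 : (x :: l).length % 2 = 0 := by simp [List.length_cons, Nat.succ_mod_two_eq_zero_iff, h0]
      rw [if_neg (by omega), if_pos h1]
      show addA x (addA e (swapSt (st l))) = addA e (addA x (swapSt (st l)))
      exact addA_addA x e _

lemma mem_stA (l : List (Sym2 (Fin M ⊕ Fin M))) (j : Fin M) :
    (j ∈ (st l).A ∨ j ∈ (st l).DA) ↔ (j ≠ 0 ∧ ea j ∈ l) := by
  induction l with
  | nil => simp [st]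
  | cons x l ih =>
    show (j ∈ (st l).DA ∪ aIdx x ∨ j ∈ (st l).A) ↔ _
    simp only [Finset.mem_union, aIdx, Finset.mem_filter, Finset.mem_univ, true_and,
      List.mem_cons]
    constructor
    · rintro ((h | ⟨hj, rfl⟩) | h)
      · exact ⟨(ih.1 (Or.inr h)).1, Or.inr (ih.1 (Or.inr h)).2⟩
      · exact ⟨hj, Or.inl rfl⟩
      · exact ⟨(ih.1 (Or.inl h)).1, Or.inr (ih.1 (Or.inl h)).2⟩
    · rintro ⟨hj, (h | h)⟩
      · exact Or.inl (Or.inr ⟨hj, h.symm⟩)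
      · rcases ih.2 ⟨hj, h⟩ with h' | h'
        · exact Or.inr h'
        · exact Or.inl (Or.inl h')

lemma mem_stB (l : List (Sym2 (Fin M ⊕ Fin M))) (i : Fin M) :
    (i ∈ (st l).B ∨ i ∈ (st l).DB) ↔ (i ≠ 0 ∧ eb i ∈ l) := by
  induction l with
  | nil => simp [st]
  | cons x l ih =>
    show (i ∈ (st l).DB ∪ bIdx x ∨ i ∈ (st l).B) ↔ _
    simp only [Finset.mem_union, bIdx, Finset.mem_filter, Finset.mem_univ, true_and,
      List.mem_cons]
    constructor
    · rintro ((h | ⟨hj, rfl⟩) | h)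
      · exact ⟨(ih.1 (Or.inr h)).1, Or.inr (ih.1 (Or.inr h)).2⟩
      · exact ⟨hj, Or.inl rfl⟩
      · exact ⟨(ih.1 (Or.inl h)).1, Or.inr (ih.1 (Or.inl h)).2⟩
    · rintro ⟨hj, (h | h)⟩
      · exact Or.inl (Or.inr ⟨hj, h.symm⟩)
      · rcases ih.2 ⟨hj, h⟩ with h' | h'
        · exact Or.inr h'
        · exact Or.inl (Or.inl h')

lemma aIdx_ea {j : Fin M} (hj : j ≠ 0) : aIdx (ea j) = {j} := by
  ext j'
  simp only [aIdx, Finset.mem_filter, Finset.mem_univ, true_and, Finset.mem_singleton]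
  constructor
  · rintro ⟨-, h⟩; exact (ea_inj h).symm
  · rintro rfl; exact ⟨hj, rfl⟩

lemma bIdx_ea {j : Fin M} (hj : j ≠ 0) : bIdx (ea j) = ∅ := by
  ext i
  simp only [bIdx, Finset.mem_filter, Finset.mem_univ, true_and, Finset.notMem_empty,
    iff_false, not_and]
  intro hi h
  exact ea_ne_eb hj h

lemma bIdx_eb {i : Fin M} (hi : i ≠ 0) : bIdx (eb i) = {i} := by
  ext i'
  simp only [bIdx, Finset.mem_filter, Finset.mem_univ, true_and, Finset.mem_singleton]
  constructor
  · rintro ⟨-, h⟩; exact (eb_inj h).symm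
  · rintro rfl; exact ⟨hi, rfl⟩

lemma aIdx_eb {i : Fin M} (hi : i ≠ 0) : aIdx (eb i) = ∅ := by
  ext j
  simp only [aIdx, Finset.mem_filter, Finset.mem_univ, true_and, Finset.notMem_empty,
    iff_false, not_and]
  intro hj h
  exact ea_ne_eb hj h.symm

lemma idx_card (e : Sym2 (Fin M ⊕ Fin M)) : (aIdx e).card + (bIdx e).card ≤ 1 := by
  by_cases h : (aIdx e).Nonempty
  · obtain ⟨j, hj⟩ := h
    simp only [aIdx, Finset.mem_filter, Finset.mem_univ, true_and] at hj
    have hb : bIdx e = ∅ := by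
      ext i
      simp only [bIdx, Finset.mem_filter, Finset.mem_univ, true_and, Finset.notMem_empty,
        iff_false, not_and]
      intro hi he
      exact ea_ne_eb hj.1 (hj.2.symm.trans he)
    have ha : (aIdx e).card ≤ 1 := by
      apply Finset.card_le_one.2
      intro x hx y hy
      simp only [aIdx, Finset.mem_filter, Finset.mem_univ, true_and] at hx hy
      exact ea_inj (hx.2 ▸ hy.2)
    simp [hb]; omega
  · rw [Finset.not_nonempty_iff_eq_empty] at h
    have hb : (bIdx e).card ≤ 1 := by
      apply Finset.card_le_one.2
      intro x hx y hy
      simp only [bIdx, Finset.mem_filter, Finset.mem_univ, true_and] at hx hy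
      exact eb_inj (hx.2 ▸ hy.2)
    simp [h]; omega

/-- Fresh right vertices available for a new leaf at the left center. -/
def freshA (l : List (Sym2 (Fin M ⊕ Fin M))) : Finset (Fin M) :=
  Finset.univ.filter (fun j => j ≠ 0 ∧ ea j ∉ l)

def freshB (l : List (Sym2 (Fin M ⊕ Fin M))) : Finset (Fin M) :=
  Finset.univ.filter (fun i => i ≠ 0 ∧ eb i ∉ l)

lemma freshA_nonempty (l : List (Sym2 (Fin M ⊕ Fin M)))
    (h : (st l).A.card + (st l).DA.card + 2 ≤ M) : (freshA l).Nonempty := by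
  by_contra hc
  rw [Finset.not_nonempty_iff_eq_empty] at hc
  have hsub : Finset.univ ⊆ insert 0 ((st l).A ∪ (st l).DA) := by
    intro j _
    by_cases hj : j = 0
    · simp [hj]
    · have hjl : ea j ∈ l := by
        by_contra hjl
        have : j ∈ freshA l := by
          simp only [freshA, Finset.mem_filter, Finset.mem_univ, true_and]
          exact ⟨hj, hjl⟩
        simp [hc] at this
      have := (mem_stA l j).2 ⟨hj, hjl⟩
      rcases this with h' | h'
      · exact Finset.mem_insert_of_mem (Finset.mem_union_left _ h')
      · exact Finset.mem_insert_of_mem (Finset.mem_union_right _ h')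
  have h1 := Finset.card_le_card hsub
  have h2 := Finset.card_insert_le (0 : Fin M) ((st l).A ∪ (st l).DA)
  have h3 := Finset.card_union_le (st l).A (st l).DA
  rw [Finset.card_univ, Fintype.card_fin] at h1
  omega

lemma freshB_nonempty (l : List (Sym2 (Fin M ⊕ Fin M)))
    (h : (st l).B.card + (st l).DB.card + 2 ≤ M) : (freshB l).Nonempty := by
  by_contra hc
  rw [Finset.not_nonempty_iff_eq_empty] at hc
  have hsub : Finset.univ ⊆ insert 0 ((st l).B ∪ (st l).DB) := by
    intro j _
    by_cases hj : j = 0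
    · simp [hj]
    · have hjl : eb j ∈ l := by
        by_contra hjl
        have : j ∈ freshB l := by
          simp only [freshB, Finset.mem_filter, Finset.mem_univ, true_and]
          exact ⟨hj, hjl⟩
        simp [hc] at this
      have := (mem_stB l j).2 ⟨hj, hjl⟩
      rcases this with h' | h'
      · exact Finset.mem_insert_of_mem (Finset.mem_union_left _ h')
      · exact Finset.mem_insert_of_mem (Finset.mem_union_right _ h')
  have h1 := Finset.card_le_card hsub
  have h2 := Finset.card_insert_le (0 : Fin M) ((st l).B ∪ (st l).DB)
  have h3 := Finset.card_union_le (st l).B (st l).DB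
  rw [Finset.card_univ, Fintype.card_fin] at h1
  omega

/-- Which center Alice plays at: `true` = the left center `a`. -/
def pick (m : ℕ) (s : St M) : Bool :=
  if m ≤ s.A.card ∧ m ≤ s.B.card then
    (if m < s.A.card then true else if m < s.B.card then false else decide (s.DA.card ≤ m))
  else if s.A.card < m ∧ s.A.card < s.DA.card then true
  else if s.B.card < m ∧ s.B.card < s.DB.card then false
  else decide (s.A.card < m)

noncomputable def fallback (l : List (Sym2 (Fin M ⊕ Fin M))) : Sym2 (Fin M ⊕ Fin M) :=
  if h : (Finset.univ.filter (fun e => e ∈ (completeBipartiteGraph (Fin M) (Fin M)).edgeSet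
      ∧ e ∉ l)).Nonempty then h.choose else ab

/-- Alice's strategy. -/
noncomputable def alice (m : ℕ) : Strategy (Fin M ⊕ Fin M) := fun l =>
  if ab ∉ l then ab
  else if pick m (st l) then
    (if h : (freshA l).Nonempty then ea h.choose else fallback l)
  else
    (if h : (freshB l).Nonempty then eb h.choose else fallback l)

lemma ea_mem_edgeSet (j : Fin M) : ea j ∈ (completeBipartiteGraph (Fin M) (Fin M)).edgeSet := by
  rw [ea, SimpleGraph.mem_edgeSet]
  exact Or.inl ⟨rfl, rfl⟩

lemma eb_mem_edgeSet (i : Fin M) : eb i ∈ (completeBipartiteGraph (Fin M) (Fin M)).edgeSet := by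
  rw [eb, SimpleGraph.mem_edgeSet]
  exact Or.inl ⟨rfl, rfl⟩

lemma alice_valid (m : ℕ) :
    Strategy.Valid (completeBipartiteGraph (Fin M) (Fin M)) (alice (M := M) m) := by
  intro l hex
  have hfb : fallback (M := M) l ∈ (completeBipartiteGraph (Fin M) (Fin M)).edgeSet
      ∧ fallback (M := M) l ∉ l := by
    unfold fallback
    have hne : (Finset.univ.filter (fun e => e ∈ (completeBipartiteGraph (Fin M) (Fin M)).edgeSet
        ∧ e ∉ l)).Nonempty := by
      obtain ⟨e, he1, he2⟩ := hex
      exact ⟨e, by simp [he1, he2]⟩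
    rw [dif_pos hne]
    have := hne.choose_spec
    simp only [Finset.mem_filter, Finset.mem_univ, true_and] at this
    exact this
  have halice : alice (M := M) m l = (if ab ∉ l then ab else if pick m (st l) then
      (if h : (freshA l).Nonempty then ea h.choose else fallback l)
      else (if h : (freshB l).Nonempty then eb h.choose else fallback l)) := rfl
  rw [halice]
  split_ifs with h1 h2 h3 h4
  · have := h3.choose_spec
    simp only [freshA, Finset.mem_filter, Finset.mem_univ, true_and] at this
    exact ⟨ea_mem_edgeSet _, this.2⟩
  · exact hfb
  · have := h4.choose_spec
    simp only [freshB, Finset.mem_filter, Finset.mem_univ, true_and] at this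
    exact ⟨eb_mem_edgeSet _, this.2⟩
  · exact hfb
  · exact ⟨by rw [show (ab : Sym2 (Fin M ⊕ Fin M)) = ea 0 from rfl]; exact ea_mem_edgeSet 0, h1⟩

end Strategy

section Invariant

open scoped Classical

variable {M : ℕ} [NeZero M]

lemma aIdx_ab : aIdx (M := M) ab = ∅ := by
  ext j
  simp only [aIdx, Finset.mem_filter, Finset.mem_univ, true_and, Finset.notMem_empty,
    iff_false, not_and]
  intro hj h
  exact hj (ea_inj (M := M) (j := 0) (j' := j) h).symm

lemma bIdx_ab : bIdx (M := M) ab = ∅ := by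
  ext i
  simp only [bIdx, Finset.mem_filter, Finset.mem_univ, true_and, Finset.notMem_empty,
    iff_false, not_and]
  intro hi h
  exact hi (eb_inj (M := M) (i := 0) (i' := i) h).symm

lemma alice_nil (m : ℕ) : alice (M := M) m [] = ab := by
  have halice : alice (M := M) m [] = (if ab ∉ ([] : List (Sym2 (Fin M ⊕ Fin M))) then ab
      else if pick m (st []) then
      (if h : (freshA ([] : List (Sym2 (Fin M ⊕ Fin M)))).Nonempty then ea h.choose
        else fallback [])
      else (if h : (freshB ([] : List (Sym2 (Fin M ⊕ Fin M)))).Nonempty then eb h.choose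
        else fallback [])) := rfl
  exact halice.trans (if_pos (by simp))

lemma playA_spec {m : ℕ} {l : List (Sym2 (Fin M ⊕ Fin M))} (hab : ab ∈ l)
    (hlen : l.length % 2 = 0) (hp : pick m (st l) = true)
    (hcap : (st l).A.card + (st l).DA.card + 2 ≤ M) (e : Sym2 (Fin M ⊕ Fin M)) :
    (st (l ++ [alice (M := M) m l] ++ [e])).A.card = (st l).A.card + 1 ∧
    (st (l ++ [alice (M := M) m l] ++ [e])).B.card = (st l).B.card ∧
    (st (l ++ [alice (M := M) m l] ++ [e])).DA.card ≤ (st l).DA.card + 1 ∧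
    (st (l ++ [alice (M := M) m l] ++ [e])).DB.card ≤ (st l).DB.card + 1 ∧
    (st (l ++ [alice (M := M) m l] ++ [e])).DA.card + (st (l ++ [alice (M := M) m l] ++ [e])).DB.card
      ≤ (st l).DA.card + (st l).DB.card + 1 := by
  have hne : (freshA l).Nonempty := freshA_nonempty l hcap
  have hmove : alice (M := M) m l = ea hne.choose := by
    have halice : alice (M := M) m l = (if ab ∉ l then ab else if pick m (st l) then
        (if h : (freshA l).Nonempty then ea h.choose else fallback l)
        else (if h : (freshB l).Nonempty then eb h.choose else fallback l)) := rfl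
    rw [halice, if_neg (by simpa using hab), if_pos hp, dif_pos hne]
  have hspec := hne.choose_spec
  simp only [freshA, Finset.mem_filter, Finset.mem_univ, true_and] at hspec
  obtain ⟨hj0, hjl⟩ := hspec
  have h1 : st (l ++ [alice (M := M) m l]) = addA (ea hne.choose) (st l) := by
    rw [hmove, st_append, if_pos hlen]
  have hlen1 : (l ++ [alice (M := M) m l]).length % 2 = 1 := by
    simp [List.length_append]; omega
  have h2 : st (l ++ [alice (M := M) m l] ++ [e]) =
      addD e (addA (ea hne.choose) (st l)) := by
    rw [st_append, if_neg (by omega), h1]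
  have hjA : hne.choose ∉ (st l).A := by
    intro hmem
    exact hjl ((mem_stA l hne.choose).1 (Or.inl hmem)).2
  have hAcard : ((st l).A ∪ aIdx (ea hne.choose)).card = (st l).A.card + 1 := by
    rw [aIdx_ea (j := hne.choose) hj0, Finset.card_union_of_disjoint (Finset.disjoint_singleton_right.2 hjA)]
    simp
  have hBcard : ((st l).B ∪ bIdx (ea hne.choose)) = (st l).B := by
    rw [bIdx_ea (j := hne.choose) hj0, Finset.union_empty]
  have hidx := idx_card (M := M) e
  have hDA := Finset.card_union_le (st l).DA (aIdx e)
  have hDB := Finset.card_union_le (st l).DB (bIdx e)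
  rw [h2]
  refine ⟨hAcard, by rw [show (addD e (addA (ea hne.choose) (st l))).B =
    (st l).B ∪ bIdx (ea hne.choose) from rfl, hBcard], ?_, ?_, ?_⟩ <;>
    simp only [addD, addA] <;> omega

lemma playB_spec {m : ℕ} {l : List (Sym2 (Fin M ⊕ Fin M))} (hab : ab ∈ l)
    (hlen : l.length % 2 = 0) (hp : pick m (st l) = false)
    (hcap : (st l).B.card + (st l).DB.card + 2 ≤ M) (e : Sym2 (Fin M ⊕ Fin M)) :
    (st (l ++ [alice (M := M) m l] ++ [e])).B.card = (st l).B.card + 1 ∧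
    (st (l ++ [alice (M := M) m l] ++ [e])).A.card = (st l).A.card ∧
    (st (l ++ [alice (M := M) m l] ++ [e])).DA.card ≤ (st l).DA.card + 1 ∧
    (st (l ++ [alice (M := M) m l] ++ [e])).DB.card ≤ (st l).DB.card + 1 ∧
    (st (l ++ [alice (M := M) m l] ++ [e])).DA.card + (st (l ++ [alice (M := M) m l] ++ [e])).DB.card
      ≤ (st l).DA.card + (st l).DB.card + 1 := by
  have hne : (freshB l).Nonempty := freshB_nonempty l hcap
  have hmove : alice (M := M) m l = eb hne.choose := by
    have halice : alice (M := M) m l = (if ab ∉ l then ab else if pick m (st l) then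
        (if h : (freshA l).Nonempty then ea h.choose else fallback l)
        else (if h : (freshB l).Nonempty then eb h.choose else fallback l)) := rfl
    rw [halice, if_neg (by simpa using hab), if_neg (by simp [hp]), dif_pos hne]
  have hspec := hne.choose_spec
  simp only [freshB, Finset.mem_filter, Finset.mem_univ, true_and] at hspec
  obtain ⟨hj0, hjl⟩ := hspec
  have h1 : st (l ++ [alice (M := M) m l]) = addA (eb hne.choose) (st l) := by
    rw [hmove, st_append, if_pos hlen]
  have h2 : st (l ++ [alice (M := M) m l] ++ [e]) =
      addD e (addA (eb hne.choose) (st l)) := by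
    rw [st_append, if_neg (by simp [List.length_append]; omega), h1]
  have hjB : hne.choose ∉ (st l).B := by
    intro hmem
    exact hjl ((mem_stB l hne.choose).1 (Or.inl hmem)).2
  have hBcard : ((st l).B ∪ bIdx (eb hne.choose)).card = (st l).B.card + 1 := by
    rw [bIdx_eb (i := hne.choose) hj0, Finset.card_union_of_disjoint (Finset.disjoint_singleton_right.2 hjB)]
    simp
  have hAcard : ((st l).A ∪ aIdx (eb hne.choose)) = (st l).A := by
    rw [aIdx_eb (i := hne.choose) hj0, Finset.union_empty]
  have hidx := idx_card (M := M) e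
  have hDA := Finset.card_union_le (st l).DA (aIdx e)
  have hDB := Finset.card_union_le (st l).DB (bIdx e)
  rw [h2]
  refine ⟨hBcard, by rw [show (addD e (addA (eb hne.choose) (st l))).A =
    (st l).A ∪ aIdx (eb hne.choose) from rfl, hAcard], ?_, ?_, ?_⟩ <;>
    simp only [addD, addA] <;> omega

/-- The invariant before Alice's move `t` (`1 ≤ t`): the state of the history of the
first `2t` moves. -/
def Inv (m t : ℕ) (s : St M) : Prop :=
  s.A.card + s.B.card + 1 = t ∧
  s.DA.card + s.DB.card ≤ t ∧
  (t ≤ 2*m →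
    s.A.card ≤ m ∧ s.B.card ≤ m ∧
    (s.A.card < m → s.DA.card ≤ s.A.card + 1) ∧
    (s.B.card < m → s.DB.card ≤ s.B.card + 1) ∧
    (s.A.card < m → s.B.card < m → s.DA.card + s.DB.card ≤ s.A.card + s.B.card + 1)) ∧
  (2*m + 1 ≤ t → (s.A.card = m ∨ s.B.card = m)) ∧
  (2*m + 2 ≤ t →
    (m < s.A.card → s.DA.card ≤ s.A.card) ∧ (m < s.B.card → s.DB.card ≤ s.B.card))

lemma step {m n : ℕ} (hm : 1 ≤ m) (hmn : m < n) (hM : M = 2*n)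
    {t : ℕ} (ht1 : 1 ≤ t) (ht : t ≤ m + n)
    {l : List (Sym2 (Fin M ⊕ Fin M))} (hlen : l.length = 2 * t) (hab : ab ∈ l)
    (hinv : Inv m t (st l)) (e : Sym2 (Fin M ⊕ Fin M)) :
    Inv m (t+1) (st (l ++ [alice (M := M) m l] ++ [e])) := by
  obtain ⟨hbase, hbob, hph1, hph2a, hph2c⟩ := hinv
  have hlen2 : l.length % 2 = 0 := by omega
  by_cases hp : pick m (st l) = true
  · have hp0 := hp
    unfold pick at hp0
    split_ifs at hp0 with h1 h2 h3 h4 h5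
    · -- committed to a (m < A)
      have hcap : (st l).A.card + (st l).DA.card + 2 ≤ M := by omega
      obtain ⟨hA, hB, hDA, hDB, hDsum⟩ := playA_spec hab hlen2 hp hcap e
      unfold Inv; omega
    · -- tie, DA ≤ m
      have hda := of_decide_eq_true hp0
      have hcap : (st l).A.card + (st l).DA.card + 2 ≤ M := by omega
      obtain ⟨hA, hB, hDA, hDB, hDsum⟩ := playA_spec hab hlen2 hp hcap e
      unfold Inv; omega
    · -- phase 1, excess at a
      have hcap : (st l).A.card + (st l).DA.card + 2 ≤ M := by omega
      obtain ⟨hA, hB, hDA, hDB, hDsum⟩ := playA_spec hab hlen2 hp hcap e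
      unfold Inv; omega
    · -- phase 1, default, A < m
      have ha := of_decide_eq_true hp0
      have hcap : (st l).A.card + (st l).DA.card + 2 ≤ M := by omega
      obtain ⟨hA, hB, hDA, hDB, hDsum⟩ := playA_spec hab hlen2 hp hcap e
      unfold Inv; omega
  · have hpf : pick m (st l) = false := by
      simpa using hp
    have hp0 := hpf
    unfold pick at hp0
    split_ifs at hp0 with h1 h2 h3 h4 h5
    · -- committed to b (m < B)
      have hcap : (st l).B.card + (st l).DB.card + 2 ≤ M := by omega
      obtain ⟨hB, hA, hDA, hDB, hDsum⟩ := playB_spec hab hlen2 hpf hcap e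
      unfold Inv; omega
    · -- tie, DA > m
      have hda := of_decide_eq_false hp0
      have hcap : (st l).B.card + (st l).DB.card + 2 ≤ M := by omega
      obtain ⟨hB, hA, hDA, hDB, hDsum⟩ := playB_spec hab hlen2 hpf hcap e
      unfold Inv; omega
    · -- phase 1, excess at b
      have hcap : (st l).B.card + (st l).DB.card + 2 ≤ M := by omega
      obtain ⟨hB, hA, hDA, hDB, hDsum⟩ := playB_spec hab hlen2 hpf hcap e
      unfold Inv; omega
    · -- phase 1, default, A ≥ m so B < m
      have ha := of_decide_eq_false hp0
      have hcap : (st l).B.card + (st l).DB.card + 2 ≤ M := by omega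
      obtain ⟨hB, hA, hDA, hDB, hDsum⟩ := playB_spec hab hlen2 hpf hcap e
      unfold Inv; omega

lemma inv_hist {m n : ℕ} (hm : 1 ≤ m) (hmn : m < n) (hM : M = 2*n)
    (τ : Strategy (Fin M ⊕ Fin M)) :
    ∀ t, 1 ≤ t → t ≤ m + n + 1 →
      Inv m t (st (hist (alice (M := M) m) τ (2*t))) ∧
        ab ∈ hist (alice (M := M) m) τ (2*t) := by
  intro t
  induction t with
  | zero => omega
  | succ t ih =>
    intro h1 h2
    by_cases ht0 : t = 0
    · subst ht0
      have hm0 : move (alice (M := M) m) τ 0 = ab := by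
        unfold move
        rw [if_pos (by norm_num)]
        exact alice_nil m
      have hh : hist (alice (M := M) m) τ 2 =
          ([] ++ [move (alice (M := M) m) τ 0]) ++ [move (alice (M := M) m) τ 1] := by
        have e2 : (2:ℕ) = 0+1+1 := rfl
        rw [e2, hist_succ, hist_succ]
        rfl
      rw [hh, hm0]
      have hst1 : st (([] : List (Sym2 (Fin M ⊕ Fin M))) ++ [ab]) = addA ab (st []) := by
        rw [st_append]; simp
      have hst2 : st ((([] : List (Sym2 (Fin M ⊕ Fin M))) ++ [ab]) ++
          [move (alice (M := M) m) τ 1]) = addD (move (alice (M := M) m) τ 1)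
          (addA ab (st [])) := by
        rw [st_append, hst1]
        simp [List.length_append]
      rw [hst2]
      have hidx := idx_card (M := M) (move (alice (M := M) m) τ 1)
      constructor
      · unfold Inv
        simp only [addD, addA, st, aIdx_ab, bIdx_ab, Finset.union_empty, Finset.empty_union,
          Finset.card_empty]
        refine ⟨trivial, ?_, ?_, ?_, ?_⟩ <;> omega
      · simp
    · have h1' : 1 ≤ t := by omega
      obtain ⟨hinv, hab⟩ := ih h1' (by omega)
      have hh : hist (alice (M := M) m) τ (2*(t+1)) =
          (hist (alice (M := M) m) τ (2*t) ++ [move (alice (M := M) m) τ (2*t)]) ++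
            [move (alice (M := M) m) τ (2*t+1)] := by
        have e1 : 2*(t+1) = (2*t+1)+1 := by omega
        rw [e1, hist_succ, hist_succ]
      have hmv : move (alice (M := M) m) τ (2*t) = alice (M := M) m
          (hist (alice (M := M) m) τ (2*t)) := by
        unfold move
        simp [Nat.mul_mod_right]
      rw [hh, hmv]
      refine ⟨step hm hmn hM h1' (by omega) (hist_length _ _ _) hab hinv _, ?_⟩
      exact List.mem_append_left _ (List.mem_append_left _ hab)

/-- Every recorded Alice edge at the left center is a blue move. -/
lemma stA_blue {m : ℕ} (τ : Strategy (Fin M ⊕ Fin M)) :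
    ∀ N (j : Fin M), j ∈ (st (hist (alice (M := M) m) τ N)).A →
      ∃ i, 2*i < N ∧ move (alice (M := M) m) τ (2*i) = ea j := by
  intro N
  induction N with
  | zero => intro j hj; simp [hist, st] at hj
  | succ N ihN =>
    intro j hj
    rw [hist_succ, st_append, hist_length] at hj
    by_cases hN : N % 2 = 0
    · rw [if_pos hN] at hj
      rcases Finset.mem_union.1 hj with hj | hj
      · obtain ⟨i, hi, hmv⟩ := ihN j hj
        exact ⟨i, by omega, hmv⟩
      · simp only [aIdx, Finset.mem_filter, Finset.mem_univ, true_and] at hj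
        refine ⟨N/2, by omega, ?_⟩
        rw [show 2*(N/2) = N by omega]
        exact hj.2
    · rw [if_neg hN] at hj
      obtain ⟨i, hi, hmv⟩ := ihN j hj
      exact ⟨i, by omega, hmv⟩

lemma stB_blue {m : ℕ} (τ : Strategy (Fin M ⊕ Fin M)) :
    ∀ N (i : Fin M), i ∈ (st (hist (alice (M := M) m) τ N)).B →
      ∃ k, 2*k < N ∧ move (alice (M := M) m) τ (2*k) = eb i := by
  intro N
  induction N with
  | zero => intro i hi; simp [hist, st] at hi
  | succ N ihN =>
    intro i hi
    rw [hist_succ, st_append, hist_length] at hi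
    by_cases hN : N % 2 = 0
    · rw [if_pos hN] at hi
      rcases Finset.mem_union.1 hi with hi | hi
      · obtain ⟨k, hk, hmv⟩ := ihN i hi
        exact ⟨k, by omega, hmv⟩
      · simp only [bIdx, Finset.mem_filter, Finset.mem_univ, true_and] at hi
        refine ⟨N/2, by omega, ?_⟩
        rw [show 2*(N/2) = N by omega]
        exact hi.2
    · rw [if_neg hN] at hi
      obtain ⟨k, hk, hmv⟩ := ihN i hi
      exact ⟨k, by omega, hmv⟩

lemma st_zero_A (l : List (Sym2 (Fin M ⊕ Fin M))) : (0 : Fin M) ∉ (st l).A := by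
  intro h
  exact ((mem_stA l 0).1 (Or.inl h)).1 rfl

lemma st_zero_B (l : List (Sym2 (Fin M ⊕ Fin M))) : (0 : Fin M) ∉ (st l).B := by
  intro h
  exact ((mem_stB l 0).1 (Or.inl h)).1 rfl

end Invariant

section Assemble

open scoped Classical

lemma copy_build {γ : Type*} {m n : ℕ}
    (u v : γ) (x : Fin n → γ) (y : Fin m → γ) (s : Set (Sym2 γ))
    (huv : u ≠ v)
    (hxinj : Function.Injective x) (hyinj : Function.Injective y)
    (hxy : ∀ i j, x i ≠ y j)
    (hux : ∀ i, u ≠ x i) (hvx : ∀ i, v ≠ x i)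
    (huy : ∀ j, u ≠ y j) (hvy : ∀ j, v ≠ y j)
    (hs0 : s(u, v) ∈ s) (hsx : ∀ i, s(v, x i) ∈ s) (hsy : ∀ j, s(u, y j) ∈ s) :
    HasCopy (doubleStar m n) s := by
  classical
  set f : Fin (m+1) ⊕ Fin (n+1) → γ :=
    Sum.elim (fun i => if h : i = 0 then u else y (i.pred h))
      (fun j => if h : j = 0 then v else x (j.pred h)) with hf
  have hinj : Function.Injective f := by
    rintro (i | j) (i' | j') h <;> simp only [hf, Sum.elim_inl, Sum.elim_inr] at h
    · congr 1
      by_cases h1 : i = 0 <;> by_cases h2 : i' = 0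
      · rw [h1, h2]
      · rw [dif_pos h1, dif_neg h2] at h; exact absurd h (huy _)
      · rw [dif_neg h1, dif_pos h2] at h; exact absurd h.symm (huy _)
      · rw [dif_neg h1, dif_neg h2] at h
        exact Fin.pred_inj.1 (hyinj h)
    · exfalso
      by_cases h1 : i = 0 <;> by_cases h2 : j' = 0
      · rw [dif_pos h1, dif_pos h2] at h; exact huv h
      · rw [dif_pos h1, dif_neg h2] at h; exact hux _ h
      · rw [dif_neg h1, dif_pos h2] at h; exact hvy _ h.symm
      · rw [dif_neg h1, dif_neg h2] at h; exact hxy _ _ h.symm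
    · exfalso
      by_cases h1 : j = 0 <;> by_cases h2 : i' = 0
      · rw [dif_pos h1, dif_pos h2] at h; exact huv h.symm
      · rw [dif_pos h1, dif_neg h2] at h; exact hvy _ h
      · rw [dif_neg h1, dif_pos h2] at h; exact hux _ h.symm
      · rw [dif_neg h1, dif_neg h2] at h; exact hxy _ _ h
    · congr 1
      by_cases h1 : j = 0 <;> by_cases h2 : j' = 0
      · rw [h1, h2]
      · rw [dif_pos h1, dif_neg h2] at h; exact absurd h (hvx _)
      · rw [dif_neg h1, dif_pos h2] at h; exact absurd h.symm (hvx _)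
      · rw [dif_neg h1, dif_neg h2] at h
        exact Fin.pred_inj.1 (hxinj h)
  refine ⟨⟨f, hinj⟩, ?_⟩
  have main : ∀ p q : Fin (m+1) ⊕ Fin (n+1), p ≠ q →
      ((p = Sum.inl 0 ∧ ∃ i, q = Sum.inl i) ∨ (p = Sum.inr 0 ∧ ∃ j, q = Sum.inr j) ∨
        (p = Sum.inl 0 ∧ q = Sum.inr 0)) → s(f p, f q) ∈ s := by
    rintro p q hne (⟨rfl, i, rfl⟩ | ⟨rfl, j, rfl⟩ | ⟨rfl, rfl⟩)
    · have hi : i ≠ 0 := by rintro rfl; exact hne rfl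
      simp only [hf, Sum.elim_inl, dif_pos rfl, dif_neg hi]
      exact hsy _
    · have hj : j ≠ 0 := by rintro rfl; exact hne rfl
      simp only [hf, Sum.elim_inr, dif_pos rfl, dif_neg hj]
      exact hsx _
    · simp only [hf, Sum.elim_inl, Sum.elim_inr, dif_pos rfl]
      exact hs0
  intro p q hadj
  rw [doubleStar, SimpleGraph.fromRel_adj] at hadj
  obtain ⟨hne, hrel⟩ := hadj
  rcases hrel with h | h
  · exact main p q hne h
  · rw [Sym2.eq_swap]; exact main q p (Ne.symm hne) h

lemma upper_bound {m n : ℕ} (hm : 1 ≤ m) (hmn : m < n) :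
    AliceWins (doubleStar m n) (completeBipartiteGraph (Fin (2*n)) (Fin (2*n))) := by
  classical
  haveI : NeZero (2*n) := ⟨by omega⟩
  refine ⟨alice (M := 2*n) m, alice_valid m, ?_⟩
  intro τ hτ
  refine ⟨m + n, ?_, ?_, ?_⟩
  · have h1 := cbg_ncard (2*n) (2*n)
    have h2 : n ≤ n * n := Nat.le_mul_of_pos_left n (by omega)
    have h3 : 2*n*(2*n) = 4*(n*n) := by ring
    omega
  · -- blue copy
    obtain ⟨hinv, -⟩ := inv_hist hm hmn rfl τ (m+n+1) (by omega) (le_refl _)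
    set L := hist (alice (M := 2*n) m) τ (2*(m+n+1)) with hL
    obtain ⟨hbase, -, -, hph2a, -⟩ := hinv
    set blue := {e | ∃ i ≤ m + n, e = move (alice (M := 2*n) m) τ (2 * i)} with hblue
    have habblue : (ab : Sym2 (Fin (2*n) ⊕ Fin (2*n))) ∈ blue := by
      refine ⟨0, by omega, ?_⟩
      have hm0 : move (alice (M := 2*n) m) τ 0 = ab := by
        unfold move
        rw [if_pos (by norm_num)]
        exact alice_nil m
      rw [show 2*0 = 0 by omega, hm0]
    have hAblue : ∀ j ∈ (st L).A, ea j ∈ blue := by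
      intro j hj
      obtain ⟨i, hi, hmv⟩ := stA_blue τ (2*(m+n+1)) j hj
      exact ⟨i, by omega, hmv.symm⟩
    have hBblue : ∀ i ∈ (st L).B, eb i ∈ blue := by
      intro i hi
      obtain ⟨k, hk, hmv⟩ := stB_blue τ (2*(m+n+1)) i hi
      exact ⟨k, by omega, hmv.symm⟩
    have h0A := st_zero_A (M := 2*n) L
    have h0B := st_zero_B (M := 2*n) L
    rcases hph2a (by omega) with hA | hB
    · -- a = inl 0 is the small center (A.card = m), b = inr 0 the big one
      have hBcard : (st L).B.card = n := by omega
      apply copy_build (Sum.inl 0) (Sum.inr 0)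
        (fun i => Sum.inl ((st L).B.orderEmbOfFin hBcard i))
        (fun j => Sum.inr ((st L).A.orderEmbOfFin hA j)) blue
      · simp
      · intro i i' h
        exact ((st L).B.orderEmbOfFin hBcard).injective (Sum.inl.inj h)
      · intro j j' h
        exact ((st L).A.orderEmbOfFin hA).injective (Sum.inr.inj h)
      · intro i j; simp
      · intro i
        intro h
        have := Sum.inl.inj h
        exact h0B (this ▸ Finset.orderEmbOfFin_mem _ hBcard i)
      · intro i; simp
      · intro j; simp
      · intro j
        intro h
        have := Sum.inr.inj h
        exact h0A (this ▸ Finset.orderEmbOfFin_mem _ hA j)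
      · exact habblue
      · intro i
        rw [Sym2.eq_swap]
        exact hBblue _ (Finset.orderEmbOfFin_mem _ hBcard i)
      · intro j
        exact hAblue _ (Finset.orderEmbOfFin_mem _ hA j)
    · -- b = inr 0 is the small center (B.card = m), a = inl 0 the big one
      have hAcard : (st L).A.card = n := by omega
      apply copy_build (Sum.inr 0) (Sum.inl 0)
        (fun i => Sum.inr ((st L).A.orderEmbOfFin hAcard i))
        (fun j => Sum.inl ((st L).B.orderEmbOfFin hB j)) blue
      · simp
      · intro i i' h
        exact ((st L).A.orderEmbOfFin hAcard).injective (Sum.inr.inj h)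
      · intro j j' h
        exact ((st L).B.orderEmbOfFin hB).injective (Sum.inl.inj h)
      · intro i j; simp
      · intro i
        intro h
        have := Sum.inr.inj h
        exact h0A (this ▸ Finset.orderEmbOfFin_mem _ hAcard i)
      · intro i; simp
      · intro j; simp
      · intro j
        intro h
        have := Sum.inl.inj h
        exact h0B (this ▸ Finset.orderEmbOfFin_mem _ hB j)
      · rw [Sym2.eq_swap]
        exact habblue
      · intro i
        exact hAblue _ (Finset.orderEmbOfFin_mem _ hAcard i)
      · intro j
        rw [Sym2.eq_swap]
        exact hBblue _ (Finset.orderEmbOfFin_mem _ hB j)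
  · -- no red copy: too few red edges
    intro hred
    obtain ⟨hfin, hcard⟩ := red_ncard (alice (M := 2*n) m) τ (m+n)
    have := copy_ncard hm hfin hred
    omega

end Assemble

end DS

/-- For all integers `m, n` with `1 ≤ m < n`, the bipartite achievement number of the
double star satisfies `n + 1 ≤ ba(S_{m,n}) ≤ 2n`: Alice has no winning strategy in
`(S_{m,n}, K_{N,N}, +)` for `N ≤ n`, and Alice has a winning strategy in
`(S_{m,n}, K_{2n,2n}, +)`. -/
theorem stmt4 (m n : ℕ) (hm : 1 ≤ m) (hmn : m < n) :
    (∀ N : ℕ, AliceWins (doubleStar m n) (completeBipartiteGraph (Fin N) (Fin N)) →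
      n + 1 ≤ N) ∧
    AliceWins (doubleStar m n) (completeBipartiteGraph (Fin (2 * n)) (Fin (2 * n))) := by
  constructor
  · intro N hw
    exact DS.lower_bound hm hw
  · exact DS.upper_bound hm hmn
end

section
/- Let m, n be integers with 1 ≤ m < n ≤ 2m. If Alice has a winning strategy in the achievement game (S_{m,n}, K_{n_1,n_2}, +), then max{n_1, n_2} ≥ 2m + 1. -/
open AchievementGame


namespace Stmt6Aux


variable {α : Type*}

lemma hist_succ (σ τ : Strategy α) (i : ℕ) :
    hist σ τ (i + 1) = hist σ τ i ++ [move σ τ i] := rfl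

lemma hist_length (σ τ : Strategy α) (i : ℕ) : (hist σ τ i).length = i := by
  induction i with
  | zero => rfl
  | succ i ih => rw [hist_succ, List.length_append, ih]; rfl

lemma mem_hist {σ τ : Strategy α} {i : ℕ} {e : Sym2 α} :
    e ∈ hist σ τ i ↔ ∃ j < i, move σ τ j = e := by
  induction i with
  | zero => simp [hist]
  | succ i ih =>
    rw [hist_succ, List.mem_append, ih]
    simp only [List.mem_singleton, Nat.lt_succ_iff_lt_or_eq]
    constructor
    · rintro (⟨j, hj, rfl⟩ | rfl)
      · exact ⟨j, Or.inl hj, rfl⟩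
      · exact ⟨i, Or.inr rfl, rfl⟩
    · rintro ⟨j, hj | rfl, rfl⟩
      · exact Or.inl ⟨j, hj, rfl⟩
      · exact Or.inr rfl

lemma exists_unplayed [DecidableEq α] (G : SimpleGraph α) (l : List (Sym2 α))
    (h : l.length < G.edgeSet.ncard) : ∃ e ∈ G.edgeSet, e ∉ l := by
  by_contra hc
  push_neg at hc
  have hsub : G.edgeSet ⊆ ↑l.toFinset := fun e he => by simpa using hc e he
  have h1 := Set.ncard_le_ncard hsub (Set.toFinite _)
  rw [Set.ncard_coe_finset] at h1
  have h2 := l.toFinset_card_le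
  omega

lemma move_legal [DecidableEq α] {G : SimpleGraph α} {σ τ : Strategy α}
    (hσ : σ.Valid G) (hτ : τ.Valid G) {j : ℕ} (hj : j < G.edgeSet.ncard) :
    move σ τ j ∈ G.edgeSet ∧ move σ τ j ∉ hist σ τ j := by
  have h := exists_unplayed G (hist σ τ j) (by rw [hist_length]; exact hj)
  unfold move
  split
  · exact hσ _ h
  · exact hτ _ h

variable [DecidableEq α]

/-- blue edges among the first `t` moves -/
def BlF (σ τ : Strategy α) (t : ℕ) : Finset (Sym2 α) :=
  ((Finset.range t).filter (fun j => j % 2 = 0)).image (move σ τ)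

/-- red edges among the first `t` moves -/
def RdF (σ τ : Strategy α) (t : ℕ) : Finset (Sym2 α) :=
  ((Finset.range t).filter (fun j => j % 2 = 1)).image (move σ τ)

noncomputable def bdeg (σ τ : Strategy α) (t : ℕ) (v : α) : ℕ :=
  ((BlF σ τ t).filter (fun e => v ∈ e)).card

noncomputable def rdeg (σ τ : Strategy α) (t : ℕ) (v : α) : ℕ :=
  ((RdF σ τ t).filter (fun e => v ∈ e)).card

lemma mem_BlF {σ τ : Strategy α} {t : ℕ} {e : Sym2 α} :
    e ∈ BlF σ τ t ↔ ∃ j, j < t ∧ j % 2 = 0 ∧ move σ τ j = e := by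
  simp [BlF, Finset.mem_image, Finset.mem_filter, Finset.mem_range]
  tauto

lemma mem_RdF {σ τ : Strategy α} {t : ℕ} {e : Sym2 α} :
    e ∈ RdF σ τ t ↔ ∃ j, j < t ∧ j % 2 = 1 ∧ move σ τ j = e := by
  simp [RdF, Finset.mem_image, Finset.mem_filter, Finset.mem_range]
  tauto

lemma BlF_subset_hist {σ τ : Strategy α} {t : ℕ} {e : Sym2 α} (h : e ∈ BlF σ τ t) :
    e ∈ hist σ τ t := by
  rw [mem_BlF] at h
  obtain ⟨j, hj, -, rfl⟩ := h
  exact mem_hist.mpr ⟨j, hj, rfl⟩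

lemma RdF_subset_hist {σ τ : Strategy α} {t : ℕ} {e : Sym2 α} (h : e ∈ RdF σ τ t) :
    e ∈ hist σ τ t := by
  rw [mem_RdF] at h
  obtain ⟨j, hj, -, rfl⟩ := h
  exact mem_hist.mpr ⟨j, hj, rfl⟩

lemma BlF_succ (σ τ : Strategy α) (t : ℕ) :
    BlF σ τ (t + 1) = if t % 2 = 0 then insert (move σ τ t) (BlF σ τ t) else BlF σ τ t := by
  unfold BlF
  rw [Finset.range_add_one, Finset.filter_insert]
  split <;> simp [Finset.image_insert]

lemma RdF_succ (σ τ : Strategy α) (t : ℕ) :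
    RdF σ τ (t + 1) = if t % 2 = 1 then insert (move σ τ t) (RdF σ τ t) else RdF σ τ t := by
  unfold RdF
  rw [Finset.range_add_one, Finset.filter_insert]
  split <;> simp [Finset.image_insert]

lemma bdeg_succ_even {σ τ : Strategy α} {t : ℕ} (h : t % 2 = 0)
    (hnm : move σ τ t ∉ BlF σ τ t) (v : α) :
    bdeg σ τ (t + 1) v = bdeg σ τ t v + if v ∈ move σ τ t then 1 else 0 := by
  unfold bdeg
  rw [BlF_succ, if_pos h, Finset.filter_insert]
  split
  · rw [Finset.card_insert_of_notMem (fun hm => hnm (Finset.mem_of_mem_filter _ hm))]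
  · omega

lemma bdeg_succ_odd {σ τ : Strategy α} {t : ℕ} (h : t % 2 = 1) (v : α) :
    bdeg σ τ (t + 1) v = bdeg σ τ t v := by
  unfold bdeg
  rw [BlF_succ, if_neg (by omega)]

lemma rdeg_succ_odd {σ τ : Strategy α} {t : ℕ} (h : t % 2 = 1)
    (hnm : move σ τ t ∉ RdF σ τ t) (v : α) :
    rdeg σ τ (t + 1) v = rdeg σ τ t v + if v ∈ move σ τ t then 1 else 0 := by
  unfold rdeg
  rw [RdF_succ, if_pos h, Finset.filter_insert]
  split
  · rw [Finset.card_insert_of_notMem (fun hm => hnm (Finset.mem_of_mem_filter _ hm))]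
  · omega

lemma rdeg_succ_even {σ τ : Strategy α} {t : ℕ} (h : t % 2 = 0) (v : α) :
    rdeg σ τ (t + 1) v = rdeg σ τ t v := by
  unfold rdeg
  rw [RdF_succ, if_neg (by omega)]



variable {n₁ n₂ : ℕ}

lemma host_left {e : Sym2 (Fin n₁ ⊕ Fin n₂)}
    (he : e ∈ (completeBipartiteGraph (Fin n₁) (Fin n₂)).edgeSet)
    {c : Fin n₁} (hc : Sum.inl c ∈ e) : ∃ b : Fin n₂, e = s(Sum.inl c, Sum.inr b) := by
  induction e using Sym2.ind with
  | _ x y =>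
    rw [SimpleGraph.mem_edgeSet, completeBipartiteGraph_adj] at he
    rw [Sym2.mem_iff] at hc
    rcases hc with h | h
    · subst h
      rcases he with ⟨-, hy⟩ | ⟨hx, -⟩
      · obtain ⟨b, rfl⟩ := Sum.isRight_iff.mp hy
        exact ⟨b, rfl⟩
      · simp at hx
    · subst h
      rcases he with ⟨-, hy⟩ | ⟨hx, -⟩
      · simp at hy
      · obtain ⟨b, rfl⟩ := Sum.isRight_iff.mp hx
        exact ⟨b, Sym2.eq_swap⟩

lemma host_left_unique {e : Sym2 (Fin n₁ ⊕ Fin n₂)}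
    (he : e ∈ (completeBipartiteGraph (Fin n₁) (Fin n₂)).edgeSet)
    {a c : Fin n₁} (ha : Sum.inl a ∈ e) (hc : Sum.inl c ∈ e) : a = c := by
  obtain ⟨b, rfl⟩ := host_left he hc
  rw [Sym2.mem_iff] at ha
  rcases ha with h | h
  · exact Sum.inl.inj h
  · exact absurd h (by simp)

open scoped Classical in
/-- Bob's strategy : play an uncolored host edge sharing the left endpoint with the
last move, if possible; otherwise any uncolored host edge; otherwise `junk`. -/
noncomputable def bob (n₁ n₂ : ℕ) (junk : Sym2 (Fin n₁ ⊕ Fin n₂)) :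
    Strategy (Fin n₁ ⊕ Fin n₂) := fun l =>
  if h1 : ∃ e, e ∈ (completeBipartiteGraph (Fin n₁) (Fin n₂)).edgeSet ∧ e ∉ l ∧
      ∃ x ∈ l.getLast?, ∃ a : Fin n₁, Sum.inl a ∈ x ∧ Sum.inl a ∈ e then h1.choose
  else if h2 : ∃ e, e ∈ (completeBipartiteGraph (Fin n₁) (Fin n₂)).edgeSet ∧ e ∉ l then
    h2.choose
  else junk

lemma bob_valid (junk : Sym2 (Fin n₁ ⊕ Fin n₂)) :
    Strategy.Valid (completeBipartiteGraph (Fin n₁) (Fin n₂)) (bob n₁ n₂ junk) := by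
  intro l hl
  unfold bob
  split
  · next h1 => exact ⟨h1.choose_spec.1, h1.choose_spec.2.1⟩
  · exact ⟨hl.choose_spec.1, hl.choose_spec.2⟩

lemma bob_resp (junk : Sym2 (Fin n₁ ⊕ Fin n₂)) (l : List (Sym2 (Fin n₁ ⊕ Fin n₂)))
    {x : Sym2 (Fin n₁ ⊕ Fin n₂)} (hx : l.getLast? = some x)
    (hxE : x ∈ (completeBipartiteGraph (Fin n₁) (Fin n₂)).edgeSet)
    {u : Fin n₁} (hu : Sum.inl u ∈ x) :
    (Sum.inl u ∈ bob n₁ n₂ junk l ∧ bob n₁ n₂ junk l ∉ l) ∨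
    (∀ e ∈ (completeBipartiteGraph (Fin n₁) (Fin n₂)).edgeSet, Sum.inl u ∈ e → e ∈ l) := by
  by_cases h1 : ∃ e, e ∈ (completeBipartiteGraph (Fin n₁) (Fin n₂)).edgeSet ∧ e ∉ l ∧
      ∃ x ∈ l.getLast?, ∃ a : Fin n₁, Sum.inl a ∈ x ∧ Sum.inl a ∈ e
  · left
    have hb : bob n₁ n₂ junk l = h1.choose := by unfold bob; rw [dif_pos h1]
    obtain ⟨hE, hnl, x', hx', a, hax, hae⟩ := h1.choose_spec
    rw [hx, Option.mem_some_iff] at hx'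
    subst hx'
    have : a = u := host_left_unique hxE hax hu
    subst this
    rw [hb]
    exact ⟨hae, hnl⟩
  · right
    intro e heE heu
    by_contra hel
    exact h1 ⟨e, heE, hel, x, by rw [hx]; exact Option.mem_some_iff.mpr rfl, u, hu, heu⟩


end Stmt6Aux

/-- Let `m, n` be integers with `1 ≤ m < n ≤ 2m`. If Alice has a winning strategy in
the achievement game `(S_{m,n}, K_{n₁,n₂}, +)`, then `max {n₁, n₂} ≥ 2m + 1`. -/
theorem stmt6 (m n n₁ n₂ : ℕ) (hm : 1 ≤ m) (hmn : m < n) (hn : n ≤ 2 * m)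
    (hwin : AliceWins (doubleStar m n) (completeBipartiteGraph (Fin n₁) (Fin n₂))) :
    2 * m + 1 ≤ max n₁ n₂ := by
  open Stmt6Aux in
  by_contra hmax
  push_neg at hmax
  have hn1 : n₁ ≤ 2 * m := le_trans (le_max_left n₁ n₂) (by omega)
  have hn2 : n₂ ≤ 2 * m := le_trans (le_max_right n₁ n₂) (by omega)
  obtain ⟨σ, hσ, hwin⟩ := hwin
  set τ : Strategy (Fin n₁ ⊕ Fin n₂) := Stmt6Aux.bob n₁ n₂ (σ []) with hτdef
  have hτ : Strategy.Valid (completeBipartiteGraph (Fin n₁) (Fin n₂)) τ :=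
    Stmt6Aux.bob_valid (σ [])
  obtain ⟨k, hk, ⟨f, hf⟩, -⟩ := hwin τ hτ
  have legal : ∀ {j : ℕ}, j < (completeBipartiteGraph (Fin n₁) (Fin n₂)).edgeSet.ncard →
      move σ τ j ∈ (completeBipartiteGraph (Fin n₁) (Fin n₂)).edgeSet ∧
      move σ τ j ∉ hist σ τ j := fun hj => Stmt6Aux.move_legal hσ hτ hj
  -- all blue edges of the final position
  have hblue : ∀ a b, (doubleStar m n).Adj a b →
      s(f a, f b) ∈ Stmt6Aux.BlF σ τ (2 * k + 1) := by
    intro a b hab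
    obtain ⟨i, hik, he⟩ := hf a b hab
    exact Stmt6Aux.mem_BlF.mpr ⟨2 * i, by omega, Nat.mul_mod_right 2 i, he.symm⟩
  -- counting lower bound for blue degree
  have key : ∀ (c : Fin n₁) (S : Finset (Fin n₁ ⊕ Fin n₂)),
      (∀ y ∈ S, s(Sum.inl c, y) ∈ Stmt6Aux.BlF σ τ (2 * k + 1)) →
      S.card ≤ Stmt6Aux.bdeg σ τ (2 * k + 1) (Sum.inl c) := by
    intro c S hS
    have hinj : Function.Injective (fun y : Fin n₁ ⊕ Fin n₂ => s(Sum.inl c, y)) :=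
      fun y y' h => Sym2.congr_right.mp h
    have himg : S.image (fun y => s(Sum.inl c, y)) ⊆
        (Stmt6Aux.BlF σ τ (2 * k + 1)).filter (fun e => Sum.inl c ∈ e) := by
      intro e he
      rw [Finset.mem_image] at he
      obtain ⟨y, hy, rfl⟩ := he
      exact Finset.mem_filter.mpr ⟨hS y hy, by rw [Sym2.mem_iff]; left; rfl⟩
    calc S.card = (S.image (fun y => s(Sum.inl c, y))).card :=
          (Finset.card_image_of_injective S hinj).symm
      _ ≤ _ := Finset.card_le_card himg
  -- find a left-side center of blue degree ≥ m+1
  obtain ⟨c, hbd⟩ : ∃ c : Fin n₁, m + 1 ≤ Stmt6Aux.bdeg σ τ (2 * k + 1) (Sum.inl c) := by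
    have hadj1 : (doubleStar m n).Adj (Sum.inl 0) (Sum.inr 0) := by
      rw [doubleStar, SimpleGraph.fromRel_adj]
      exact ⟨by simp, Or.inl (Or.inr (Or.inr ⟨rfl, rfl⟩))⟩
    have hpqB := hblue _ _ hadj1
    have hpqE : s(f (Sum.inl 0), f (Sum.inr 0)) ∈
        (completeBipartiteGraph (Fin n₁) (Fin n₂)).edgeSet := by
      rw [Stmt6Aux.mem_BlF] at hpqB
      obtain ⟨j, hj, -, he⟩ := hpqB
      rw [← he]
      exact (legal (by omega)).1
    cases hp : f (Sum.inl 0) with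
    | inl c =>
      refine ⟨c, ?_⟩
      have hadjL : ∀ j : Fin (m + 1), j ≠ 0 → (doubleStar m n).Adj (Sum.inl 0) (Sum.inl j) := by
        intro j hj
        rw [doubleStar, SimpleGraph.fromRel_adj]
        exact ⟨fun h => hj (Sum.inl.inj h).symm, Or.inl (Or.inl ⟨rfl, j, rfl⟩)⟩
      set S : Finset (Fin n₁ ⊕ Fin n₂) := insert (f (Sum.inr 0))
        ((Finset.univ.filter (fun j : Fin (m + 1) => j ≠ 0)).image (fun j => f (Sum.inl j)))
        with hSdef
      have hnm : f (Sum.inr 0) ∉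
          (Finset.univ.filter (fun j : Fin (m + 1) => j ≠ 0)).image (fun j => f (Sum.inl j)) := by
        simp only [Finset.mem_image, Finset.mem_filter]
        rintro ⟨j, ⟨-, hj⟩, hface⟩
        exact absurd (f.injective hface) (by simp)
      have hScard : S.card = m + 1 := by
        rw [hSdef, Finset.card_insert_of_notMem hnm,
          Finset.card_image_of_injective _ (fun j j' h => Sum.inl.inj (f.injective h)),
          Finset.filter_ne', Finset.card_erase_of_mem (Finset.mem_univ _)]
        simp
      have hS : ∀ y ∈ S, s(Sum.inl c, y) ∈ Stmt6Aux.BlF σ τ (2 * k + 1) := by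
        intro y hy
        rw [hSdef, Finset.mem_insert] at hy
        rcases hy with rfl | hy
        · rw [← hp]; exact hpqB
        · rw [Finset.mem_image] at hy
          obtain ⟨j, hj, rfl⟩ := hy
          rw [Finset.mem_filter] at hj
          rw [← hp]
          exact hblue _ _ (hadjL j hj.2)
      calc m + 1 = S.card := hScard.symm
        _ ≤ _ := key c S hS
    | inr d =>
      -- then f (Sum.inr 0) is the left vertex
      obtain ⟨c, hq⟩ : ∃ c : Fin n₁, f (Sum.inr 0) = Sum.inl c := by
        rw [SimpleGraph.mem_edgeSet, completeBipartiteGraph_adj, hp] at hpqE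
        rcases hpqE with ⟨hl, -⟩ | ⟨-, hl⟩
        · simp at hl
        · exact Sum.isLeft_iff.mp hl
      refine ⟨c, ?_⟩
      have hadjR : ∀ j : Fin (n + 1), j ≠ 0 → (doubleStar m n).Adj (Sum.inr 0) (Sum.inr j) := by
        intro j hj
        rw [doubleStar, SimpleGraph.fromRel_adj]
        exact ⟨fun h => hj (Sum.inr.inj h).symm, Or.inl (Or.inr (Or.inl ⟨rfl, j, rfl⟩))⟩
      set S : Finset (Fin n₁ ⊕ Fin n₂) := insert (f (Sum.inl 0))
        ((Finset.univ.filter (fun j : Fin (n + 1) => j ≠ 0)).image (fun j => f (Sum.inr j)))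
        with hSdef
      have hnm : f (Sum.inl 0) ∉
          (Finset.univ.filter (fun j : Fin (n + 1) => j ≠ 0)).image (fun j => f (Sum.inr j)) := by
        simp only [Finset.mem_image, Finset.mem_filter]
        rintro ⟨j, ⟨-, hj⟩, hface⟩
        exact absurd (f.injective hface) (by simp)
      have hScard : S.card = n + 1 := by
        rw [hSdef, Finset.card_insert_of_notMem hnm,
          Finset.card_image_of_injective _ (fun j j' h => Sum.inr.inj (f.injective h)),
          Finset.filter_ne', Finset.card_erase_of_mem (Finset.mem_univ _)]
        simp
      have hS : ∀ y ∈ S, s(Sum.inl c, y) ∈ Stmt6Aux.BlF σ τ (2 * k + 1) := by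
        intro y hy
        rw [hSdef, Finset.mem_insert] at hy
        rcases hy with rfl | hy
        · rw [← hq, Sym2.eq_swap]; exact hpqB
        · rw [Finset.mem_image] at hy
          obtain ⟨j, hj, rfl⟩ := hy
          rw [Finset.mem_filter] at hj
          rw [← hq]
          exact hblue _ _ (hadjR j hj.2)
      calc m + 1 ≤ n + 1 := by omega
        _ = S.card := hScard.symm
        _ ≤ _ := key c S hS
  -- colored-degree bookkeeping
  have hmne : ∀ j' j : ℕ, j' < j →
      j < (completeBipartiteGraph (Fin n₁) (Fin n₂)).edgeSet.ncard →
      move σ τ j' ≠ move σ τ j := by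
    intro j' j hj hjn heq
    exact (legal hjn).2 (Stmt6Aux.mem_hist.mpr ⟨j', hj, heq⟩)
  have hdisj : ∀ t ≤ 2 * k + 1, Disjoint (Stmt6Aux.BlF σ τ t) (Stmt6Aux.RdF σ τ t) := by
    intro t ht
    rw [Finset.disjoint_left]
    intro e heB heR
    rw [Stmt6Aux.mem_BlF] at heB
    rw [Stmt6Aux.mem_RdF] at heR
    obtain ⟨j, hj, hj0, hje⟩ := heB
    obtain ⟨j', hj', hj'1, hj'e⟩ := heR
    rcases lt_trichotomy j j' with h | h | h
    · exact hmne j j' h (by omega) (by rw [hje, hj'e])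
    · omega
    · exact hmne j' j h (by omega) (by rw [hje, hj'e])
  have hcolored : ∀ t ≤ 2 * k + 1, ∀ c : Fin n₁,
      ((Stmt6Aux.BlF σ τ t ∪ Stmt6Aux.RdF σ τ t).filter (fun e => Sum.inl c ∈ e)) ⊆
      Finset.univ.image (fun b : Fin n₂ => s(Sum.inl c, Sum.inr b)) := by
    intro t ht c e he
    rw [Finset.mem_filter, Finset.mem_union] at he
    obtain ⟨heU, hce⟩ := he
    have heE : e ∈ (completeBipartiteGraph (Fin n₁) (Fin n₂)).edgeSet := by
      rcases heU with h | h
      · rw [Stmt6Aux.mem_BlF] at h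
        obtain ⟨j, hj, -, rfl⟩ := h
        exact (legal (by omega)).1
      · rw [Stmt6Aux.mem_RdF] at h
        obtain ⟨j, hj, -, rfl⟩ := h
        exact (legal (by omega)).1
    obtain ⟨b, rfl⟩ := Stmt6Aux.host_left heE hce
    exact Finset.mem_image.mpr ⟨b, Finset.mem_univ _, rfl⟩
  have hDc_card : ∀ c : Fin n₁,
      (Finset.univ.image (fun b : Fin n₂ => s(Sum.inl c, Sum.inr b))).card = n₂ := by
    intro c
    rw [Finset.card_image_of_injective _
      (fun b b' h => Sum.inr.inj (Sym2.congr_right.mp h)), Finset.card_univ, Fintype.card_fin]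
  have hsum : ∀ t ≤ 2 * k + 1, ∀ c : Fin n₁,
      Stmt6Aux.bdeg σ τ t (Sum.inl c) + Stmt6Aux.rdeg σ τ t (Sum.inl c) =
      ((Stmt6Aux.BlF σ τ t ∪ Stmt6Aux.RdF σ τ t).filter (fun e => Sum.inl c ∈ e)).card := by
    intro t ht c
    rw [Finset.filter_union,
      Finset.card_union_of_disjoint (Finset.disjoint_filter_filter (hdisj t ht))]
    rfl
  have hDB : ∀ t ≤ 2 * k + 1, ∀ c : Fin n₁,
      Stmt6Aux.bdeg σ τ t (Sum.inl c) + Stmt6Aux.rdeg σ τ t (Sum.inl c) ≤ n₂ := by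
    intro t ht c
    rw [hsum t ht c]
    calc ((Stmt6Aux.BlF σ τ t ∪ Stmt6Aux.RdF σ τ t).filter (fun e => Sum.inl c ∈ e)).card
        ≤ (Finset.univ.image (fun b : Fin n₂ => s(Sum.inl c, Sum.inr b))).card :=
          Finset.card_le_card (hcolored t ht c)
      _ = n₂ := hDc_card c
  -- the invariant maintained by Bob's strategy
  have INV : ∀ i, i ≤ k → ∀ c : Fin n₁,
      (Stmt6Aux.bdeg σ τ (2 * i) (Sum.inl c) ≤ Stmt6Aux.rdeg σ τ (2 * i) (Sum.inl c)) ∨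
      ((∀ e ∈ (completeBipartiteGraph (Fin n₁) (Fin n₂)).edgeSet, Sum.inl c ∈ e →
          e ∈ hist σ τ (2 * i)) ∧
        Stmt6Aux.bdeg σ τ (2 * i) (Sum.inl c) ≤ Stmt6Aux.rdeg σ τ (2 * i) (Sum.inl c) + 1) := by
    intro i
    induction i with
    | zero =>
      intro _ c
      left
      simp [Stmt6Aux.bdeg, Stmt6Aux.rdeg, Stmt6Aux.BlF, Stmt6Aux.RdF]
    | succ i ih =>
      intro hik c
      have hmoveA := legal (j := 2 * i) (by omega)
      have hmoveB := legal (j := 2 * i + 1) (by omega)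
      have h2i2 : 2 * (i + 1) = (2 * i + 1) + 1 := by ring
      have hb2 : Stmt6Aux.bdeg σ τ (2 * (i + 1)) (Sum.inl c)
          = Stmt6Aux.bdeg σ τ (2 * i) (Sum.inl c)
            + (if Sum.inl c ∈ move σ τ (2 * i) then 1 else 0) := by
        rw [h2i2, Stmt6Aux.bdeg_succ_odd (by omega),
          Stmt6Aux.bdeg_succ_even (by omega)
            (fun hm' => hmoveA.2 (Stmt6Aux.BlF_subset_hist hm'))]
      have hr2 : Stmt6Aux.rdeg σ τ (2 * (i + 1)) (Sum.inl c)
          = Stmt6Aux.rdeg σ τ (2 * i) (Sum.inl c)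
            + (if Sum.inl c ∈ move σ τ (2 * i + 1) then 1 else 0) := by
        rw [h2i2, Stmt6Aux.rdeg_succ_odd (by omega)
            (fun hm' => hmoveB.2 (Stmt6Aux.RdF_subset_hist hm')),
          Stmt6Aux.rdeg_succ_even (by omega)]
      by_cases hcA : Sum.inl c ∈ move σ τ (2 * i)
      · have hnfull : ¬(∀ e ∈ (completeBipartiteGraph (Fin n₁) (Fin n₂)).edgeSet,
            Sum.inl c ∈ e → e ∈ hist σ τ (2 * i)) :=
          fun hfull => hmoveA.2 (hfull _ hmoveA.1 hcA)
        have hle : Stmt6Aux.bdeg σ τ (2 * i) (Sum.inl c) ≤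
            Stmt6Aux.rdeg σ τ (2 * i) (Sum.inl c) :=
          (ih (by omega) c).resolve_right (fun h => hnfull h.1)
        have hlast : (hist σ τ (2 * i + 1)).getLast? = some (move σ τ (2 * i)) := by
          rw [Stmt6Aux.hist_succ]; exact List.getLast?_concat
        have hτmove : move σ τ (2 * i + 1) = Stmt6Aux.bob n₁ n₂ (σ []) (hist σ τ (2 * i + 1)) := by
          unfold move
          rw [if_neg (by omega), hτdef]
        rcases Stmt6Aux.bob_resp (σ []) (hist σ τ (2 * i + 1)) hlast hmoveA.1 hcA with
          ⟨hcB, -⟩ | hfull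
        · left
          rw [hb2, hr2, if_pos hcA, if_pos (by rw [hτmove]; exact hcB)]
          omega
        · right
          constructor
          · intro e heE hce
            have h' := hfull e heE hce
            rw [Stmt6Aux.mem_hist] at h' ⊢
            obtain ⟨j, hj, hje⟩ := h'
            exact ⟨j, by omega, hje⟩
          · rw [hb2, hr2, if_pos hcA]
            split_ifs <;> omega
      · rcases ih (by omega) c with hle | ⟨hfull, hle⟩
        · left
          rw [hb2, hr2, if_neg hcA]
          split_ifs <;> omega
        · right
          constructor
          · intro e heE hce
            have h' := hfull e heE hce
            rw [Stmt6Aux.mem_hist] at h' ⊢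
            obtain ⟨j, hj, hje⟩ := h'
            exact ⟨j, by omega, hje⟩
          · rw [hb2, hr2, if_neg hcA]
            split_ifs <;> omega
  -- final contradiction
  have hmoveK := legal (j := 2 * k) (by omega)
  have hstep : Stmt6Aux.bdeg σ τ (2 * k + 1) (Sum.inl c)
      = Stmt6Aux.bdeg σ τ (2 * k) (Sum.inl c)
        + (if Sum.inl c ∈ move σ τ (2 * k) then 1 else 0) :=
    Stmt6Aux.bdeg_succ_even (Nat.mul_mod_right 2 k)
      (fun hm' => hmoveK.2 (Stmt6Aux.BlF_subset_hist hm')) _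
  have invk := INV k le_rfl c
  by_cases hcm : Sum.inl c ∈ move σ τ (2 * k)
  · have hbd2k : m ≤ Stmt6Aux.bdeg σ τ (2 * k) (Sum.inl c) := by
      rw [hstep, if_pos hcm] at hbd
      omega
    rcases invk with hle | ⟨hfull, -⟩
    · -- all edges at c colored at time 2k, contradicting the legality of move 2k
      have hcardle : (Finset.univ.image (fun b : Fin n₂ => s(Sum.inl c, Sum.inr b))).card ≤
          ((Stmt6Aux.BlF σ τ (2 * k) ∪ Stmt6Aux.RdF σ τ (2 * k)).filter
            (fun e => Sum.inl c ∈ e)).card := by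
        rw [hDc_card c, ← hsum (2 * k) (by omega) c]
        omega
      have heq := Finset.eq_of_subset_of_card_le (hcolored (2 * k) (by omega) c) hcardle
      obtain ⟨b, hb⟩ := Stmt6Aux.host_left hmoveK.1 hcm
      have hmem : move σ τ (2 * k) ∈
          (Stmt6Aux.BlF σ τ (2 * k) ∪ Stmt6Aux.RdF σ τ (2 * k)).filter
            (fun e => Sum.inl c ∈ e) := by
        rw [heq]
        exact Finset.mem_image.mpr ⟨b, Finset.mem_univ _, hb.symm⟩
      rw [Finset.mem_filter, Finset.mem_union] at hmem
      rcases hmem.1 with h | h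
      · exact hmoveK.2 (Stmt6Aux.BlF_subset_hist h)
      · exact hmoveK.2 (Stmt6Aux.RdF_subset_hist h)
    · exact hmoveK.2 (hfull _ hmoveK.1 hcm)
  · have hbd2k : m + 1 ≤ Stmt6Aux.bdeg σ τ (2 * k) (Sum.inl c) := by
      rw [hstep, if_neg hcm] at hbd
      omega
    have hDBk := hDB (2 * k) (by omega) c
    rcases invk with hle | ⟨-, hle⟩ <;> omega
end

section
/- Let m, n be integers with 1 ≤ m < n ≤ 2m. Alice has no winning strategy in the achievement game (S_{m,n}, K_{n, 2m+1}, +), played on the complete bipartite graph with parts of sizes n and 2m+1. -/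
open AchievementGame

section Infra

variable {α : Type*} {σ τ : Strategy α} {G : SimpleGraph α}

lemma hist_succ (σ τ : Strategy α) (n : ℕ) :
    hist σ τ (n + 1) = hist σ τ n ++ [move σ τ n] := rfl

lemma hist_length (σ τ : Strategy α) (N : ℕ) : (hist σ τ N).length = N := by
  induction N with
  | zero => rfl
  | succ n ih => simp [hist_succ, ih]

lemma hist_prefix (σ τ : Strategy α) {a b : ℕ} (h : a ≤ b) :
    hist σ τ a <+: hist σ τ b := by
  induction b with
  | zero => interval_cases a; rfl
  | succ b ih =>
    rcases Nat.lt_or_ge a (b + 1) with h' | h'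
    · exact (ih (Nat.lt_succ_iff.mp h')).trans ⟨_, (hist_succ σ τ b).symm⟩
    · have : a = b + 1 := le_antisymm h h'
      subst this; exact List.prefix_refl _

lemma move_mem_hist {r t : ℕ} (h : r < t) : move σ τ r ∈ hist σ τ t := by
  have h1 : move σ τ r ∈ hist σ τ (r + 1) := by
    simp [hist_succ]
  exact (hist_prefix σ τ h).subset h1

lemma exists_uncolored (hfin : G.edgeSet.Finite) {t : ℕ} (ht : t < G.edgeSet.ncard) :
    ∃ e ∈ G.edgeSet, e ∉ hist σ τ t := by
  by_contra hc
  push_neg at hc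
  classical
  have hsub : G.edgeSet ⊆ ↑(hist σ τ t).toFinset := by
    intro e he; simpa using hc e he
  have := Set.ncard_le_ncard hsub (Set.toFinite _)
  rw [Set.ncard_coe_finset] at this
  have := le_trans this (List.toFinset_card_le _)
  rw [hist_length] at this
  omega

lemma move_valid (hfin : G.edgeSet.Finite) (hσ : Strategy.Valid G σ)
    (hτ : Strategy.Valid G τ) {t : ℕ} (ht : t < G.edgeSet.ncard) :
    move σ τ t ∈ G.edgeSet ∧ move σ τ t ∉ hist σ τ t := by
  have hex := exists_uncolored (σ := σ) (τ := τ) hfin ht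
  unfold move
  split
  · exact hσ _ hex
  · exact hτ _ hex

instance sym2Nonempty {α : Type*} [Nonempty α] : Nonempty (Sym2 α) :=
  ⟨s(Classical.arbitrary α, Classical.arbitrary α)⟩

open Classical in
/-- default move: any uncolored edge if one exists. -/
noncomputable def bobD {α : Type*} [Nonempty α] (G : SimpleGraph α) (l : List (Sym2 α)) :
    Sym2 α :=
  if h : ∃ e ∈ G.edgeSet, e ∉ l then h.choose else Classical.arbitrary _

lemma bobD_spec [Nonempty α] (G : SimpleGraph α) (l : List (Sym2 α))
    (hex : ∃ e ∈ G.edgeSet, e ∉ l) : bobD G l ∈ G.edgeSet ∧ bobD G l ∉ l := by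
  unfold bobD
  rw [dif_pos hex]
  exact ⟨hex.choose_spec.1, hex.choose_spec.2⟩

open Classical in
/-- Bob's pairing strategy: answer Alice's last move `e` by `e.map g` if possible. -/
noncomputable def bob {α : Type*} [Nonempty α] (G : SimpleGraph α) (g : α → α) :
    Strategy α := fun l =>
  match l.getLast? with
  | some e => if Sym2.map g e ∈ G.edgeSet ∧ Sym2.map g e ∉ l then Sym2.map g e else bobD G l
  | none => bobD G l

open Classical in
lemma bob_eval [Nonempty α] (G : SimpleGraph α) (g : α → α) (l : List (Sym2 α))
    (e : Sym2 α) (h : l.getLast? = some e) :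
    bob G g l = if Sym2.map g e ∈ G.edgeSet ∧ Sym2.map g e ∉ l then Sym2.map g e
      else bobD G l := by
  unfold bob
  rw [h]

lemma bob_valid [Nonempty α] (G : SimpleGraph α) (g : α → α) :
    Strategy.Valid G (bob G g) := by
  classical
  intro l hex
  cases hL : l.getLast? with
  | none =>
    have heq : bob G g l = bobD G l := by
      unfold bob
      rw [hL]
    rw [heq]
    exact bobD_spec G l hex
  | some e =>
    rw [bob_eval G g l e hL]
    split
    · next h => exact h
    · exact bobD_spec G l hex

lemma bob_response [Nonempty α] {σ : Strategy α} {G : SimpleGraph α} {g : α → α}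
    (hg : ∀ e ∈ G.edgeSet, Sym2.map g e ∈ G.edgeSet)
    (i : ℕ) (ha : move σ (bob G g) (2 * i) ∈ G.edgeSet) :
    Sym2.map g (move σ (bob G g) (2 * i)) ∈ hist σ (bob G g) (2 * i + 2) := by
  classical
  have hlast : (hist σ (bob G g) (2 * i + 1)).getLast? = some (move σ (bob G g) (2 * i)) :=
    List.getLast?_concat
  have hmv : move σ (bob G g) (2 * i + 1) = bob G g (hist σ (bob G g) (2 * i + 1)) := by
    unfold move
    rw [if_neg (by omega : ¬ (2 * i + 1) % 2 = 0)]
  rw [bob_eval _ _ _ _ hlast] at hmv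
  by_cases hcond : Sym2.map g (move σ (bob G g) (2 * i)) ∈ G.edgeSet ∧
      Sym2.map g (move σ (bob G g) (2 * i)) ∉ hist σ (bob G g) (2 * i + 1)
  · rw [if_pos hcond] at hmv
    rw [show (2 * i + 2) = (2 * i + 1) + 1 from rfl, hist_succ, ← hmv]
    simp
  · push_neg at hcond
    have hmem := hcond (hg _ ha)
    rw [show (2 * i + 2) = (2 * i + 1) + 1 from rfl, hist_succ]
    simp [hmem]

end Infra

section Host

variable (m n : ℕ)

/-- partner on `Fin (2m+1)`: `j ↔ j+m` for `j < m`; `2m` is fixed. -/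
def ptr (v : Fin (2 * m + 1)) : Fin (2 * m + 1) :=
  if h : v.val < m then ⟨v.val + m, by omega⟩
  else if h2 : v.val < 2 * m then ⟨v.val - m, by have := v.2; omega⟩ else v

lemma ptr_val (v : Fin (2 * m + 1)) :
    (ptr m v).val = if v.val < m then v.val + m else if v.val < 2 * m then v.val - m
      else v.val := by
  unfold ptr
  split_ifs <;> rfl

lemma ptr_invol (v : Fin (2 * m + 1)) : ptr m (ptr m v) = v := by
  have hv := v.2
  apply Fin.ext
  rcases Nat.lt_or_ge v.val m with h | h
  · have h1 : (ptr m v).val = v.val + m := by rw [ptr_val, if_pos h]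
    have h2 : (ptr m (ptr m v)).val = (ptr m v).val - m := by
      rw [ptr_val, if_neg (by omega), if_pos (by omega)]
    omega
  · rcases Nat.lt_or_ge v.val (2 * m) with h2 | h2
    · have h1 : (ptr m v).val = v.val - m := by rw [ptr_val, if_neg (by omega), if_pos h2]
      have h3 : (ptr m (ptr m v)).val = (ptr m v).val + m := by
        rw [ptr_val, if_pos (by omega)]
      omega
    · have h1 : (ptr m v).val = v.val := by rw [ptr_val, if_neg (by omega), if_neg (by omega)]
      have h3 : (ptr m (ptr m v)).val = (ptr m v).val := by
        rw [ptr_val, if_neg (by omega), if_neg (by omega)]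
      omega

lemma mod_fact (hm : 1 ≤ m) (x : ℕ) (hx : x < 2 * m) :
    x % m = if x < m then x else x - m := by
  split_ifs with h
  · exact Nat.mod_eq_of_lt h
  · rw [Nat.mod_eq_sub_mod (by omega), Nat.mod_eq_of_lt (by omega)]

lemma ptr_eq_of_class (hm : 1 ≤ m) {a b : Fin (2 * m + 1)} (hne : a ≠ b)
    (h : (if a.val = 2 * m then m else a.val % m) = (if b.val = 2 * m then m else b.val % m)) :
    ptr m a = b := by
  have ha := a.2
  have hb := b.2
  have hab : a.val ≠ b.val := fun hc => hne (Fin.ext hc)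
  apply Fin.ext
  rw [ptr_val]
  by_cases h2a : a.val = 2 * m
  · rw [if_pos h2a] at h
    by_cases h2b : b.val = 2 * m
    · omega
    · rw [if_neg h2b, mod_fact m hm _ (by omega)] at h
      split_ifs at h <;> omega
  · rw [if_neg h2a, mod_fact m hm _ (by omega)] at h
    by_cases h2b : b.val = 2 * m
    · rw [if_pos h2b] at h
      split_ifs at h <;> omega
    · rw [if_neg h2b, mod_fact m hm _ (by omega)] at h
      split_ifs at h ⊢ <;> omega

end Host


/-- Let `m, n` be integers with `1 ≤ m < n ≤ 2m`. Alice has no winning strategy in the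
achievement game `(S_{m,n}, K_{n,2m+1}, +)`. -/
theorem stmt7 (m n : ℕ) (hm : 1 ≤ m) (hmn : m < n) (hn : n ≤ 2 * m) :
    ¬ AliceWins (doubleStar m n) (completeBipartiteGraph (Fin n) (Fin (2 * m + 1))) := by
  classical
  set G := completeBipartiteGraph (Fin n) (Fin (2 * m + 1)) with hG
  rintro ⟨σ, hσ, hwin⟩
  -- the pairing map
  set g : Fin n ⊕ Fin (2 * m + 1) → Fin n ⊕ Fin (2 * m + 1) :=
    Sum.map id (ptr m) with hgdef
  have hNE : Nonempty (Fin n ⊕ Fin (2 * m + 1)) := ⟨Sum.inr ⟨0, by omega⟩⟩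
  have hginv : ∀ v, g (g v) = v := by
    rintro (x | v)
    · rfl
    · simp [hgdef, ptr_invol]
  have hgl : ∀ x : Fin n, g (Sum.inl x) = Sum.inl x := fun _ => rfl
  have hgr : ∀ v : Fin (2 * m + 1), g (Sum.inr v) = Sum.inr (ptr m v) := fun _ => rfl
  have hgE : ∀ e ∈ G.edgeSet, Sym2.map g e ∈ G.edgeSet := by
    rintro e he
    induction e with
    | _ a b =>
      rw [SimpleGraph.mem_edgeSet] at he
      rw [Sym2.map_pair_eq, SimpleGraph.mem_edgeSet]
      rcases a with x | v <;> rcases b with y | w <;>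
        simp_all [hgl, hgr, hG, completeBipartiteGraph]
  set τ := bob G g with hτdef
  have hτ : Strategy.Valid G τ := bob_valid G g
  obtain ⟨k, hk, ⟨f, hcopy⟩, -⟩ := hwin τ hτ
  have hfin : G.edgeSet.Finite := Set.toFinite _
  -- every blue edge is a legal move
  have hblue : ∀ i ≤ k, move σ τ (2 * i) ∈ G.edgeSet := fun i hi =>
    (move_valid hfin hσ hτ (by omega)).1
  -- key claim: no two blue edges are partners
  have hkey : ∀ i ≤ k, ∀ j ≤ k, Sym2.map g (move σ τ (2 * i)) ≠ move σ τ (2 * i) →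
      Sym2.map g (move σ τ (2 * i)) ≠ move σ τ (2 * j) := by
    have main : ∀ i ≤ k, ∀ j ≤ k, i < j →
        Sym2.map g (move σ τ (2 * i)) ≠ move σ τ (2 * j) := by
      intro i hi j hj hij heq
      have hresp : Sym2.map g (move σ τ (2 * i)) ∈ hist σ τ (2 * i + 2) := by
        have := bob_response (σ := σ) hgE i (by rw [← hτdef] at *; exact hblue i hi)
        rwa [← hτdef] at this
      have hmem : Sym2.map g (move σ τ (2 * i)) ∈ hist σ τ (2 * j) :=
        (hist_prefix σ τ (by omega)).subset hresp
      rw [heq] at hmem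
      exact (move_valid hfin hσ hτ (t := 2 * j) (by omega)).2 hmem
    intro i hi j hj hne heq
    rcases lt_trichotomy i j with h | h | h
    · exact main i hi j hj h heq
    · exact hne (h ▸ heq)
    · -- j < i : apply involution
      have hmm : ∀ e : Sym2 (Fin n ⊕ Fin (2 * m + 1)), Sym2.map g (Sym2.map g e) = e := by
        intro e
        induction e with
        | _ a b => simp [Sym2.map_pair_eq, hginv]
      have : Sym2.map g (move σ τ (2 * j)) = move σ τ (2 * i) := by
        rw [← heq, hmm]
      exact main j hj i hi h this
  -- Now analyze the copy of the double star
  set c := f (Sum.inr (0 : Fin (n + 1))) with hc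
  -- the n+1 neighbors of the big center
  have hn1 : (0 : Fin (n + 1)) ≠ ⟨1, by omega⟩ := by simp [Fin.ext_iff]
  set h : Fin (n + 1) → Fin n ⊕ Fin (2 * m + 1) := fun j =>
    if j = 0 then f (Sum.inl (0 : Fin (m + 1))) else f (Sum.inr j) with hhdef
  have hinj : Function.Injective h := by
    intro a b hab
    by_cases h0a : a = 0 <;> by_cases h0b : b = 0
    · exact h0a.trans h0b.symm
    · have : f (Sum.inl (0 : Fin (m + 1))) = f (Sum.inr b) := by
        simpa [hhdef, h0a, h0b] using hab
      exact absurd (f.injective this) (by simp)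
    · have : f (Sum.inr a) = f (Sum.inl (0 : Fin (m + 1))) := by
        simpa [hhdef, h0a, h0b] using hab
      exact absurd (f.injective this) (by simp)
    · have : f (Sum.inr a) = f (Sum.inr b) := by
        simpa [hhdef, h0a, h0b] using hab
      exact Sum.inr_injective (f.injective this)
  have hedge : ∀ j : Fin (n + 1), s(c, h j) ∈ {e | ∃ i ≤ k, e = move σ τ (2 * i)} := by
    intro j
    by_cases h0 : j = 0
    · subst h0
      have hadj : (doubleStar m n).Adj (Sum.inr 0) (Sum.inl 0) := by
        simp [doubleStar]
      simpa [hhdef] using hcopy _ _ hadj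
    · have hadj : (doubleStar m n).Adj (Sum.inr 0) (Sum.inr j) := by
        simp [doubleStar, Ne.symm h0]
      simpa [hhdef, h0] using hcopy _ _ hadj
  -- each such edge is a host edge
  have hhost : ∀ j : Fin (n + 1), s(c, h j) ∈ G.edgeSet := by
    intro j
    obtain ⟨i, hi, he⟩ := hedge j
    rw [he]; exact hblue i hi
  -- c must be in the left part
  obtain ⟨x, hx⟩ : ∃ x : Fin n, c = Sum.inl x := by
    rcases hcx : c with x | v
    · exact ⟨x, rfl⟩
    · exfalso
      have hL : ∀ j : Fin (n + 1), ∃ y : Fin n, h j = Sum.inl y := by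
        intro j
        have := hhost j
        rw [SimpleGraph.mem_edgeSet, hcx] at this
        rcases this with ⟨h1, h2⟩ | ⟨h1, h2⟩
        · simp at h1
        · rcases hhj : h j with y | w
          · exact ⟨y, rfl⟩
          · rw [hhj] at h2; simp at h2
      choose y hy using hL
      have hyinj : Function.Injective y := by
        intro a b hab
        apply hinj
        rw [hy, hy, hab]
      have := Fintype.card_le_of_injective y hyinj
      simp only [Fintype.card_fin] at this
      omega
  -- neighbors are in the right part
  have hR : ∀ j : Fin (n + 1), ∃ w : Fin (2 * m + 1), h j = Sum.inr w := by
    intro j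
    have := hhost j
    rw [SimpleGraph.mem_edgeSet, hx] at this
    rcases this with ⟨h1, h2⟩ | ⟨h1, h2⟩
    · rcases hhj : h j with y | w
      · rw [hhj] at h2; simp at h2
      · exact ⟨w, rfl⟩
    · simp at h1
  choose w hw using hR
  have hwinj : Function.Injective w := by
    intro a b hab
    apply hinj
    rw [hw, hw, hab]
  -- pigeonhole into m+1 classes
  set q : Fin (2 * m + 1) → Fin (m + 1) := fun v =>
    if v.val = 2 * m then ⟨m, by omega⟩ else ⟨v.val % m, by have := Nat.mod_lt v.val hm; omega⟩
    with hq
  obtain ⟨a, b, hab, hqab⟩ :=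
    Fintype.exists_ne_map_eq_of_card_lt (q ∘ w) (by simp; omega)
  have hwab : w a ≠ w b := fun hc => hab (hwinj hc)
  have hptr : ptr m (w a) = w b := by
    apply ptr_eq_of_class m hm hwab
    have hv := congrArg Fin.val hqab
    simpa [hq, apply_ite Fin.val] using hv
  -- the two partner edges are both blue: contradiction
  obtain ⟨i, hi, hei⟩ := hedge a
  obtain ⟨j, hj, hej⟩ := hedge b
  have hmap : Sym2.map g (move σ τ (2 * i)) = move σ τ (2 * j) := by
    rw [← hei, ← hej, hx, hw, hw]
    simp [hgdef, hptr]
  have hne : Sym2.map g (move σ τ (2 * i)) ≠ move σ τ (2 * i) := by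
    rw [← hei, hx, hw]
    simp only [hgdef, Sym2.map_pair_eq, Sum.map_inl, Sum.map_inr, id_eq]
    rw [hptr]
    intro hcon
    rw [Sym2.eq_iff] at hcon
    rcases hcon with ⟨-, h2⟩ | ⟨h1, -⟩
    · exact hwab (Sum.inr_injective h2).symm
    · simp at h1
  exact hkey i hi j hj hne hmap
end
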